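/- arXiv:2007.03937 — 9 statements merged into one kernel-verified Lean document; each statement's English description precedes it below -/
import Mathlib

section
/- If 𝔼[|η(X^x_m) − η(x)|] → 0 as m → ∞, then x is a Lebesgue point for η with respect to ℙ_X. -/
open MeasureTheory Filter Topology

lemma nn_integral_prod_comp
    {𝒳 Ω : Type*} [MeasurableSpace 𝒳]
    {mΩ : MeasurableSpace Ω} (P : Measure Ω) [IsProbabilityMeasure P]
    (X : ℕ → Ω → 𝒳) (μ : Measure 𝒳)
    (hXmeas : ∀ i, Measurable (X i))
    (hXindep : ProbabilityTheory.iIndepFun X P)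
    (hXdist : ∀ i, P.map (X i) = μ)
    (φ : ℕ → 𝒳 → ℝ) (hφ : ∀ j, Measurable (φ j))
    (s : Finset ℕ) :
    ∫ ω, ∏ j ∈ s, φ j (X j ω) ∂P = ∏ j ∈ s, ∫ y, φ j y ∂μ := by
  have hY : ProbabilityTheory.iIndepFun
      (fun j => φ j ∘ X j) P := hXindep.comp φ hφ
  have hYmeas : ∀ j, Measurable (φ j ∘ X j) := fun j => (hφ j).comp (hXmeas j)
  have hone : ∀ j, ∫ ω, φ j (X j ω) ∂P = ∫ y, φ j y ∂μ := by
    intro j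
    rw [← hXdist j, integral_map (hXmeas j).aemeasurable (hφ j).aestronglyMeasurable]
  induction s using Finset.induction with
  | empty => simp
  | @insert a t ha ih =>
    have hind : ProbabilityTheory.IndepFun (φ a ∘ X a) (∏ j ∈ t, (φ j ∘ X j)) P :=
      (hY.indepFun_finsetProd_of_notMem hYmeas ha).symm
    have hpm : Measurable (∏ j ∈ t, (φ j ∘ X j)) := by
      rw [show (∏ j ∈ t, (φ j ∘ X j)) = fun ω => ∏ j ∈ t, φ j (X j ω) by
        funext ω; simp [Finset.prod_apply]]
      exact Finset.measurable_prod t (fun j _ => hYmeas j)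
    have := hind.integral_mul_eq_mul_integral (hYmeas a).aestronglyMeasurable hpm.aestronglyMeasurable
    have heq : ∫ ω, ∏ j ∈ insert a t, φ j (X j ω) ∂P
        = ∫ ω, ((φ a ∘ X a) * ∏ j ∈ t, (φ j ∘ X j)) ω ∂P := by
      apply integral_congr_ae
      filter_upwards with ω
      simp [Finset.prod_insert ha, Finset.prod_apply]
    rw [heq, this, Finset.prod_insert ha, ← hone a, ← ih]
    congr 1
    apply integral_congr_ae
    filter_upwards with ω
    simp [Finset.prod_apply]

lemma nn_key_ineq
    {𝒳 Ω : Type*} [MetricSpace 𝒳] [MeasurableSpace 𝒳] [BorelSpace 𝒳]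
    {mΩ : MeasurableSpace Ω} (P : Measure Ω) [IsProbabilityMeasure P]
    (X : ℕ → Ω → 𝒳) (μ : Measure 𝒳)
    (hXmeas : ∀ i, Measurable (X i))
    (hXindep : ProbabilityTheory.iIndepFun X P)
    (hXdist : ∀ i, P.map (X i) = μ)
    (x : 𝒳)
    (η : 𝒳 → ℝ) (hηmeas : Measurable η) (C : ℝ) (hηbdd : ∀ y, |η y| ≤ C)
    (NN : ℕ → Ω → 𝒳)
    (hNNmeas : ∀ m, 1 ≤ m → Measurable (NN m))
    (hNN : ∀ m, 1 ≤ m → ∀ ω, (∃ i < m, NN m ω = X i ω) ∧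
      ∀ j < m, dist x (NN m ω) ≤ dist x (X j ω))
    (r : ℝ) (m : ℕ) (hm : 1 ≤ m) :
    (m : ℝ) * (1 - (μ (Metric.closedBall x r)).toReal) ^ (m - 1) *
      ∫ y in Metric.closedBall x r, |η y - η x| ∂μ
      ≤ ∫ ω, |η (NN m ω) - η x| ∂P := by
  have hμprob : IsProbabilityMeasure μ := by
    rw [← hXdist 0]; exact Measure.isProbabilityMeasure_map (hXmeas 0).aemeasurable
  set s : Set 𝒳 := Metric.closedBall x r with hs_def
  have hs : MeasurableSet s := Metric.isClosed_closedBall.measurableSet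
  set f : 𝒳 → ℝ := fun y => |η y - η x| with hf_def
  have hfmeas : Measurable f := (hηmeas.sub measurable_const).abs
  have hC0 : 0 ≤ C := le_trans (abs_nonneg _) (hηbdd x)
  have hfnn : ∀ y, 0 ≤ f y := fun y => abs_nonneg _
  have hfb : ∀ y, f y ≤ 2 * C := by
    intro y
    calc |η y - η x| ≤ |η y| + |η x| := abs_sub _ _
    _ ≤ C + C := add_le_add (hηbdd y) (hηbdd x)
    _ = 2 * C := by ring
  set g : 𝒳 → ℝ := s.indicator f with hg_def
  set h : 𝒳 → ℝ := sᶜ.indicator (fun _ => (1:ℝ)) with hh_def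
  have hgmeas : Measurable g := hfmeas.indicator hs
  have hhmeas : Measurable h := measurable_const.indicator hs.compl
  have hg0 : ∀ y, 0 ≤ g y := fun y => Set.indicator_nonneg (fun y _ => hfnn y) y
  have hgb : ∀ y, g y ≤ 2 * C := fun y =>
    Set.indicator_le' (fun y _ => hfb y) (fun _ _ => by linarith) y
  have hh0 : ∀ y, 0 ≤ h y := fun y => Set.indicator_nonneg (fun _ _ => zero_le_one) y
  have hhb : ∀ y, h y ≤ 1 := fun y =>
    Set.indicator_le' (fun _ _ => le_refl 1) (fun _ _ => zero_le_one) y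
  set p : ℝ := (μ s).toReal with hp_def
  set φ : ℕ → ℕ → 𝒳 → ℝ := fun i j => if j = i then g else h with hφ_def
  have hφmeas : ∀ i j, Measurable (φ i j) := by
    intro i j; by_cases hji : j = i <;> simp [hφ_def, hji, hgmeas, hhmeas]
  -- integral of h and g
  have hinth : ∫ y, h y ∂μ = 1 - p := by
    rw [hh_def, integral_indicator_const (1:ℝ) hs.compl, measureReal_def,
      measure_compl hs (measure_ne_top μ s), smul_eq_mul, mul_one, measure_univ,
      ENNReal.toReal_sub_of_le prob_le_one ENNReal.one_ne_top, ENNReal.toReal_one]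
  have hintg : ∫ y, g y ∂μ = ∫ y in s, f y ∂μ := integral_indicator hs
  -- product integrals
  have hQeq : ∀ i ∈ Finset.range m,
      ∫ ω, ∏ j ∈ Finset.range m, φ i j (X j ω) ∂P
        = (∫ y in s, f y ∂μ) * (1 - p) ^ (m - 1) := by
    intro i hi
    rw [nn_integral_prod_comp P X μ hXmeas hXindep hXdist (φ i) (hφmeas i),
      ← Finset.mul_prod_erase _ _ hi]
    have h1 : (∫ y, φ i i y ∂μ) = ∫ y in s, f y ∂μ := by
      simp only [hφ_def, if_pos rfl]; exact hintg
    have h2 : ∏ j ∈ (Finset.range m).erase i, (∫ y, φ i j y ∂μ) = (1 - p) ^ (m - 1) := by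
      rw [Finset.prod_congr rfl (fun j hj => ?_), Finset.prod_const,
        Finset.card_erase_of_mem hi, Finset.card_range]
      · simp only [hφ_def, if_neg (Finset.ne_of_mem_erase hj)]; exact hinth
    rw [h1, h2]
  -- pointwise inequality
  have hpt : ∀ ω, ∑ i ∈ Finset.range m, ∏ j ∈ Finset.range m, φ i j (X j ω)
      ≤ f (NN m ω) := by
    intro ω
    obtain ⟨⟨k, hk, hNNk⟩, hmin⟩ := hNN m hm ω
    by_cases hcase : ∃ i ∈ Finset.range m, X i ω ∈ s ∧
        ∀ j ∈ Finset.range m, j ≠ i → X j ω ∉ s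
    · obtain ⟨i, him, hXi, hother⟩ := hcase
      have hNNs : NN m ω ∈ s := by
        rw [hs_def, Metric.mem_closedBall, dist_comm]
        calc dist x (NN m ω) ≤ dist x (X i ω) := hmin i (Finset.mem_range.1 him)
        _ ≤ r := by rw [dist_comm]; exact hXi
      have hNNeq : NN m ω = X i ω := by
        rcases eq_or_ne k i with rfl | hki
        · exact hNNk
        · exact absurd (hNNk ▸ hNNs) (hother k (Finset.mem_range.2 hk) hki)
      rw [Finset.sum_eq_single i]
      · rw [← Finset.mul_prod_erase _ _ him]
        have h1 : φ i i (X i ω) = f (X i ω) := by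
          simp only [hφ_def, if_pos rfl, hg_def, Set.indicator_of_mem hXi]
        have h2 : ∏ j ∈ (Finset.range m).erase i, φ i j (X j ω) = 1 := by
          apply Finset.prod_eq_one
          intro j hj
          have hji : j ≠ i := Finset.ne_of_mem_erase hj
          simp only [hφ_def, if_neg hji, hh_def]
          exact Set.indicator_of_mem (Set.mem_compl (hother j (Finset.mem_of_mem_erase hj) hji)) _
        rw [h1, h2, mul_one, hNNeq]
      · intro b hb hbi
        apply Finset.prod_eq_zero hb
        simp only [hφ_def, if_pos rfl, hg_def]
        exact Set.indicator_of_notMem (hother b hb hbi) _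
      · intro hni; exact absurd him hni
    · push_neg at hcase
      have hz : ∀ i ∈ Finset.range m, ∏ j ∈ Finset.range m, φ i j (X j ω) = 0 := by
        intro i hi
        by_cases hXi : X i ω ∈ s
        · obtain ⟨j, hj, hji, hXj⟩ := hcase i hi hXi
          apply Finset.prod_eq_zero hj
          simp only [hφ_def, if_neg hji, hh_def]
          exact Set.indicator_of_notMem (Set.notMem_compl_iff.mpr hXj) _
        · apply Finset.prod_eq_zero hi
          simp only [hφ_def, if_pos rfl, hg_def]
          exact Set.indicator_of_notMem hXi _
      rw [Finset.sum_eq_zero hz]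
      exact hfnn _
  -- integrability
  set D : ℝ := 2 * C + 1 with hD_def
  have hφ0 : ∀ i j y, 0 ≤ φ i j y := by
    intro i j y; by_cases hji : j = i <;> simp [hφ_def, hji, hg0 y, hh0 y]
  have hφb : ∀ i j y, φ i j y ≤ D := by
    intro i j y
    by_cases hji : j = i <;> simp only [hφ_def, hji, if_pos, if_neg, if_true, if_false]
    · exact le_trans (hgb y) (by linarith)
    · exact le_trans (hhb y) (by linarith)
  have hQmeas : ∀ i, Measurable fun ω => ∏ j ∈ Finset.range m, φ i j (X j ω) :=
    fun i => Finset.measurable_prod _ fun j _ => (hφmeas i j).comp (hXmeas j)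
  have hQint : ∀ i, Integrable (fun ω => ∏ j ∈ Finset.range m, φ i j (X j ω)) P := by
    intro i
    apply Integrable.mono' (integrable_const (D ^ m)) (hQmeas i).aestronglyMeasurable
    filter_upwards with ω
    rw [Real.norm_eq_abs, abs_of_nonneg (Finset.prod_nonneg fun j _ => hφ0 i j _)]
    calc ∏ j ∈ Finset.range m, φ i j (X j ω) ≤ ∏ _j ∈ Finset.range m, D :=
      Finset.prod_le_prod (fun j _ => hφ0 i j _) (fun j _ => hφb i j _)
    _ = D ^ m := by rw [Finset.prod_const, Finset.card_range]
  have hfNNmeas : Measurable (fun ω => f (NN m ω)) := hfmeas.comp (hNNmeas m hm)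
  have hfNNint : Integrable (fun ω => f (NN m ω)) P := by
    apply Integrable.mono' (integrable_const (2 * C)) hfNNmeas.aestronglyMeasurable
    filter_upwards with ω
    rw [Real.norm_eq_abs, abs_of_nonneg (hfnn _)]
    exact hfb _
  -- conclude
  calc (m : ℝ) * (1 - p) ^ (m - 1) * ∫ y in s, f y ∂μ
      = ∑ i ∈ Finset.range m, (∫ y in s, f y ∂μ) * (1 - p) ^ (m - 1) := by
        rw [Finset.sum_const, Finset.card_range, nsmul_eq_mul]; ring
    _ = ∑ i ∈ Finset.range m, ∫ ω, ∏ j ∈ Finset.range m, φ i j (X j ω) ∂P :=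
        (Finset.sum_congr rfl hQeq).symm
    _ = ∫ ω, ∑ i ∈ Finset.range m, ∏ j ∈ Finset.range m, φ i j (X j ω) ∂P :=
        (integral_finset_sum _ (fun i _ => hQint i)).symm
    _ ≤ ∫ ω, f (NN m ω) ∂P :=
        integral_mono (integrable_finset_sum _ (fun i _ => hQint i)) hfNNint hpt

/-- **Theorem (NN ⟹ Lebesgue).**
Setting: `(𝒳, d)` a metric space, `(Ω, ℱ, P)` a probability space, `X 0, X 1, …`
i.i.d. `𝒳`-valued random variables with common distribution `μ` (the law of the generic
sample `X`), `x` a point of the support of `μ`, `η` a bounded measurable function, and,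
for every `m ≥ 1`, `NN m` a nearest neighbor of `x` among `X 0, …, X (m-1)`.
If `𝔼[|η(NN m) − η(x)|] → 0` as `m → ∞`, then `x` is a Lebesgue point for `η`
with respect to the common distribution `μ`. -/
theorem stmt_0
    {𝒳 Ω : Type*} [MetricSpace 𝒳] [MeasurableSpace 𝒳] [BorelSpace 𝒳]
    {mΩ : MeasurableSpace Ω} (P : Measure Ω) [IsProbabilityMeasure P]
    (X : ℕ → Ω → 𝒳) (μ : Measure 𝒳)
    (hXmeas : ∀ i, Measurable (X i))
    (hXindep : ProbabilityTheory.iIndepFun X P)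
    (hXdist : ∀ i, P.map (X i) = μ)
    (x : 𝒳) (hsupp : ∀ r > (0 : ℝ), 0 < μ (Metric.closedBall x r))
    (η : 𝒳 → ℝ) (hηmeas : Measurable η) (C : ℝ) (hηbdd : ∀ y, |η y| ≤ C)
    (NN : ℕ → Ω → 𝒳)
    (hNNmeas : ∀ m, 1 ≤ m → Measurable (NN m))
    (hNN : ∀ m, 1 ≤ m → ∀ ω, (∃ i < m, NN m ω = X i ω) ∧
      ∀ j < m, dist x (NN m ω) ≤ dist x (X j ω))
    (hconv : Tendsto (fun m : ℕ => ∫ ω, |η (NN m ω) - η x| ∂P) atTop (𝓝 0)) :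
    Tendsto
      (fun r : ℝ =>
        (∫ y in Metric.closedBall x r, |η y - η x| ∂μ) /
          (μ (Metric.closedBall x r)).toReal)
      (𝓝[>] 0) (𝓝 0) := by
  have hμprob : IsProbabilityMeasure μ := by
    rw [← hXdist 0]; exact Measure.isProbabilityMeasure_map (hXmeas 0).aemeasurable
  have hfmeas : Measurable fun y => |η y - η x| := (hηmeas.sub measurable_const).abs
  have hC0 : 0 ≤ C := le_trans (abs_nonneg _) (hηbdd x)
  have hfnn : ∀ y : 𝒳, (0:ℝ) ≤ |η y - η x| := fun y => abs_nonneg _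
  have hfb : ∀ y : 𝒳, |η y - η x| ≤ 2 * C := by
    intro y
    calc |η y - η x| ≤ |η y| + |η x| := abs_sub _ _
    _ ≤ C + C := add_le_add (hηbdd y) (hηbdd x)
    _ = 2 * C := by ring
  have hfint : Integrable (fun y => |η y - η x|) μ := by
    apply Integrable.mono' (integrable_const (2 * C)) hfmeas.aestronglyMeasurable
    filter_upwards with y
    rw [Real.norm_eq_abs, abs_of_nonneg (hfnn y)]
    exact hfb y
  have hNnn : ∀ r : ℝ, 0 ≤ ∫ y in Metric.closedBall x r, |η y - η x| ∂μ := fun r =>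
    setIntegral_nonneg Metric.isClosed_closedBall.measurableSet (fun y _ => hfnn y)
  have hppos : ∀ r : ℝ, 0 < r → 0 < (μ (Metric.closedBall x r)).toReal := fun r hr =>
    ENNReal.toReal_pos (hsupp r hr).ne' (measure_ne_top μ _)
  -- small balls
  have hsmall : ∀ δ : ℝ, 0 < δ → ∃ r₀ > (0:ℝ), ∀ r, 0 < r → r < r₀ →
      (μ (Metric.closedBall x r \ {x})).toReal < δ := by
    intro δ hδ
    set t : ℕ → Set 𝒳 := fun n => Metric.closedBall x (1/(n+1)) \ {x} with ht_def
    have htm : ∀ n, NullMeasurableSet (t n) μ := fun n =>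
      (Metric.isClosed_closedBall.measurableSet.diff (measurableSet_singleton x)).nullMeasurableSet
    have htanti : Antitone t := by
      intro a b hab
      apply Set.diff_subset_diff_left
      apply Metric.closedBall_subset_closedBall
      have ha1 : (0:ℝ) < (a:ℝ) + 1 := by positivity
      have hab1 : ((a:ℝ) + 1) ≤ (b:ℝ) + 1 := by exact_mod_cast Nat.succ_le_succ hab
      exact one_div_le_one_div_of_le ha1 hab1
    have htempty : ⋂ n, t n = ∅ := by
      ext y
      simp only [Set.mem_iInter, Set.mem_empty_iff_false, iff_false]
      intro hy
      apply (hy 0).2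
      have hdist : ∀ n : ℕ, dist y x ≤ 1/((n:ℝ)+1) := fun n => (hy n).1
      have hle : dist y x ≤ 0 :=
        ge_of_tendsto' tendsto_one_div_add_atTop_nhds_zero_nat hdist
      have : y = x := by
        rw [← dist_le_zero]; exact hle
      simp [this]
    have hT := tendsto_measure_iInter_atTop htm htanti ⟨0, measure_ne_top _ _⟩
    rw [htempty, measure_empty] at hT
    have hev : ∀ᶠ n in atTop, (μ ∘ t) n < ENNReal.ofReal δ :=
      hT.eventually_lt_const (by simp [hδ])
    obtain ⟨n, hn⟩ := hev.exists
    refine ⟨1/((n:ℝ)+1), by positivity, fun r hr hrlt => ?_⟩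
    have hsub : Metric.closedBall x r \ {x} ⊆ t n :=
      Set.diff_subset_diff_left (Metric.closedBall_subset_closedBall hrlt.le)
    exact ENNReal.toReal_lt_of_lt_ofReal (lt_of_le_of_lt (measure_mono hsub) hn)
  rw [Metric.tendsto_nhdsWithin_nhds]
  intro ε hε
  by_cases hatom : μ {x} = 0
  · -- no atom at x
    obtain ⟨M₀, hM₀⟩ := (Metric.tendsto_atTop.1 hconv) (ε/8) (by positivity)
    set M : ℕ := max M₀ 1 with hM_def
    have hM1 : 1 ≤ M := le_max_right _ _
    have hMR : (0:ℝ) < M := by exact_mod_cast lt_of_lt_of_le one_pos hM1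
    have hδpos : (0:ℝ) < min (1/2) (1/(2*(M:ℝ))) :=
      lt_min (by norm_num) (div_pos one_pos (by linarith))
    obtain ⟨r₀, hr₀pos, hsm⟩ := hsmall _ hδpos
    refine ⟨r₀, hr₀pos, ?_⟩
    intro r hrI hrd
    have hr : 0 < r := hrI
    have hrlt : r < r₀ := by
      rwa [Real.dist_eq, sub_zero, abs_of_pos hr] at hrd
    have hq : 0 < (μ (Metric.closedBall x r)).toReal := hppos r hr
    set q : ℝ := (μ (Metric.closedBall x r)).toReal with hq_def
    have hpδ : q < min (1/2) (1/(2*(M:ℝ))) := by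
      have := hsm r hr hrlt
      rwa [measure_diff_null hatom] at this
    have hq2 : q < 1/2 := lt_of_lt_of_le hpδ (min_le_left _ _)
    have hqM : q < 1/(2*(M:ℝ)) := lt_of_lt_of_le hpδ (min_le_right _ _)
    set m : ℕ := ⌈1/(2*q)⌉₊ with hm_def
    have hm_ge : (1:ℝ)/(2*q) ≤ m := Nat.le_ceil _
    have hMm : M ≤ m := by
      have h1 : (M:ℝ) ≤ 1/(2*q) := by
        rw [le_div_iff₀ (by positivity)]
        rw [lt_div_iff₀ (by positivity)] at hqM
        nlinarith
      calc M = ⌈((M:ℕ):ℝ)⌉₊ := (Nat.ceil_natCast M).symm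
      _ ≤ m := Nat.ceil_mono h1
    have hm1 : 1 ≤ m := le_trans hM1 hMm
    have hub : ((m:ℝ) - 1) * q ≤ 1/2 := by
      have h1 : (m:ℝ) < 1/(2*q) + 1 := Nat.ceil_lt_add_one (by positivity)
      have h2 : (m:ℝ) - 1 ≤ 1/(2*q) := by linarith
      calc ((m:ℝ)-1)*q ≤ (1/(2*q))*q := mul_le_mul_of_nonneg_right h2 hq.le
      _ = 1/2 := by field_simp
    have hber : (1:ℝ)/2 ≤ (1 - q)^(m-1) := by
      have hb := one_add_mul_le_pow (show (-2:ℝ) ≤ -q by linarith) (m-1)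
      have hcast : ((m-1 : ℕ):ℝ) = (m:ℝ) - 1 := by
        rw [Nat.cast_sub hm1, Nat.cast_one]
      rw [hcast] at hb
      have : (1:ℝ)/2 ≤ 1 + ((m:ℝ)-1) * (-q) := by nlinarith
      calc (1:ℝ)/2 ≤ 1 + ((m:ℝ)-1) * (-q) := this
      _ ≤ (1 + -q)^(m-1) := hb
      _ = (1 - q)^(m-1) := by ring_nf
    have hkey := nn_key_ineq P X μ hXmeas hXindep hXdist x η hηmeas C hηbdd NN
      hNNmeas hNN r m hm1
    rw [← hq_def] at hkey
    have hE : ∫ ω, |η (NN m ω) - η x| ∂P < ε/8 := by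
      have := hM₀ m (le_trans (le_max_left _ _) hMm)
      rwa [Real.dist_eq, sub_zero,
        abs_of_nonneg (integral_nonneg fun ω => abs_nonneg _)] at this
    have hlow : 1/(4*q) ≤ (m:ℝ) * (1-q)^(m-1) := by
      calc 1/(4*q) = (1/(2*q)) * (1/2) := by field_simp; ring
      _ ≤ (m:ℝ) * (1-q)^(m-1) :=
        mul_le_mul hm_ge hber (by norm_num) (Nat.cast_nonneg m)
    have hNb : (∫ y in Metric.closedBall x r, |η y - η x| ∂μ) < ε * q := by
      have h1 : (1/(4*q)) * ∫ y in Metric.closedBall x r, |η y - η x| ∂μ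
          ≤ (m:ℝ) * (1-q)^(m-1) * ∫ y in Metric.closedBall x r, |η y - η x| ∂μ :=
        mul_le_mul_of_nonneg_right hlow (hNnn r)
      have h2 : (1/(4*q)) * ∫ y in Metric.closedBall x r, |η y - η x| ∂μ < ε/8 :=
        lt_of_le_of_lt (h1.trans hkey) hE
      rw [one_div, inv_mul_eq_div, div_lt_iff₀ (by positivity : (0:ℝ) < 4*q)] at h2
      nlinarith
    rw [Real.dist_eq, sub_zero, abs_of_nonneg (div_nonneg (hNnn r) hq.le)]
    exact (div_lt_iff₀ hq).2 hNb
  · -- atom at x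
    have hc : 0 < (μ {x}).toReal := ENNReal.toReal_pos hatom (measure_ne_top _ _)
    set c : ℝ := (μ {x}).toReal with hc_def
    have hδpos : (0:ℝ) < ε * c / (2*C+1) := by positivity
    obtain ⟨r₀, hr₀pos, hsm⟩ := hsmall _ hδpos
    refine ⟨r₀, hr₀pos, ?_⟩
    intro r hrI hrd
    have hr : 0 < r := hrI
    have hrlt : r < r₀ := by
      rwa [Real.dist_eq, sub_zero, abs_of_pos hr] at hrd
    have hq : 0 < (μ (Metric.closedBall x r)).toReal := hppos r hr
    have hxmem : x ∈ Metric.closedBall x r := Metric.mem_closedBall_self hr.le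
    have hdm : MeasurableSet (Metric.closedBall x r \ {x}) :=
      Metric.isClosed_closedBall.measurableSet.diff (measurableSet_singleton x)
    have hsplit : (∫ y in Metric.closedBall x r, |η y - η x| ∂μ)
        = (∫ y in Metric.closedBall x r \ {x}, |η y - η x| ∂μ)
          + ∫ y in ({x} : Set 𝒳), |η y - η x| ∂μ := by
      rw [← setIntegral_union disjoint_sdiff_self_left (measurableSet_singleton x)
        hfint.integrableOn hfint.integrableOn,
        Set.diff_union_of_subset (Set.singleton_subset_iff.2 hxmem)]
    have hsing : (∫ y in ({x} : Set 𝒳), |η y - η x| ∂μ) = 0 := by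
      rw [Measure.restrict_singleton, integral_smul_measure, integral_dirac]
      simp
    have hdiffle : (∫ y in Metric.closedBall x r \ {x}, |η y - η x| ∂μ)
        ≤ (2*C+1) * (μ (Metric.closedBall x r \ {x})).toReal := by
      calc (∫ y in Metric.closedBall x r \ {x}, |η y - η x| ∂μ)
          ≤ ∫ _y in Metric.closedBall x r \ {x}, (2*C+1) ∂μ := by
            apply setIntegral_mono_on hfint.integrableOn
              (integrableOn_const (measure_lt_top _ _).ne) hdm
            intro y _
            linarith [hfb y]
        _ = (2*C+1) * (μ (Metric.closedBall x r \ {x})).toReal := by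
            rw [setIntegral_const, smul_eq_mul, measureReal_def]; ring
    have hNb : (∫ y in Metric.closedBall x r, |η y - η x| ∂μ)
        < ε * (μ (Metric.closedBall x r)).toReal := by
      have h1 := hsm r hr hrlt
      have hcle : c ≤ (μ (Metric.closedBall x r)).toReal := by
        rw [hc_def]
        exact ENNReal.toReal_le_toReal (measure_ne_top _ _) (measure_ne_top _ _)
          |>.2 (measure_mono (Set.singleton_subset_iff.2 hxmem))
      have h2 : (2*C+1) * (μ (Metric.closedBall x r \ {x})).toReal
          < (2*C+1) * (ε * c / (2*C+1)) :=
        mul_lt_mul_of_pos_left h1 (by linarith)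
      have h3 : (2*C+1) * (ε * c / (2*C+1)) = ε * c := by field_simp
      calc (∫ y in Metric.closedBall x r, |η y - η x| ∂μ)
          = (∫ y in Metric.closedBall x r \ {x}, |η y - η x| ∂μ) := by
            rw [hsplit, hsing, add_zero]
        _ ≤ (2*C+1) * (μ (Metric.closedBall x r \ {x})).toReal := hdiffle
        _ < ε * c := by rw [← h3]; exact h2
        _ ≤ ε * (μ (Metric.closedBall x r)).toReal :=
            mul_le_mul_of_nonneg_left hcle hε.le
    rw [Real.dist_eq, sub_zero, abs_of_nonneg (div_nonneg (hNnn r) hq.le)]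
    exact (div_lt_iff₀ hq).2 hNb
end

section
/- If either (i) ℙ(X = x) > 0, or (ii) there exists r > 0 such that 𝔼[𝟙_{B̄_r}(X)·|η(X) − η(x)|] = 0, then 𝔼[|η(X^x_m) − η(x)|] → 0 as m → ∞. -/
open MeasureTheory Filter Topology

/-- Key abstract lemma: if there are measurable sets `A` (of positive measure) and `N`
(null) such that whenever no sample hits `N` and some sample among the first `m`
hits `A`, the nearest neighbor has `η` value `η x`, then the expected error tends to 0. -/
theorem nn_key
    {𝒳 Ω : Type*} [MetricSpace 𝒳] [MeasurableSpace 𝒳] [BorelSpace 𝒳]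
    {mΩ : MeasurableSpace Ω} (P : Measure Ω) [IsProbabilityMeasure P]
    (X : ℕ → Ω → 𝒳) (μ : Measure 𝒳)
    (hXmeas : ∀ i, Measurable (X i))
    (hXindep : ProbabilityTheory.iIndepFun X P)
    (hXdist : ∀ i, P.map (X i) = μ)
    (x : 𝒳)
    (η : 𝒳 → ℝ) (hηmeas : Measurable η) (C : ℝ) (hηbdd : ∀ y, |η y| ≤ C)
    (NN : ℕ → Ω → 𝒳)
    (A N : Set 𝒳) (hA : MeasurableSet A) (hApos : 0 < μ A)
    (hN : MeasurableSet N) (hNnull : μ N = 0)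
    (hgood : ∀ m, 1 ≤ m → ∀ ω, (∀ i, X i ω ∉ N) → (∃ i < m, X i ω ∈ A) →
      η (NN m ω) = η x) :
    Tendsto (fun m : ℕ => ∫ ω, |η (NN m ω) - η x| ∂P) atTop (𝓝 0) := by
  have hμprob : IsProbabilityMeasure μ := by
    rw [← hXdist 0]; exact Measure.isProbabilityMeasure_map (hXmeas 0).aemeasurable
  set q : ℝ := (μ Aᶜ).toReal with hq
  have hqlt : q < 1 := by
    have h1 : μ Aᶜ < 1 := by
      rw [measure_compl hA (measure_ne_top μ A), measure_univ]
      exact ENNReal.sub_lt_self ENNReal.one_ne_top one_ne_zero hApos.ne'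
    have h2 : (μ Aᶜ).toReal < (1 : ENNReal).toReal :=
      (ENNReal.toReal_lt_toReal (measure_ne_top _ _) ENNReal.one_ne_top).2 h1
    simpa using h2
  have hq0 : 0 ≤ q := ENNReal.toReal_nonneg
  have hC0 : 0 ≤ C := le_trans (abs_nonneg _) (hηbdd x)
  -- the almost-sure event that no sample hits `N`
  have hNev : P (⋃ i, X i ⁻¹' N) = 0 := by
    refine measure_iUnion_null fun i => ?_
    have : P (X i ⁻¹' N) = (P.map (X i)) N := (Measure.map_apply (hXmeas i) hN).symm
    rw [this, hXdist i, hNnull]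
  -- main bound
  have hbound : ∀ m : ℕ, 1 ≤ m →
      (∫ ω, |η (NN m ω) - η x| ∂P) ≤ (2 * C) * q ^ m := by
    intro m hm
    set E : Set Ω := ⋂ i ∈ Finset.range m, X i ⁻¹' Aᶜ with hE
    have hEmeas : MeasurableSet E :=
      MeasurableSet.biInter (Finset.range m).countable_toSet
        fun i _ => (hXmeas i) hA.compl
    have hPE : P E = (μ Aᶜ) ^ m := by
      have := hXindep.meas_biInter (S := Finset.range m)
        (s := fun i => X i ⁻¹' Aᶜ) (fun i _ => ⟨Aᶜ, hA.compl, rfl⟩)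
      rw [hE, this]
      have hEach : ∀ i, P (X i ⁻¹' Aᶜ) = μ Aᶜ := fun i => by
        rw [← hXdist i, Measure.map_apply (hXmeas i) hA.compl]
      rw [Finset.prod_congr rfl (fun i _ => hEach i), Finset.prod_const,
        Finset.card_range]
    -- pointwise a.e. bound by an indicator
    have hae : ∀ᵐ ω ∂P, |η (NN m ω) - η x| ≤ E.indicator (fun _ => 2 * C) ω := by
      have hcompl : ∀ᵐ ω ∂P, ω ∉ ⋃ i, X i ⁻¹' N :=
        measure_eq_zero_iff_ae_notMem.1 hNev
      filter_upwards [hcompl] with ω hω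
      have hωN : ∀ i, X i ω ∉ N := by
        intro i hi
        exact hω (Set.mem_iUnion.2 ⟨i, hi⟩)
      by_cases hωE : ω ∈ E
      · rw [Set.indicator_of_mem hωE]
        calc |η (NN m ω) - η x| ≤ |η (NN m ω)| + |η x| := abs_sub _ _
          _ ≤ C + C := add_le_add (hηbdd _) (hηbdd _)
          _ = 2 * C := by ring
      · rw [Set.indicator_of_notMem hωE]
        have : ∃ i < m, X i ω ∈ A := by
          simp only [hE, Set.mem_iInter, Set.mem_preimage, Set.mem_compl_iff,
            not_forall] at hωE
          obtain ⟨i, hi, hXiA⟩ := hωE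
          exact ⟨i, Finset.mem_range.1 hi, not_not.1 hXiA⟩
        rw [hgood m hm ω hωN this, sub_self, abs_zero]
    have hint : (∫ ω, E.indicator (fun _ => 2 * C) ω ∂P) = (2 * C) * (P E).toReal := by
      rw [integral_indicator_const _ hEmeas]
      simp [mul_comm, Measure.real]
    calc (∫ ω, |η (NN m ω) - η x| ∂P)
        ≤ ∫ ω, E.indicator (fun _ => 2 * C) ω ∂P := by
          refine integral_mono_of_nonneg ?_ ?_ hae
          · exact Eventually.of_forall fun ω => abs_nonneg _
          · exact (integrable_const (2 * C)).indicator hEmeas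
      _ = (2 * C) * (P E).toReal := hint
      _ = (2 * C) * q ^ m := by
          rw [hPE, ENNReal.toReal_pow]
  have hupper : Tendsto (fun m : ℕ => (2 * C) * q ^ m) atTop (𝓝 0) := by
    have := tendsto_pow_atTop_nhds_zero_of_lt_one hq0 hqlt
    have h2 := this.const_mul (2 * C)
    simpa using h2
  refine squeeze_zero' ?_ ?_ hupper
  · exact Eventually.of_forall fun m => integral_nonneg fun ω => abs_nonneg _
  · filter_upwards [eventually_ge_atTop 1] with m hm
    exact hbound m hm

/-- **Lemma (trivial cases).**
In the nearest-neighbor setting, if either (i) `ℙ(X = x) > 0` (i.e. `μ {x} > 0` for the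
common distribution `μ`), or (ii) there is `r > 0` with
`𝔼[𝟙_{B̄_r}(X)·|η(X) − η(x)|] = 0`, then `𝔼[|η(NN m) − η(x)|] → 0` as `m → ∞`. -/
theorem stmt_1
    {𝒳 Ω : Type*} [MetricSpace 𝒳] [MeasurableSpace 𝒳] [BorelSpace 𝒳]
    {mΩ : MeasurableSpace Ω} (P : Measure Ω) [IsProbabilityMeasure P]
    (X : ℕ → Ω → 𝒳) (μ : Measure 𝒳)
    (hXmeas : ∀ i, Measurable (X i))
    (hXindep : ProbabilityTheory.iIndepFun X P)
    (hXdist : ∀ i, P.map (X i) = μ)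
    (x : 𝒳) (hsupp : ∀ r > (0 : ℝ), 0 < μ (Metric.closedBall x r))
    (η : 𝒳 → ℝ) (hηmeas : Measurable η) (C : ℝ) (hηbdd : ∀ y, |η y| ≤ C)
    (NN : ℕ → Ω → 𝒳)
    (hNNmeas : ∀ m, 1 ≤ m → Measurable (NN m))
    (hNN : ∀ m, 1 ≤ m → ∀ ω, (∃ i < m, NN m ω = X i ω) ∧
      ∀ j < m, dist x (NN m ω) ≤ dist x (X j ω))
    (htriv : 0 < μ {x} ∨
      ∃ r > (0 : ℝ), (∫ y in Metric.closedBall x r, |η y - η x| ∂μ) = 0) :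
    Tendsto (fun m : ℕ => ∫ ω, |η (NN m ω) - η x| ∂P) atTop (𝓝 0) := by
  have hμprob : IsProbabilityMeasure μ := by
    rw [← hXdist 0]; exact Measure.isProbabilityMeasure_map (hXmeas 0).aemeasurable
  rcases htriv with hx | ⟨r, hr, hint⟩
  · -- case (i): atom at x; take A = {x}, N = ∅
    refine nn_key P X μ hXmeas hXindep hXdist x η hηmeas C hηbdd NN
      {x} ∅ (measurableSet_singleton x) hx MeasurableSet.empty (measure_empty) ?_
    intro m hm ω _ ⟨i, him, hXi⟩
    have hXix : X i ω = x := hXi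
    have hd : dist x (NN m ω) ≤ 0 := by
      have := (hNN m hm ω).2 i him
      rwa [hXix, dist_self] at this
    have : NN m ω = x := by
      have h0 : dist x (NN m ω) = 0 := le_antisymm hd dist_nonneg
      exact (dist_eq_zero.1 (by rwa [dist_comm] at h0))
    rw [this]
  · -- case (ii)
    set N : Set 𝒳 := {y | η y ≠ η x} ∩ Metric.closedBall x r with hNdef
    set A : Set 𝒳 := Metric.closedBall x r ∩ {y | η y = η x} with hAdef
    have hsetmeas : MeasurableSet {y | η y = η x} :=
      hηmeas (measurableSet_singleton (η x))
    have hNmeas : MeasurableSet N :=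
      (hsetmeas.compl.inter measurableSet_closedBall)
    have hAmeas : MeasurableSet A :=
      measurableSet_closedBall.inter hsetmeas
    -- N is null, from the vanishing integral
    have hf_int : Integrable (fun y => |η y - η x|) (μ.restrict (Metric.closedBall x r)) := by
      refine (integrable_const (2 * C)).mono'
        ((hηmeas.sub measurable_const).abs.aestronglyMeasurable) ?_
      refine Eventually.of_forall fun y => ?_
      rw [Real.norm_eq_abs, abs_abs]
      calc |η y - η x| ≤ |η y| + |η x| := abs_sub _ _
        _ ≤ C + C := add_le_add (hηbdd _) (hηbdd _)
        _ = 2 * C := by ring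
    have hae0 : (fun y => |η y - η x|) =ᵐ[μ.restrict (Metric.closedBall x r)] 0 :=
      (integral_eq_zero_iff_of_nonneg (fun y => abs_nonneg _) hf_int).1 hint
    have hNnull : μ N = 0 := by
      have hne : MeasurableSet {y : 𝒳 | η y ≠ η x} := hsetmeas.compl
      have h1 : (μ.restrict (Metric.closedBall x r)) {y | η y ≠ η x} = 0 := by
        have := ae_iff.1 hae0
        simpa [sub_eq_zero] using this
      rwa [Measure.restrict_apply hne] at h1
    -- A has positive measure
    have hApos : 0 < μ A := by
      have hsub : Metric.closedBall x r ⊆ A ∪ N := by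
        intro y hy
        by_cases hηy : η y = η x
        · exact Or.inl ⟨hy, hηy⟩
        · exact Or.inr ⟨hηy, hy⟩
      have : μ (Metric.closedBall x r) ≤ μ A + μ N :=
        le_trans (measure_mono hsub) (measure_union_le _ _)
      rw [hNnull, add_zero] at this
      exact lt_of_lt_of_le (hsupp r hr) this
    refine nn_key P X μ hXmeas hXindep hXdist x η hηmeas C hηbdd NN
      A N hAmeas hApos hNmeas hNnull ?_
    intro m hm ω hωN ⟨i, him, hXiA⟩
    obtain ⟨⟨j, hjm, hNNj⟩, hmin⟩ := hNN m hm ω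
    have hdist : dist x (NN m ω) ≤ r := by
      have h1 := hmin i him
      have h2 : dist x (X i ω) ≤ r := by
        have := hXiA.1
        rwa [Metric.mem_closedBall, dist_comm] at this
      exact le_trans h1 h2
    have hball : X j ω ∈ Metric.closedBall x r := by
      rw [Metric.mem_closedBall, dist_comm, ← hNNj]
      exact hdist
    have : X j ω ∉ N := hωN j
    rw [hNdef] at this
    have hηeq : η (X j ω) = η x := by
      by_contra hne
      exact this ⟨hne, hball⟩
    rw [hNNj, hηeq]
end

section
/- For every r > 0 and every m ∈ ℕ the following three inequalities hold: (1) 𝔼[𝟙_{B_r}(X^x_m)·|η(X^x_m) − η(x)|] ≤ m · 𝔼[𝟙_{B_r}(X)·|η(X) − η(x)|]; (2) 𝔼[𝟙_{S_r}(X^x_m)·|η(X^x_m) − η(x)|] ≤ 2‖η‖_∞ · m · ℙ_X(S_r) · exp(−(m−1)·ℙ_X(B_r)); (3) 𝔼[𝟙_{B̄_r^c}(X^x_m)·|η(X^x_m) − η(x)|] ≤ 2‖η‖_∞ · exp(−m·ℙ_X(B̄_r)). -/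
open MeasureTheory Filter Topology

/-- **Lemma (geometric estimates).**
In the nearest-neighbor setting, for every `r > 0` and every `m ≥ 1`:
(1) `𝔼[𝟙_{B_r}(NN m)·|η(NN m) − η(x)|] ≤ m · 𝔼[𝟙_{B_r}(X)·|η(X) − η(x)|]`;
(2) `𝔼[𝟙_{S_r}(NN m)·|η(NN m) − η(x)|]
      ≤ 2‖η‖_∞ · m · μ(S_r) · exp(−(m−1)·μ(B_r))`;
(3) `𝔼[𝟙_{B̄_rᶜ}(NN m)·|η(NN m) − η(x)|] ≤ 2‖η‖_∞ · exp(−m·μ(B̄_r))`,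
where `μ` is the common distribution of the samples and `‖η‖_∞ = ⨆ y, |η y|`. -/
theorem stmt_2
    {𝒳 Ω : Type*} [MetricSpace 𝒳] [MeasurableSpace 𝒳] [BorelSpace 𝒳]
    {mΩ : MeasurableSpace Ω} (P : Measure Ω) [IsProbabilityMeasure P]
    (X : ℕ → Ω → 𝒳) (μ : Measure 𝒳)
    (hXmeas : ∀ i, Measurable (X i))
    (hXindep : ProbabilityTheory.iIndepFun (m := fun _ => (inferInstance : MeasurableSpace 𝒳)) X P)
    (hXdist : ∀ i, P.map (X i) = μ)
    (x : 𝒳) (hsupp : ∀ r > (0 : ℝ), 0 < μ (Metric.closedBall x r))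
    (η : 𝒳 → ℝ) (hηmeas : Measurable η) (C : ℝ) (hηbdd : ∀ y, |η y| ≤ C)
    (NN : ℕ → Ω → 𝒳)
    (hNNmeas : ∀ m, 1 ≤ m → Measurable (NN m))
    (hNN : ∀ m, 1 ≤ m → ∀ ω, (∃ i < m, NN m ω = X i ω) ∧
      ∀ j < m, dist x (NN m ω) ≤ dist x (X j ω))
    (r : ℝ) (hr : 0 < r) (m : ℕ) (hm : 1 ≤ m) :
    ((∫ ω, Set.indicator (Metric.ball x r) (fun y => |η y - η x|) (NN m ω) ∂P)
        ≤ m * ∫ y in Metric.ball x r, |η y - η x| ∂μ) ∧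
    ((∫ ω, Set.indicator (Metric.sphere x r) (fun y => |η y - η x|) (NN m ω) ∂P)
        ≤ 2 * (⨆ y, |η y|) * m * (μ (Metric.sphere x r)).toReal *
          Real.exp (-((m : ℝ) - 1) * (μ (Metric.ball x r)).toReal)) ∧
    ((∫ ω, Set.indicator (Metric.closedBall x r)ᶜ (fun y => |η y - η x|) (NN m ω) ∂P)
        ≤ 2 * (⨆ y, |η y|) *
          Real.exp (-(m : ℝ) * (μ (Metric.closedBall x r)).toReal)) := by
  classical
  have hμprob : IsProbabilityMeasure μ := by
    rw [← hXdist 0]; exact Measure.isProbabilityMeasure_map (hXmeas 0).aemeasurable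
  set g : 𝒳 → ℝ := fun y => |η y - η x| with hgdef
  have hgmeas : Measurable g := (hηmeas.sub measurable_const).abs
  have hgnonneg : ∀ y, 0 ≤ g y := fun y => abs_nonneg _
  set C' : ℝ := ⨆ y, |η y| with hC'def
  have hbdd : BddAbove (Set.range fun y => |η y|) := ⟨C, by rintro - ⟨y, rfl⟩; exact hηbdd y⟩
  have hC'le : ∀ y, |η y| ≤ C' := fun y => le_ciSup hbdd y
  have hC'0 : 0 ≤ C' := (abs_nonneg _).trans (hC'le x)
  have hgle : ∀ y, g y ≤ 2 * C' := fun y => by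
    calc g y ≤ |η y| + |η x| := abs_sub _ _
    _ ≤ C' + C' := add_le_add (hC'le y) (hC'le x)
    _ = 2 * C' := by ring
  -- integrability of indicator compositions
  have hint : ∀ S : Set 𝒳, MeasurableSet S →
      Integrable (fun ω => S.indicator g (NN m ω)) P := by
    intro S hS
    refine (integrable_const (2 * C')).mono'
      ((hgmeas.indicator hS).comp (hNNmeas m hm)).aestronglyMeasurable ?_
    refine ae_of_all _ fun ω => ?_
    rw [Real.norm_eq_abs, abs_of_nonneg (Set.indicator_nonneg (fun y _ => hgnonneg y) _)]
    by_cases h : NN m ω ∈ S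
    · rw [Set.indicator_of_mem h]; exact hgle _
    · rw [Set.indicator_of_notMem h]; positivity
  have hintX : ∀ (i : ℕ) (S : Set 𝒳), MeasurableSet S →
      Integrable (fun ω => S.indicator g (X i ω)) P := by
    intro i S hS
    refine (integrable_const (2 * C')).mono'
      ((hgmeas.indicator hS).comp (hXmeas i)).aestronglyMeasurable ?_
    refine ae_of_all _ fun ω => ?_
    rw [Real.norm_eq_abs, abs_of_nonneg (Set.indicator_nonneg (fun y _ => hgnonneg y) _)]
    by_cases h : X i ω ∈ S
    · rw [Set.indicator_of_mem h]; exact hgle _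
    · rw [Set.indicator_of_notMem h]; positivity
  -- generic bound: integral of indicator ∘ NN bounded by 2C' * P(E)
  have hkey : ∀ (S : Set 𝒳), MeasurableSet S → ∀ (E : Set Ω), MeasurableSet E →
      (∀ ω, NN m ω ∈ S → ω ∈ E) →
      (∫ ω, S.indicator g (NN m ω) ∂P) ≤ 2 * C' * (P E).toReal := by
    intro S hS E hE hSE
    have hb : ∀ ω, S.indicator g (NN m ω) ≤ E.indicator (fun _ => 2 * C') ω := by
      intro ω
      by_cases h : NN m ω ∈ S
      · rw [Set.indicator_of_mem h, Set.indicator_of_mem (hSE ω h)]; exact hgle _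
      · rw [Set.indicator_of_notMem h]
        exact Set.indicator_nonneg (fun _ _ => by positivity) _
    calc (∫ ω, S.indicator g (NN m ω) ∂P)
        ≤ ∫ ω, E.indicator (fun _ => 2 * C') ω ∂P :=
          integral_mono (hint S hS) ((integrable_const (2 * C')).indicator hE) hb
      _ = (P E).toReal • (2 * C') := integral_indicator_const _ hE
      _ = 2 * C' * (P E).toReal := by rw [smul_eq_mul]; ring
  have hmap : ∀ (i : ℕ) (S : Set 𝒳), MeasurableSet S → P ((X i) ⁻¹' S) = μ S := by
    intro i S hS
    rw [← hXdist i, Measure.map_apply (hXmeas i) hS]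
  -- real bound on measures: μ is a probability measure
  refine ⟨?_, ?_, ?_⟩
  · -- part (1)
    have key : ∀ ω, (Metric.ball x r).indicator g (NN m ω) ≤
        ∑ i ∈ Finset.range m, (Metric.ball x r).indicator g (X i ω) := by
      intro ω
      obtain ⟨⟨i, hi, hieq⟩, -⟩ := hNN m hm ω
      rw [hieq]
      exact Finset.single_le_sum
        (f := fun j => (Metric.ball x r).indicator g (X j ω))
        (fun j _ => Set.indicator_nonneg (fun y _ => hgnonneg y) _)
        (Finset.mem_range.mpr hi)
    calc (∫ ω, (Metric.ball x r).indicator g (NN m ω) ∂P)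
        ≤ ∫ ω, ∑ i ∈ Finset.range m, (Metric.ball x r).indicator g (X i ω) ∂P :=
          integral_mono (hint _ measurableSet_ball)
            (integrable_finset_sum _ fun i _ => hintX i _ measurableSet_ball) key
      _ = ∑ i ∈ Finset.range m, ∫ ω, (Metric.ball x r).indicator g (X i ω) ∂P :=
          integral_finset_sum _ fun i _ => hintX i _ measurableSet_ball
      _ = ∑ i ∈ Finset.range m, ∫ y, (Metric.ball x r).indicator g y ∂μ := by
          refine Finset.sum_congr rfl fun i _ => ?_
          rw [← hXdist i, integral_map (hXmeas i).aemeasurable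
            (hgmeas.indicator measurableSet_ball).aestronglyMeasurable]
      _ = m * ∫ y in Metric.ball x r, g y ∂μ := by
          rw [integral_indicator measurableSet_ball, Finset.sum_const, Finset.card_range,
            nsmul_eq_mul]
  · -- part (2)
    set S := Metric.sphere x r
    set B := Metric.ball x r
    set E : Set Ω := ⋃ i ∈ Finset.range m, ⋂ j ∈ Finset.range m,
      (X j) ⁻¹' (if j = i then S else Bᶜ) with hEdef
    have hEmeas : MeasurableSet E := by
      refine Finset.measurableSet_biUnion _ fun i _ =>
        Finset.measurableSet_biInter _ fun j _ => hXmeas j ?_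
      split
      · exact Metric.isClosed_sphere.measurableSet
      · exact measurableSet_ball.compl
    have hsub : ∀ ω, NN m ω ∈ S → ω ∈ E := by
      intro ω hω
      obtain ⟨⟨i, hi, hieq⟩, hd⟩ := hNN m hm ω
      refine Set.mem_biUnion (Finset.mem_range.mpr hi) ?_
      refine Set.mem_biInter fun j hj => ?_
      simp only [Set.mem_preimage]
      by_cases h : j = i
      · simp only [h, if_pos rfl]; rw [← hieq]; exact hω
      · rw [if_neg h]
        intro hBj
        have h1 : dist x (NN m ω) = r := by
          rw [dist_comm]; exact hω
        have h2 : dist x (X j ω) < r := by rw [dist_comm]; exact hBj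
        exact absurd (hd j (Finset.mem_range.mp hj)) (by rw [h1]; exact not_le.mpr h2)
    have hprod : ∀ i ∈ Finset.range m,
        P (⋂ j ∈ Finset.range m, (X j) ⁻¹' (if j = i then S else Bᶜ)) =
          μ S * μ Bᶜ ^ (m - 1) := by
      intro i hi
      rw [hXindep.meas_biInter (fun j _ => ?_)]
      · rw [← Finset.mul_prod_erase _ _ hi, hmap i _ (by simp [S, Metric.isClosed_sphere.measurableSet])]
        simp only [if_pos rfl]
        congr 1
        rw [Finset.prod_congr rfl (fun j hj => ?_), Finset.prod_const,
          Finset.card_erase_of_mem hi, Finset.card_range]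
        rw [if_neg (Finset.ne_of_mem_erase hj), hmap j _ measurableSet_ball.compl]
      · exact ⟨if j = i then S else Bᶜ, by split <;>
          [exact Metric.isClosed_sphere.measurableSet; exact measurableSet_ball.compl], rfl⟩
    have hPE : P E ≤ m * (μ S * μ Bᶜ ^ (m - 1)) := by
      calc P E ≤ ∑ i ∈ Finset.range m,
          P (⋂ j ∈ Finset.range m, (X j) ⁻¹' (if j = i then S else Bᶜ)) :=
            measure_biUnion_finset_le _ _
        _ = m * (μ S * μ Bᶜ ^ (m - 1)) := by
            rw [Finset.sum_congr rfl hprod, Finset.sum_const, Finset.card_range, nsmul_eq_mul]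
    have hμBc : (μ Bᶜ).toReal = 1 - (μ B).toReal := by
      rw [measure_compl measurableSet_ball (measure_ne_top μ B), measure_univ,
        ENNReal.toReal_sub_of_le prob_le_one (by simp)]
      simp; rfl
    have hq1 : (μ B).toReal ≤ 1 := by
      have := prob_le_one (μ := μ) (s := B)
      exact ENNReal.toReal_le_of_le_ofReal one_pos.le (by simpa using this)
    have hPEreal : (P E).toReal ≤ m * (μ S).toReal *
        Real.exp (-((m : ℝ) - 1) * (μ B).toReal) := by
      have h1 : (P E).toReal ≤ (m * (μ S * μ Bᶜ ^ (m - 1)) : ENNReal).toReal :=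
        ENNReal.toReal_mono (ENNReal.mul_ne_top (ENNReal.natCast_ne_top m)
          (ENNReal.mul_ne_top (measure_ne_top μ S)
            (ENNReal.pow_ne_top (measure_ne_top μ Bᶜ)))) hPE
      refine h1.trans ?_
      rw [ENNReal.toReal_mul, ENNReal.toReal_mul, ENNReal.toReal_pow, ENNReal.toReal_natCast,
        hμBc]
      have hexp : (1 - (μ B).toReal) ^ (m - 1) ≤
          Real.exp (-((m : ℝ) - 1) * (μ B).toReal) := by
        have h2 : 1 - (μ B).toReal ≤ Real.exp (-(μ B).toReal) := by
          have := Real.add_one_le_exp (-(μ B).toReal)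
          linarith
        calc (1 - (μ B).toReal) ^ (m - 1) ≤ Real.exp (-(μ B).toReal) ^ (m - 1) :=
              pow_le_pow_left₀ (by linarith) h2 _
          _ = Real.exp (-((m : ℝ) - 1) * (μ B).toReal) := by
              rw [← Real.exp_nat_mul]
              congr 1
              rw [Nat.cast_sub hm]
              push_cast; ring
      calc (m : ℝ) * ((μ S).toReal * (1 - (μ B).toReal) ^ (m - 1))
          ≤ (m : ℝ) * ((μ S).toReal * Real.exp (-((m : ℝ) - 1) * (μ B).toReal)) := by
            refine mul_le_mul_of_nonneg_left (mul_le_mul_of_nonneg_left hexp ?_) ?_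
            · exact ENNReal.toReal_nonneg
            · positivity
        _ = (m : ℝ) * (μ S).toReal * Real.exp (-((m : ℝ) - 1) * (μ B).toReal) := by ring
    calc (∫ ω, S.indicator g (NN m ω) ∂P) ≤ 2 * C' * (P E).toReal :=
          hkey S Metric.isClosed_sphere.measurableSet E hEmeas hsub
      _ ≤ 2 * C' * (m * (μ S).toReal * Real.exp (-((m : ℝ) - 1) * (μ B).toReal)) :=
          mul_le_mul_of_nonneg_left hPEreal (by positivity)
      _ = 2 * C' * m * (μ S).toReal * Real.exp (-((m : ℝ) - 1) * (μ B).toReal) := by ring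
  · -- part (3)
    set B := Metric.closedBall x r
    set E : Set Ω := ⋂ j ∈ Finset.range m, (X j) ⁻¹' Bᶜ with hEdef
    have hEmeas : MeasurableSet E :=
      Finset.measurableSet_biInter _ fun j _ => hXmeas j measurableSet_closedBall.compl
    have hsub : ∀ ω, NN m ω ∈ Bᶜ → ω ∈ E := by
      intro ω hω
      refine Set.mem_biInter fun j hj => ?_
      simp only [Set.mem_preimage, Set.mem_compl_iff]
      intro hBj
      have h1 : r < dist x (NN m ω) := by
        rw [dist_comm]; exact not_le.mp (fun h => hω (Metric.mem_closedBall.mpr h))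
      have h2 : dist x (X j ω) ≤ r := by rw [dist_comm]; exact hBj
      have h3 := (hNN m hm ω).2 j (Finset.mem_range.mp hj)
      exact absurd h3 (not_le.mpr (lt_of_le_of_lt h2 h1))
    have hPE : P E = μ Bᶜ ^ m := by
      rw [hXindep.meas_biInter (fun j _ =>
        ⟨Bᶜ, measurableSet_closedBall.compl, rfl⟩)]
      rw [Finset.prod_congr rfl (fun j _ => hmap j _ measurableSet_closedBall.compl),
        Finset.prod_const, Finset.card_range]
    have hμBc : (μ Bᶜ).toReal = 1 - (μ B).toReal := by
      rw [measure_compl measurableSet_closedBall (measure_ne_top μ B), measure_univ,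
        ENNReal.toReal_sub_of_le prob_le_one (by simp)]
      simp; rfl
    have hq1 : (μ B).toReal ≤ 1 := by
      have := prob_le_one (μ := μ) (s := B)
      exact ENNReal.toReal_le_of_le_ofReal one_pos.le (by simpa using this)
    have hPEreal : (P E).toReal ≤ Real.exp (-(m : ℝ) * (μ B).toReal) := by
      rw [hPE, ENNReal.toReal_pow, hμBc]
      have h2 : 1 - (μ B).toReal ≤ Real.exp (-(μ B).toReal) := by
        have := Real.add_one_le_exp (-(μ B).toReal)
        linarith
      calc (1 - (μ B).toReal) ^ m ≤ Real.exp (-(μ B).toReal) ^ m :=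
            pow_le_pow_left₀ (by linarith) h2 _
        _ = Real.exp (-(m : ℝ) * (μ B).toReal) := by
            rw [← Real.exp_nat_mul]; congr 1; ring
    calc (∫ ω, Bᶜ.indicator g (NN m ω) ∂P) ≤ 2 * C' * (P E).toReal :=
          hkey Bᶜ measurableSet_closedBall.compl E hEmeas hsub
      _ ≤ 2 * C' * Real.exp (-(m : ℝ) * (μ B).toReal) :=
          mul_le_mul_of_nonneg_left hPEreal (by positivity)
end

section
/- For every α ∈ (0,1), the α-sequence (r_m)_{m ≥ m₁} is a well-defined vanishing sequence of strictly positive real numbers, and for every m ∈ ℕ with m ≥ m₁ one has both: m ≤ (1 / 𝔼[𝟙_{B_{r_m}}(X)·|η(X) − η(x)|]) · (𝔼[𝟙_{B_{r_m}}(X)·|η(X) − η(x)|] / ℙ_X(B_{r_m}))^{1−α}, where the balls B_{r_m} are open, and m ≥ (1 / ℙ_X(B̄_{r_m})) · (𝔼[𝟙_{B̄_{r_m}}(X)·|η(X) − η(x)|] / ℙ_X(B̄_{r_m}))^{−α}. -/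
open MeasureTheory Filter Topology

lemma alg1 (α i v : ℝ) (hi : 0 < i) (hv : 0 < v) :
    (1/i) * (i/v)^(1-α) = 1/(i^α * v^(1-α)) := by
  have key : i^α * i^(1-α) = i := by
    rw [← Real.rpow_add hi, show α + (1-α) = 1 by ring, Real.rpow_one]
  rw [Real.div_rpow hi.le hv.le, div_mul_div_comm, one_mul,
    div_eq_div_iff (by positivity) (by positivity), one_mul, ← mul_assoc,
    mul_comm (i^(1-α)) (i^α), key]

lemma alg2 (α i v : ℝ) (hi : 0 < i) (hv : 0 < v) :
    (1/v) * (i/v)^(-α) = 1/(i^α * v^(1-α)) := by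
  have key : v^α * v^(1-α) = v := by
    rw [← Real.rpow_add hv, show α + (1-α) = 1 by ring, Real.rpow_one]
  rw [Real.rpow_neg (by positivity), Real.div_rpow hi.le hv.le, inv_div,
    div_mul_div_comm, one_mul, div_eq_div_iff (by positivity) (by positivity), one_mul,
    mul_left_comm, key, mul_comm]

lemma iInter_cb_singleton {𝒳 : Type*} [MetricSpace 𝒳] (x : 𝒳) :
    (⋂ n : ℕ, Metric.closedBall x (1/((n:ℝ)+1))) = {x} := by
  ext y
  simp only [Set.mem_iInter, Metric.mem_closedBall, Set.mem_singleton_iff]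
  constructor
  · intro h
    have h0 : dist y x ≤ 0 :=
      ge_of_tendsto' tendsto_one_div_add_atTop_nhds_zero_nat (fun n => h n) |>.trans_eq rfl
    exact dist_le_zero.mp h0
  · intro h n
    simp [h]
    positivity

lemma iInter_cb_cb {𝒳 : Type*} [MetricSpace 𝒳] (x : 𝒳) (R : ℝ) :
    (⋂ n : ℕ, Metric.closedBall x (R + 1/((n:ℝ)+1))) = Metric.closedBall x R := by
  ext y
  simp only [Set.mem_iInter, Metric.mem_closedBall]
  constructor
  · intro h
    have h1 : Tendsto (fun n : ℕ => R + 1/((n:ℝ)+1)) atTop (𝓝 (R + 0)) :=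
      tendsto_const_nhds.add tendsto_one_div_add_atTop_nhds_zero_nat
    rw [add_zero] at h1
    exact ge_of_tendsto' h1 h
  · intro h n
    have : (0:ℝ) < 1/((n:ℝ)+1) := by positivity
    linarith

lemma iUnion_cb_ball {𝒳 : Type*} [MetricSpace 𝒳] (x : 𝒳) (R : ℝ) (hR : 0 < R) :
    (⋃ n : ℕ, Metric.closedBall x (R - R/((n:ℝ)+2))) = Metric.ball x R := by
  ext y
  simp only [Set.mem_iUnion, Metric.mem_closedBall, Metric.mem_ball]
  constructor
  · rintro ⟨n, hn⟩
    have : (0:ℝ) < R/((n:ℝ)+2) := by positivity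
    linarith
  · intro h
    obtain ⟨N, hN⟩ := exists_nat_gt (R/(R - dist y x))
    refine ⟨N, ?_⟩
    have hd : 0 < R - dist y x := by linarith
    have h1 : R/(R - dist y x) < (N:ℝ)+2 := by linarith
    have h2 : R < ((N:ℝ)+2) * (R - dist y x) := (div_lt_iff₀ hd).mp h1
    have h3 : R/((N:ℝ)+2) < R - dist y x := by
      rw [div_lt_iff₀ (by positivity)]
      linarith [h2]
    linarith

/-- **Lemma (properties of α-sequences).**
In the nearest-neighbor setting, under the non-triviality assumptions `μ {x} = 0` and
`𝔼[𝟙_{B̄_r}(X)·|η(X) − η(x)|] > 0` for every `r > 0`, fix `α ∈ (0,1)` and let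
`M(r) := (𝔼[𝟙_{B̄_r}(X)·|η(X) − η(x)|])^α · (μ(B̄_r))^{1−α}`,
`m₁ := ⌈1 / M(1)⌉`, and `r_m := sup {r > 0 | M(r) < 1/m}` for `m ≥ m₁`.
Then the α-sequence `(r_m)_{m ≥ m₁}` is well defined (the defining set is nonempty and
bounded above), consists of strictly positive numbers, vanishes as `m → ∞`, and for
every `m ≥ m₁`:
`m ≤ (1/𝔼[𝟙_{B_{r_m}}(X)·|η(X)−η(x)|]) · (𝔼[𝟙_{B_{r_m}}(X)·|η(X)−η(x)|]/μ(B_{r_m}))^{1−α}`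
(open balls) and
`m ≥ (1/μ(B̄_{r_m})) · (𝔼[𝟙_{B̄_{r_m}}(X)·|η(X)−η(x)|]/μ(B̄_{r_m}))^{−α}` (closed balls). -/
theorem stmt_3
    {𝒳 Ω : Type*} [MetricSpace 𝒳] [MeasurableSpace 𝒳] [BorelSpace 𝒳]
    {mΩ : MeasurableSpace Ω} (P : Measure Ω) [IsProbabilityMeasure P]
    (X : ℕ → Ω → 𝒳) (μ : Measure 𝒳)
    (hXmeas : ∀ i, Measurable (X i))
    (hXindep : ProbabilityTheory.iIndepFun X P)
    (hXdist : ∀ i, P.map (X i) = μ)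
    (x : 𝒳) (hsupp : ∀ r > (0 : ℝ), 0 < μ (Metric.closedBall x r))
    (η : 𝒳 → ℝ) (hηmeas : Measurable η) (C : ℝ) (hηbdd : ∀ y, |η y| ≤ C)
    (hatom : μ {x} = 0)
    (hnontriv : ∀ r > (0 : ℝ), 0 < ∫ y in Metric.closedBall x r, |η y - η x| ∂μ)
    (α : ℝ) (hα : α ∈ Set.Ioo (0 : ℝ) 1)
    (M : ℝ → ℝ)
    (hM : ∀ r : ℝ, M r = (∫ y in Metric.closedBall x r, |η y - η x| ∂μ) ^ α *
      ((μ (Metric.closedBall x r)).toReal) ^ (1 - α))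
    (m₁ : ℕ) (hm₁ : m₁ = ⌈1 / M 1⌉₊)
    (rseq : ℕ → ℝ)
    (hrseq : ∀ m : ℕ, rseq m = sSup {r : ℝ | 0 < r ∧ M r < 1 / (m : ℝ)}) :
    (∀ m : ℕ, m₁ ≤ m →
      ({r : ℝ | 0 < r ∧ M r < 1 / (m : ℝ)}.Nonempty ∧
        BddAbove {r : ℝ | 0 < r ∧ M r < 1 / (m : ℝ)} ∧
        0 < rseq m)) ∧
    Tendsto rseq atTop (𝓝 0) ∧
    (∀ m : ℕ, m₁ ≤ m →
      ((m : ℝ) ≤ (1 / ∫ y in Metric.ball x (rseq m), |η y - η x| ∂μ) *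
        ((∫ y in Metric.ball x (rseq m), |η y - η x| ∂μ) /
          (μ (Metric.ball x (rseq m))).toReal) ^ (1 - α) ∧
      (m : ℝ) ≥ (1 / (μ (Metric.closedBall x (rseq m))).toReal) *
        ((∫ y in Metric.closedBall x (rseq m), |η y - η x| ∂μ) /
          (μ (Metric.closedBall x (rseq m))).toReal) ^ (-α))) := by
  obtain ⟨hα0, hα1⟩ := hα
  have hμprob : IsProbabilityMeasure μ := by
    rw [← hXdist 0]; exact Measure.isProbabilityMeasure_map (hXmeas 0).aemeasurable
  have hfint : Integrable (fun y => |η y - η x|) μ := by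
    refine Integrable.mono' (integrable_const (C + |η x|))
      ((hηmeas.sub measurable_const).abs.aestronglyMeasurable) (ae_of_all _ fun y => ?_)
    have h1 := abs_sub (η y) (η x)
    have h2 := hηbdd y
    simp only [Real.norm_eq_abs, abs_abs]
    linarith
  have hInonneg : ∀ r : ℝ, 0 ≤ ∫ y in Metric.closedBall x r, |η y - η x| ∂μ :=
    fun r => integral_nonneg fun y => abs_nonneg _
  have hImono : ∀ r r' : ℝ, r ≤ r' → (∫ y in Metric.closedBall x r, |η y - η x| ∂μ) ≤
      ∫ y in Metric.closedBall x r', |η y - η x| ∂μ := by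
    intro r r' h
    exact setIntegral_mono_set hfint.integrableOn (ae_of_all _ fun y => abs_nonneg _)
      (HasSubset.Subset.eventuallyLE (Metric.closedBall_subset_closedBall h))
  have hVmono : ∀ r r' : ℝ, r ≤ r' → (μ (Metric.closedBall x r)).toReal ≤
      (μ (Metric.closedBall x r')).toReal := by
    intro r r' h
    exact ENNReal.toReal_mono (measure_ne_top μ _)
      (measure_mono (Metric.closedBall_subset_closedBall h))
  have hVpos : ∀ r : ℝ, 0 < r → 0 < (μ (Metric.closedBall x r)).toReal :=
    fun r hr => ENNReal.toReal_pos (hsupp r hr).ne' (measure_ne_top μ _)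
  have hMmono : ∀ r r' : ℝ, r ≤ r' → M r ≤ M r' := by
    intro r r' h
    rw [hM, hM]
    exact mul_le_mul (Real.rpow_le_rpow (hInonneg r) (hImono r r' h) hα0.le)
      (Real.rpow_le_rpow ENNReal.toReal_nonneg (hVmono r r' h) (by linarith))
      (Real.rpow_nonneg ENNReal.toReal_nonneg _) (Real.rpow_nonneg (hInonneg r') _)
  have hMpos : ∀ r : ℝ, 0 < r → 0 < M r := by
    intro r hr
    rw [hM]
    exact mul_pos (Real.rpow_pos_of_pos (hnontriv r hr) _)
      (Real.rpow_pos_of_pos (hVpos r hr) _)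
  -- small values of M near 0
  have hsmall : ∀ ε : ℝ, 0 < ε → ∃ r : ℝ, 0 < r ∧ M r < ε := by
    intro ε hε
    have hanti : Antitone (fun n : ℕ => Metric.closedBall x (1/((n:ℝ)+1))) := by
      intro a b hab
      refine Metric.closedBall_subset_closedBall ?_
      apply one_div_le_one_div_of_le (by positivity)
      have : (a:ℝ) ≤ (b:ℝ) := Nat.cast_le.mpr hab
      linarith
    have h1 : Tendsto (fun n : ℕ => μ (Metric.closedBall x (1/((n:ℝ)+1)))) atTop (𝓝 0) := by
      have := tendsto_measure_iInter_atTop (μ := μ)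
        (fun n => measurableSet_closedBall.nullMeasurableSet) hanti ⟨0, measure_ne_top μ _⟩
      rwa [iInter_cb_singleton, hatom] at this
    have h2 : Tendsto (fun n : ℕ => (μ (Metric.closedBall x (1/((n:ℝ)+1)))).toReal)
        atTop (𝓝 0) := by
      have := (ENNReal.tendsto_toReal (a := 0) (by simp)).comp h1
      simpa [Function.comp_def] using this
    have h3 : Tendsto (fun n : ℕ => (∫ y in Metric.closedBall x 1, |η y - η x| ∂μ)^α *
        ((μ (Metric.closedBall x (1/((n:ℝ)+1)))).toReal)^(1-α)) atTop (𝓝 0) := by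
      have := (h2.rpow_const (p := 1-α) (Or.inr (by linarith))).const_mul
        ((∫ y in Metric.closedBall x 1, |η y - η x| ∂μ)^α)
      simpa [Real.zero_rpow (show 1-α ≠ 0 by linarith)] using this
    have h4 : ∀ᶠ n : ℕ in atTop, (∫ y in Metric.closedBall x 1, |η y - η x| ∂μ)^α *
        ((μ (Metric.closedBall x (1/((n:ℝ)+1)))).toReal)^(1-α) < ε :=
      h3.eventually_lt_const hε
    obtain ⟨n, hn⟩ := h4.exists
    refine ⟨1/((n:ℝ)+1), by positivity, ?_⟩
    have hle1 : 1/((n:ℝ)+1) ≤ 1 := by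
      rw [div_le_one (by positivity)]
      have : (0:ℝ) ≤ (n:ℝ) := Nat.cast_nonneg n
      linarith
    calc M (1/((n:ℝ)+1)) = (∫ y in Metric.closedBall x (1/((n:ℝ)+1)), |η y - η x| ∂μ)^α *
          ((μ (Metric.closedBall x (1/((n:ℝ)+1)))).toReal)^(1-α) := hM _
      _ ≤ (∫ y in Metric.closedBall x 1, |η y - η x| ∂μ)^α *
          ((μ (Metric.closedBall x (1/((n:ℝ)+1)))).toReal)^(1-α) :=
        mul_le_mul_of_nonneg_right
          (Real.rpow_le_rpow (hInonneg _) (hImono _ 1 hle1) hα0.le)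
          (Real.rpow_nonneg ENNReal.toReal_nonneg _)
      _ < ε := hn
  have hM1pos : 0 < M 1 := hMpos 1 one_pos
  have hm₁1 : 1 ≤ m₁ := by
    rw [hm₁]
    exact Nat.one_le_ceil_iff.mpr (by positivity)
  have hmceil : ∀ m : ℕ, m₁ ≤ m → 1/(m:ℝ) ≤ M 1 := by
    intro m hm
    have h0 : (0:ℝ) < m := by exact_mod_cast lt_of_lt_of_le hm₁1 hm
    have h1 : 1/(M 1) ≤ (m:ℝ) := by
      refine le_trans (Nat.le_ceil _) ?_
      exact_mod_cast hm₁ ▸ hm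
    exact (one_div_le hM1pos h0).mp h1
  have hne : ∀ m : ℕ, m₁ ≤ m → {r : ℝ | 0 < r ∧ M r < 1/(m:ℝ)}.Nonempty := by
    intro m hm
    have h0 : (0:ℝ) < m := by exact_mod_cast lt_of_lt_of_le hm₁1 hm
    obtain ⟨r, hr0, hrM⟩ := hsmall (1/m) (by positivity)
    exact ⟨r, hr0, hrM⟩
  have hbdd : ∀ m : ℕ, m₁ ≤ m → BddAbove {r : ℝ | 0 < r ∧ M r < 1/(m:ℝ)} := by
    intro m hm
    refine ⟨1, fun r hr => ?_⟩
    by_contra h; push_neg at h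
    exact absurd (lt_of_le_of_lt (le_trans (hmceil m hm) (hMmono 1 r h.le)) hr.2)
      (lt_irrefl _)
  have hrpos : ∀ m : ℕ, m₁ ≤ m → 0 < rseq m := by
    intro m hm
    obtain ⟨r, hr⟩ := hne m hm
    rw [hrseq]
    exact lt_of_lt_of_le hr.1 (le_csSup (hbdd m hm) hr)
  have htend : Tendsto rseq atTop (𝓝 0) := by
    rw [Metric.tendsto_atTop]
    intro ε hε
    obtain ⟨N₀, hN₀⟩ := exists_nat_gt (1 / M (ε/2))
    have hMε : 0 < M (ε/2) := hMpos _ (by linarith)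
    have hN₀pos : (0:ℝ) < N₀ := lt_trans (by positivity) hN₀
    refine ⟨max m₁ N₀, fun m hm => ?_⟩
    have hm1 : m₁ ≤ m := le_trans (le_max_left _ _) hm
    have hmN : N₀ ≤ m := le_trans (le_max_right _ _) hm
    have hmpos : (0:ℝ) < m := lt_of_lt_of_le hN₀pos (Nat.cast_le.mpr hmN)
    have hup : ∀ r ∈ {r : ℝ | 0 < r ∧ M r < 1/(m:ℝ)}, r ≤ ε/2 := by
      intro r hr
      by_contra h; push_neg at h
      have h1 : M (ε/2) ≤ M r := hMmono _ _ h.le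
      have h2 : (1:ℝ)/m ≤ 1/N₀ := one_div_le_one_div_of_le hN₀pos (Nat.cast_le.mpr hmN)
      have h3 : (1:ℝ)/N₀ < M (ε/2) := (one_div_lt hMε hN₀pos).mp hN₀
      have := hr.2
      change M r < 1/(m:ℝ) at this
      linarith [hr.2]
    have hle : rseq m ≤ ε/2 := by
      rw [hrseq]
      exact csSup_le (hne m hm1) hup
    have hp := hrpos m hm1
    rw [Real.dist_eq, sub_zero, abs_of_pos hp]
    linarith
  refine ⟨fun m hm => ⟨hne m hm, hbdd m hm, hrpos m hm⟩, htend, ?_⟩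
  intro m hm
  have hmpos : (0:ℝ) < m := by exact_mod_cast lt_of_lt_of_le hm₁1 hm
  set R := rseq m with hR
  have hRpos : 0 < R := hrpos m hm
  -- closed-ball inequality: 1/m ≤ M R
  have hanti : Antitone (fun n : ℕ => Metric.closedBall x (R + 1/((n:ℝ)+1))) := by
    intro a b hab
    refine Metric.closedBall_subset_closedBall (add_le_add_right ?_ R)
    apply one_div_le_one_div_of_le (by positivity)
    have : (a:ℝ) ≤ (b:ℝ) := Nat.cast_le.mpr hab
    linarith
  have hVt : Tendsto (fun n : ℕ => (μ (Metric.closedBall x (R + 1/((n:ℝ)+1)))).toReal)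
      atTop (𝓝 ((μ (Metric.closedBall x R)).toReal)) := by
    have h := tendsto_measure_iInter_atTop (μ := μ)
      (fun n => measurableSet_closedBall.nullMeasurableSet) hanti ⟨0, measure_ne_top μ _⟩
    rw [iInter_cb_cb] at h
    exact (ENNReal.tendsto_toReal (measure_ne_top μ _)).comp h
  have hIt : Tendsto (fun n : ℕ => ∫ y in Metric.closedBall x (R + 1/((n:ℝ)+1)), |η y - η x| ∂μ)
      atTop (𝓝 (∫ y in Metric.closedBall x R, |η y - η x| ∂μ)) := by
    have h := tendsto_setIntegral_of_antitone (fun n : ℕ => measurableSet_closedBall) hanti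
      ⟨0, hfint.integrableOn⟩
    rwa [iInter_cb_cb] at h
  have hMt : Tendsto (fun n : ℕ => M (R + 1/((n:ℝ)+1))) atTop (𝓝 (M R)) := by
    simp_rw [hM]
    exact (hIt.rpow_const (Or.inr hα0.le)).mul (hVt.rpow_const (Or.inr (by linarith)))
  have hA : (1:ℝ)/m ≤ M R := by
    refine ge_of_tendsto hMt (Filter.Eventually.of_forall fun n => ?_)
    by_contra h; push_neg at h
    have hpos : (0:ℝ) < 1/((n:ℝ)+1) := by positivity
    have hmem : R + 1/((n:ℝ)+1) ∈ {r : ℝ | 0 < r ∧ M r < 1/(m:ℝ)} :=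
      ⟨by linarith, h⟩
    have hle := le_csSup (hbdd m hm) hmem
    rw [← hrseq m, ← hR] at hle
    linarith
  -- open-ball inequality
  have hmono : Monotone (fun n : ℕ => Metric.closedBall x (R - R/((n:ℝ)+2))) := by
    intro a b hab
    refine Metric.closedBall_subset_closedBall (sub_le_sub_left ?_ R)
    have h2 : ((a:ℝ)+2) ≤ (b:ℝ)+2 := by
      have : (a:ℝ) ≤ (b:ℝ) := Nat.cast_le.mpr hab
      linarith
    exact div_le_div_of_nonneg_left hRpos.le (by positivity) h2
  have hVt' : Tendsto (fun n : ℕ => (μ (Metric.closedBall x (R - R/((n:ℝ)+2)))).toReal)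
      atTop (𝓝 ((μ (Metric.ball x R)).toReal)) := by
    have h := tendsto_measure_iUnion_atTop (μ := μ) hmono
    rw [iUnion_cb_ball x R hRpos] at h
    exact (ENNReal.tendsto_toReal (measure_ne_top μ _)).comp h
  have hIt' : Tendsto (fun n : ℕ => ∫ y in Metric.closedBall x (R - R/((n:ℝ)+2)), |η y - η x| ∂μ)
      atTop (𝓝 (∫ y in Metric.ball x R, |η y - η x| ∂μ)) := by
    have h := tendsto_setIntegral_of_monotone (fun n : ℕ => measurableSet_closedBall) hmono
      (by rw [iUnion_cb_ball x R hRpos]; exact hfint.integrableOn)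
    rwa [iUnion_cb_ball x R hRpos] at h
  have hBn : ∀ n : ℕ, M (R - R/((n:ℝ)+2)) ≤ 1/(m:ℝ) := by
    intro n
    have hlt : R - R/((n:ℝ)+2) < R := by
      have : (0:ℝ) < R/((n:ℝ)+2) := by positivity
      linarith
    have hlt' : R - R/((n:ℝ)+2) < sSup {r : ℝ | 0 < r ∧ M r < 1/(m:ℝ)} := by
      rw [← hrseq m, ← hR]; exact hlt
    obtain ⟨s, hs, hlts⟩ := exists_lt_of_lt_csSup (hne m hm) hlt'
    exact le_of_lt (lt_of_le_of_lt (hMmono _ _ hlts.le) hs.2)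
  have hB : (∫ y in Metric.ball x R, |η y - η x| ∂μ)^α *
      ((μ (Metric.ball x R)).toReal)^(1-α) ≤ 1/(m:ℝ) := by
    have hMt' : Tendsto (fun n : ℕ => M (R - R/((n:ℝ)+2))) atTop
        (𝓝 ((∫ y in Metric.ball x R, |η y - η x| ∂μ)^α *
          ((μ (Metric.ball x R)).toReal)^(1-α))) := by
      simp_rw [hM]
      exact (hIt'.rpow_const (Or.inr hα0.le)).mul (hVt'.rpow_const (Or.inr (by linarith)))
    exact le_of_tendsto hMt' (Filter.Eventually.of_forall hBn)
  have hcb : Metric.closedBall x (R/2) ⊆ Metric.ball x R := by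
    intro y hy
    rw [Metric.mem_closedBall] at hy
    rw [Metric.mem_ball]
    linarith
  have hIopos : 0 < ∫ y in Metric.ball x R, |η y - η x| ∂μ :=
    lt_of_lt_of_le (hnontriv (R/2) (by linarith))
      (setIntegral_mono_set hfint.integrableOn (ae_of_all _ fun y => abs_nonneg _)
        (HasSubset.Subset.eventuallyLE hcb))
  have hVopos : 0 < (μ (Metric.ball x R)).toReal :=
    ENNReal.toReal_pos (ne_of_gt (lt_of_lt_of_le (hsupp (R/2) (by linarith))
      (measure_mono hcb))) (measure_ne_top μ _)
  have hIRpos : 0 < ∫ y in Metric.closedBall x R, |η y - η x| ∂μ := hnontriv R hRpos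
  have hVRpos : 0 < (μ (Metric.closedBall x R)).toReal := hVpos R hRpos
  constructor
  · rw [alg1 α (∫ y in Metric.ball x R, |η y - η x| ∂μ) ((μ (Metric.ball x R)).toReal)
      hIopos hVopos]
    have hMo : 0 < (∫ y in Metric.ball x R, |η y - η x| ∂μ)^α *
        ((μ (Metric.ball x R)).toReal)^(1-α) :=
      mul_pos (Real.rpow_pos_of_pos hIopos _) (Real.rpow_pos_of_pos hVopos _)
    calc (m:ℝ) = 1/(1/(m:ℝ)) := (one_div_one_div _).symm
      _ ≤ 1/((∫ y in Metric.ball x R, |η y - η x| ∂μ)^α *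
          ((μ (Metric.ball x R)).toReal)^(1-α)) := one_div_le_one_div_of_le hMo hB
  · rw [ge_iff_le, alg2 α (∫ y in Metric.closedBall x R, |η y - η x| ∂μ)
      ((μ (Metric.closedBall x R)).toReal) hIRpos hVRpos, ← hM R]
    calc 1/(M R) ≤ 1/(1/(m:ℝ)) := one_div_le_one_div_of_le (by positivity) hA
      _ = (m:ℝ) := one_div_one_div _
end

section
/- Let (r_m)_{m ≥ m₁} be an α-sequence for some α ∈ (0,1). If x is a Lebesgue point for η with respect to ℙ_X, then the following are equivalent: (1) 𝔼[|η(X^x_m) − η(x)|] → 0 as m → ∞; (2) 𝔼[𝟙_{S_{r_m}}(X^x_m)·|η(X^x_m) − η(x)|] → 0 as m → ∞. -/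
open MeasureTheory Filter Topology

lemma key1' {a b α : ℝ} (ha : 0 < a) (hb : 0 < b) :
    a = (a ^ α * b ^ (1-α)) * (a / b) ^ (1-α) := by
  rw [Real.div_rpow ha.le hb.le]
  have h1 : a ^ α * a ^ (1-α) = a := by rw [← Real.rpow_add ha]; norm_num
  have h2 : (0:ℝ) < b ^ (1-α) := Real.rpow_pos_of_pos hb _
  field_simp
  linear_combination -h1

lemma key2' {a b α : ℝ} (ha : 0 < a) (hb : 0 < b) :
    a ^ α * b ^ (1-α) = (a / b) ^ α * b := by
  rw [Real.div_rpow ha.le hb.le]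
  have h1 : b ^ α * b ^ (1-α) = b := by rw [← Real.rpow_add hb]; norm_num
  have h2 : (0:ℝ) < b ^ α := Real.rpow_pos_of_pos hb _
  field_simp
  linear_combination h1

lemma tendsto_zero_of_forall_eventually_le {f : ℕ → ℝ}
    (h0 : ∀ᶠ m in atTop, 0 ≤ f m)
    (h : ∀ ε > (0:ℝ), ∀ᶠ m in atTop, f m ≤ ε) : Tendsto f atTop (𝓝 0) := by
  rw [Metric.tendsto_atTop]
  intro ε hε
  have := (h (ε/2) (by linarith)).and h0
  rw [eventually_atTop] at this
  obtain ⟨N, hN⟩ := this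
  refine ⟨N, fun n hn => ?_⟩
  obtain ⟨h1, h2⟩ := hN n hn
  rw [Real.dist_eq, sub_zero, abs_of_nonneg h2]
  linarith

set_option maxHeartbeats 1000000 in
/-- **Theorem (reduction to spheres along α-sequences).**
In the nearest-neighbor setting, under the non-triviality assumptions, let
`(r_m)_{m ≥ m₁}` be the α-sequence for some `α ∈ (0,1)`. If `x` is a Lebesgue point for
`η` with respect to the common distribution `μ`, then
`𝔼[|η(NN m) − η(x)|] → 0` iff `𝔼[𝟙_{S_{r_m}}(NN m)·|η(NN m) − η(x)|] → 0`
as `m → ∞`. -/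
theorem stmt_5
    {𝒳 Ω : Type*} [MetricSpace 𝒳] [MeasurableSpace 𝒳] [BorelSpace 𝒳]
    {mΩ : MeasurableSpace Ω} (P : Measure Ω) [IsProbabilityMeasure P]
    (X : ℕ → Ω → 𝒳) (μ : Measure 𝒳)
    (hXmeas : ∀ i, Measurable (X i))
    (hXindep : ProbabilityTheory.iIndepFun X P)
    (hXdist : ∀ i, P.map (X i) = μ)
    (x : 𝒳) (hsupp : ∀ r > (0 : ℝ), 0 < μ (Metric.closedBall x r))
    (η : 𝒳 → ℝ) (hηmeas : Measurable η) (C : ℝ) (hηbdd : ∀ y, |η y| ≤ C)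
    (NN : ℕ → Ω → 𝒳)
    (hNNmeas : ∀ m, 1 ≤ m → Measurable (NN m))
    (hNN : ∀ m, 1 ≤ m → ∀ ω, (∃ i < m, NN m ω = X i ω) ∧
      ∀ j < m, dist x (NN m ω) ≤ dist x (X j ω))
    (hatom : μ {x} = 0)
    (hnontriv : ∀ r > (0 : ℝ), 0 < ∫ y in Metric.closedBall x r, |η y - η x| ∂μ)
    (α : ℝ) (hα : α ∈ Set.Ioo (0 : ℝ) 1)
    (M : ℝ → ℝ)
    (hM : ∀ r : ℝ, M r = (∫ y in Metric.closedBall x r, |η y - η x| ∂μ) ^ α *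
      ((μ (Metric.closedBall x r)).toReal) ^ (1 - α))
    (m₁ : ℕ) (hm₁ : m₁ = ⌈1 / M 1⌉₊)
    (rseq : ℕ → ℝ)
    (hrseq : ∀ m : ℕ, rseq m = sSup {r : ℝ | 0 < r ∧ M r < 1 / (m : ℝ)})
    (hLeb : Tendsto
      (fun r : ℝ =>
        (∫ y in Metric.closedBall x r, |η y - η x| ∂μ) /
          (μ (Metric.closedBall x r)).toReal)
      (𝓝[>] 0) (𝓝 0)) :
    Tendsto (fun m : ℕ => ∫ ω, |η (NN m ω) - η x| ∂P) atTop (𝓝 0) ↔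
    Tendsto
      (fun m : ℕ =>
        ∫ ω, Set.indicator (Metric.sphere x (rseq m)) (fun y => |η y - η x|) (NN m ω) ∂P)
      atTop (𝓝 0) := by
  obtain ⟨hα0, hα1⟩ := hα
  have hμprob : IsProbabilityMeasure μ := by
    rw [← hXdist 0]; exact Measure.isProbabilityMeasure_map (hXmeas 0).aemeasurable
  set g : 𝒳 → ℝ := fun y => |η y - η x| with hgdef
  set I : ℝ → ℝ := fun r => ∫ y in Metric.closedBall x r, g y ∂μ with hIdef
  set ν : ℝ → ℝ := fun r => (μ (Metric.closedBall x r)).toReal with hνdef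
  have habs_meas : Measurable g := (hηmeas.sub measurable_const).abs
  have hg0 : ∀ y, 0 ≤ g y := fun y => abs_nonneg _
  have habs_bd : ∀ y, g y ≤ 2 * C := by
    intro y
    calc |η y - η x| ≤ |η y| + |η x| := abs_sub _ _
    _ ≤ 2 * C := by have := hηbdd y; have := hηbdd x; linarith
  have hgint : Integrable g μ := by
    refine Integrable.mono' (integrable_const (2*C)) habs_meas.aestronglyMeasurable ?_
    exact ae_of_all _ fun y => by rw [Real.norm_eq_abs, abs_abs]; exact habs_bd y
  have hImono : Monotone I := by
    intro a b hab
    exact setIntegral_mono_set hgint.integrableOn (ae_of_all _ fun y => hg0 _)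
      ((Metric.closedBall_subset_closedBall hab).eventuallyLE)
  have hInonneg : ∀ r, 0 ≤ I r := fun r =>
    setIntegral_nonneg measurableSet_closedBall fun y _ => hg0 y
  have hνnonneg : ∀ r, 0 ≤ ν r := fun r => ENNReal.toReal_nonneg
  have hνmono : Monotone ν := fun a b hab =>
    ENNReal.toReal_mono (measure_ne_top μ _)
      (measure_mono (Metric.closedBall_subset_closedBall hab))
  have hIle : ∀ r : ℝ, I r ≤ 2 * C * ν r := by
    intro r
    calc I r ≤ ∫ _ in Metric.closedBall x r, 2*C ∂μ := by
          refine setIntegral_mono_on hgint.integrableOn (integrableOn_const ?_)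
            measurableSet_closedBall (fun y _ => habs_bd y)
          exact measure_ne_top μ _
    _ = 2 * C * ν r := by rw [setIntegral_const, smul_eq_mul, measureReal_def]; ring
  have hνpos : ∀ r, 0 < r → 0 < ν r := fun r hr =>
    ENNReal.toReal_pos (hsupp r hr).ne' (measure_ne_top μ _)
  have hC0 : 0 < C := by
    have h1 := hnontriv 1 one_pos
    have h2 := hIle 1
    have h3 := hνpos 1 one_pos
    nlinarith
  have hMpos : ∀ r, 0 < r → 0 < M r := by
    intro r hr
    rw [hM]
    exact mul_pos (Real.rpow_pos_of_pos (hnontriv r hr) _)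
      (Real.rpow_pos_of_pos (hνpos r hr) _)
  have hMmono : Monotone M := by
    intro a b hab
    rw [hM, hM]
    exact mul_le_mul (Real.rpow_le_rpow (hInonneg a) (hImono hab) hα0.le)
      (Real.rpow_le_rpow (hνnonneg a) (hνmono hab) (by linarith))
      (Real.rpow_nonneg (hνnonneg a) _) (Real.rpow_nonneg (hInonneg b) _)
  -- M r ≤ (2C)^α * ν r
  have hMle : ∀ r : ℝ, M r ≤ (2*C) ^ α * ν r := by
    intro r
    rw [hM]
    calc (I r) ^ α * (ν r) ^ (1-α) ≤ (2*C*ν r) ^ α * (ν r) ^ (1-α) := by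
          exact mul_le_mul_of_nonneg_right
            (Real.rpow_le_rpow (hInonneg r) (hIle r) hα0.le)
            (Real.rpow_nonneg (hνnonneg r) _)
    _ = (2*C) ^ α * ((ν r) ^ α * (ν r) ^ (1-α)) := by
          rw [Real.mul_rpow (by positivity) (hνnonneg r)]; ring
    _ = (2*C) ^ α * ν r := by
          rw [← Real.rpow_add' (hνnonneg r) (by norm_num)]
          norm_num
  -- ν (1/(n+1)) → 0
  have hνlim : Tendsto (fun n : ℕ => ν (1/(n+1 : ℝ))) atTop (𝓝 0) := by
    have hA : Antitone (fun n : ℕ => Metric.closedBall x (1/(n+1 : ℝ))) := by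
      intro a b hab
      refine Metric.closedBall_subset_closedBall ?_
      have : (a:ℝ) + 1 ≤ (b:ℝ) + 1 := by exact_mod_cast by omega
      exact one_div_le_one_div_of_le (by positivity) this
    have hinter : (⋂ n : ℕ, Metric.closedBall x (1/(n+1 : ℝ))) = {x} := by
      ext z
      simp only [Set.mem_iInter, Metric.mem_closedBall, Set.mem_singleton_iff]
      constructor
      · intro h
        have : dist z x ≤ 0 := by
          refine le_of_forall_pos_le_add fun ε hε => ?_
          obtain ⟨n, hn⟩ := exists_nat_gt (1/ε)
          have h1 : 1/((n:ℝ)+1) < ε := by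
            rw [div_lt_iff₀ (by positivity)]
            rw [div_lt_iff₀ hε] at hn
            nlinarith
          linarith [h n]
        simpa [dist_eq_zero] using le_antisymm this dist_nonneg
      · intro h; subst h; intro n; simp [dist_self]; positivity
    have := tendsto_measure_iInter_atTop
      (fun n => (measurableSet_closedBall).nullMeasurableSet) hA ⟨0, measure_ne_top μ _⟩
    rw [hinter, hatom] at this
    have := (ENNReal.tendsto_toReal (by norm_num)).comp this
    simpa [Function.comp_def] using this
  -- existence of small elements
  have hex : ∀ c > (0:ℝ), ∃ s, 0 < s ∧ M s < c := by
    intro c hc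
    have h2 : Tendsto (fun n : ℕ => (2*C)^α * ν (1/(n+1:ℝ))) atTop (𝓝 0) := by
      simpa using hνlim.const_mul ((2*C)^α)
    have := h2.eventually_lt_const hc
    obtain ⟨n, hn⟩ := this.exists
    exact ⟨1/(n+1:ℝ), by positivity, lt_of_le_of_lt (hMle _) hn⟩
  -- eventual good properties of rseq
  have hM1 : 0 < M 1 := hMpos 1 one_pos
  have hinv : Tendsto (fun m : ℕ => 1/(m:ℝ)) atTop (𝓝 0) := tendsto_one_div_atTop_nhds_zero_nat
  have hGood : ∀ᶠ m : ℕ in atTop, 1 ≤ m ∧ 0 < rseq m ∧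
      (∀ r, 0 < r → r < rseq m → M r < 1/(m:ℝ)) ∧
      (∀ r, rseq m < r → 1/(m:ℝ) ≤ M r) := by
    filter_upwards [eventually_ge_atTop 1, hinv.eventually_lt_const hM1] with m hm1 hmM
    have hmpos : (0:ℝ) < 1/(m:ℝ) := by
      have : (0:ℝ) < (m:ℝ) := by exact_mod_cast hm1
      positivity
    obtain ⟨s₀, hs₀pos, hs₀⟩ := hex (1/(m:ℝ)) hmpos
    set S := {r : ℝ | 0 < r ∧ M r < 1/(m:ℝ)} with hS
    have hSne : S.Nonempty := ⟨s₀, hs₀pos, hs₀⟩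
    have hSbdd : BddAbove S := by
      refine ⟨1, fun s hs => ?_⟩
      by_contra hs1
      push_neg at hs1
      exact absurd hs.2 (not_lt.2 (le_trans hmM.le (hMmono hs1.le)))
    have hrm : rseq m = sSup S := hrseq m
    have hpos : 0 < rseq m := by
      rw [hrm]; exact lt_of_lt_of_le hs₀pos (le_csSup hSbdd ⟨hs₀pos, hs₀⟩)
    refine ⟨hm1, hpos, ?_, ?_⟩
    · intro r hr0 hr
      rw [hrm] at hr
      obtain ⟨s, hsS, hrs⟩ := exists_lt_of_lt_csSup hSne hr
      exact lt_of_le_of_lt (hMmono hrs.le) hsS.2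
    · intro r hr
      by_contra hlt
      push_neg at hlt
      have : r ∈ S := ⟨lt_trans hpos hr, hlt⟩
      exact absurd (le_csSup hSbdd this) (not_le.2 (by rw [← hrm]; exact hr))
  have hrto0 : ∀ δ > (0:ℝ), ∀ᶠ m : ℕ in atTop, rseq m < δ := by
    intro δ hδ
    have hMδ : 0 < M (δ/2) := hMpos _ (by linarith)
    filter_upwards [hinv.eventually_lt_const hMδ] with m hmM
    have : ∀ s ∈ {r : ℝ | 0 < r ∧ M r < 1/(m:ℝ)}, s ≤ δ/2 := by
      intro s hs
      by_contra hs1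
      push_neg at hs1
      exact absurd hs.2 (not_lt.2 (le_trans hmM.le (hMmono hs1.le)))
    calc rseq m ≤ δ/2 := by rw [hrseq m]; exact Real.sSup_le this (by linarith)
    _ < δ := by linarith
  -- integrability helpers
  have hintNN : ∀ (f : 𝒳 → ℝ), Measurable f → (∀ y, |f y| ≤ 2*C) →
      ∀ m, 1 ≤ m → Integrable (fun ω => f (NN m ω)) P := by
    intro f hf hbd m hm
    refine Integrable.mono' (integrable_const (2*C))
      ((hf.comp (hNNmeas m hm)).aestronglyMeasurable) (ae_of_all _ fun ω => ?_)
    rw [Real.norm_eq_abs]; exact hbd _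
  have hintX : ∀ (f : 𝒳 → ℝ), Measurable f → (∀ y, |f y| ≤ 2*C) →
      ∀ i, Integrable (fun ω => f (X i ω)) P := by
    intro f hf hbd i
    refine Integrable.mono' (integrable_const (2*C))
      ((hf.comp (hXmeas i)).aestronglyMeasurable) (ae_of_all _ fun ω => ?_)
    rw [Real.norm_eq_abs]; exact hbd _
  -- union bound
  have hUB : ∀ m, 1 ≤ m → ∀ (f : 𝒳 → ℝ), Measurable f → (∀ y, 0 ≤ f y) →
      (∀ y, |f y| ≤ 2*C) → ∫ ω, f (NN m ω) ∂P ≤ m * ∫ y, f y ∂μ := by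
    intro m hm f hf hf0 hbd
    have step1 : ∫ ω, f (NN m ω) ∂P ≤ ∫ ω, ∑ i ∈ Finset.range m, f (X i ω) ∂P := by
      refine integral_mono (hintNN f hf hbd m hm)
        (integrable_finset_sum _ fun i _ => hintX f hf hbd i) (fun ω => ?_)
      obtain ⟨⟨i, him, hi⟩, _⟩ := hNN m hm ω
      rw [hi]
      exact Finset.single_le_sum (f := fun j => f (X j ω)) (fun j _ => hf0 _) (Finset.mem_range.2 him)
    have step2 : ∫ ω, ∑ i ∈ Finset.range m, f (X i ω) ∂P = m * ∫ y, f y ∂μ := by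
      rw [integral_finset_sum _ fun i _ => hintX f hf hbd i]
      have : ∀ i, ∫ ω, f (X i ω) ∂P = ∫ y, f y ∂μ := by
        intro i
        rw [← hXdist i, integral_map (hXmeas i).aemeasurable hf.aestronglyMeasurable]
      simp only [this, Finset.sum_const, Finset.card_range, nsmul_eq_mul]
    exact step1.trans step2.le
  -- partition identity
  have hpart : ∀ (r : ℝ) (z : 𝒳), g z =
      (Metric.ball x r).indicator g z + (Metric.sphere x r).indicator g z +
      ((Metric.closedBall x r)ᶜ).indicator g z := by
    intro r z
    rcases lt_trichotomy (dist z x) r with h | h | h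
    · rw [Set.indicator_of_mem (Metric.mem_ball.2 h),
        Set.indicator_of_notMem (by simp [Metric.mem_sphere]; linarith),
        Set.indicator_of_notMem (by simp [Metric.mem_closedBall]; linarith)]
      ring
    · rw [Set.indicator_of_notMem (by simp [Metric.mem_ball]; linarith),
        Set.indicator_of_mem (Metric.mem_sphere.2 h),
        Set.indicator_of_notMem (by simp [Metric.mem_closedBall]; linarith)]
      ring
    · rw [Set.indicator_of_notMem (by simp [Metric.mem_ball]; linarith),
        Set.indicator_of_notMem (by simp [Metric.mem_sphere]; linarith),
        Set.indicator_of_mem (by simp [Metric.mem_closedBall]; linarith)]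
      ring
  -- indicator measurability and bounds
  have hindmeas : ∀ (s : Set 𝒳), MeasurableSet s → Measurable (s.indicator g) :=
    fun s hs => habs_meas.indicator hs
  have hindbd : ∀ (s : Set 𝒳) (y : 𝒳), |s.indicator g y| ≤ 2*C := by
    intro s y
    by_cases hy : y ∈ s
    · rw [Set.indicator_of_mem hy, abs_of_nonneg (hg0 y)]; exact habs_bd y
    · rw [Set.indicator_of_notMem hy]; simp; positivity
  have hind0 : ∀ (s : Set 𝒳) (y : 𝒳), 0 ≤ s.indicator g y :=
    fun s y => Set.indicator_nonneg (fun y _ => hg0 y) y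
  -- decomposition of the full integral
  have hdecomp : ∀ m, 1 ≤ m → ∫ ω, g (NN m ω) ∂P =
      (∫ ω, (Metric.ball x (rseq m)).indicator g (NN m ω) ∂P) +
      (∫ ω, (Metric.sphere x (rseq m)).indicator g (NN m ω) ∂P) +
      (∫ ω, ((Metric.closedBall x (rseq m))ᶜ).indicator g (NN m ω) ∂P) := by
    intro m hm
    have : (fun ω => g (NN m ω)) = fun ω =>
        (Metric.ball x (rseq m)).indicator g (NN m ω) +
        (Metric.sphere x (rseq m)).indicator g (NN m ω) +
        ((Metric.closedBall x (rseq m))ᶜ).indicator g (NN m ω) :=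
      funext fun ω => hpart (rseq m) (NN m ω)
    have i1 := hintNN ((Metric.ball x (rseq m)).indicator g)
      (hindmeas _ measurableSet_ball) (hindbd _) m hm
    have i2 := hintNN ((Metric.sphere x (rseq m)).indicator g)
      (hindmeas _ Metric.isClosed_sphere.measurableSet) (hindbd _) m hm
    have i3 := hintNN (((Metric.closedBall x (rseq m))ᶜ).indicator g)
      (hindmeas _ measurableSet_closedBall.compl) (hindbd _) m hm
    have i12 : Integrable (fun ω => (Metric.ball x (rseq m)).indicator g (NN m ω) +
        (Metric.sphere x (rseq m)).indicator g (NN m ω)) P := i1.add i2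
    rw [this, integral_add i12 i3, integral_add i1 i2]
  -- key algebraic identities
  have hkey1 : ∀ r : ℝ, 0 < r → I r = M r * (I r / ν r) ^ (1-α) := by
    intro r hr
    have hIp : 0 < I r := hnontriv r hr
    have hνp : 0 < ν r := hνpos r hr
    rw [hM]
    exact key1' hIp hνp
  have hkey2 : ∀ r : ℝ, 0 < r → M r = (I r / ν r) ^ α * ν r := by
    intro r hr
    have hIp : 0 < I r := hnontriv r hr
    have hνp : 0 < ν r := hνpos r hr
    rw [hM]
    exact key2' hIp hνp
  -- the ball term tends to zero
  have hBall : Tendsto (fun m : ℕ =>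
      ∫ ω, (Metric.ball x (rseq m)).indicator g (NN m ω) ∂P) atTop (𝓝 0) := by
    refine tendsto_zero_of_forall_eventually_le
      (Eventually.of_forall fun m => integral_nonneg fun ω => hind0 _ _) ?_
    intro ε hε
    set ε' := (ε/2) ^ ((1:ℝ)/(1-α)) with hε'
    have hε'pos : 0 < ε' := Real.rpow_pos_of_pos (by linarith) _
    have hLε : ∀ᶠ r in 𝓝[>] (0:ℝ), I r / ν r < ε' := hLeb.eventually_lt_const hε'pos
    obtain ⟨δ, hδpos, hδ⟩ : ∃ δ > (0:ℝ), ∀ r, 0 < r → r < δ → I r / ν r < ε' := by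
      rw [eventually_nhdsWithin_iff, Metric.eventually_nhds_iff] at hLε
      obtain ⟨δ, hδpos, h⟩ := hLε
      exact ⟨δ, hδpos, fun r hr0 hrδ =>
        h (by rw [Real.dist_eq, sub_zero, abs_of_pos hr0]; exact hrδ) hr0⟩
    filter_upwards [hGood, hrto0 δ hδpos] with m hGm hmδ
    obtain ⟨hm1, hrpos, hglt, _⟩ := hGm
    have hmpos : (0:ℝ) < (m:ℝ) := by exact_mod_cast hm1
    have hclaim : ∀ r', 0 < r' → r' < rseq m → (m:ℝ) * I r' ≤ ε/2 := by
      intro r' h0 hlt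
      have hIp : 0 < I r' := hnontriv r' h0
      have hνp : 0 < ν r' := hνpos r' h0
      have hratio : I r' / ν r' < ε' := hδ r' h0 (lt_trans hlt hmδ)
      have hMlt : M r' < 1/(m:ℝ) := hglt r' h0 hlt
      set t := (I r' / ν r') ^ (1-α) with ht
      have e := hkey1 r' h0
      have ht0 : 0 ≤ t := Real.rpow_nonneg (div_nonneg hIp.le hνp.le) _
      have hmM : (m:ℝ) * M r' ≤ 1 := by
        have hmm : (m:ℝ) * (1/(m:ℝ)) = 1 := mul_one_div_cancel hmpos.ne'
        nlinarith
      have h3 : t ≤ ε' ^ (1-α) :=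
        Real.rpow_le_rpow (div_nonneg hIp.le hνp.le) hratio.le (by linarith)
      have h4 : ε' ^ (1-α) = ε/2 := by
        rw [hε', ← Real.rpow_mul (by linarith : (0:ℝ) ≤ ε/2),
          one_div_mul_cancel (by linarith : (1:ℝ)-α ≠ 0), Real.rpow_one]
      calc (m:ℝ) * I r' = ((m:ℝ) * M r') * t := by rw [e]; ring
      _ ≤ 1 * t := mul_le_mul_of_nonneg_right hmM ht0
      _ = t := one_mul t
      _ ≤ ε/2 := by rw [← h4]; exact h3
    -- pass to the open ball by monotone convergence
    have hball_int : (m:ℝ) * ∫ y in Metric.ball x (rseq m), g y ∂μ ≤ ε/2 := by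
      set q : ℕ → ℝ := fun n => rseq m * (1 - 1/((n:ℝ)+2)) with hq
      have hfrac : ∀ n : ℕ, 0 < 1 - 1/((n:ℝ)+2) := by
        intro n
        have h2 : (0:ℝ) < 1/((n:ℝ)+2) := by positivity
        have h3 : 1/((n:ℝ)+2) ≤ 1/(2:ℝ) := by
          apply one_div_le_one_div_of_le two_pos
          have : (0:ℝ) ≤ (n:ℝ) := Nat.cast_nonneg n
          linarith
        linarith
      have hq0 : ∀ n, 0 < q n := fun n => mul_pos hrpos (hfrac n)
      have hqlt : ∀ n, q n < rseq m := by
        intro n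
        have h1 : (0:ℝ) < 1/((n:ℝ)+2) := by positivity
        have h2 : q n = rseq m - rseq m * (1/((n:ℝ)+2)) := by rw [hq]; ring
        have h3 : 0 < rseq m * (1/((n:ℝ)+2)) := mul_pos hrpos h1
        linarith
      have hqmono : Monotone (fun n : ℕ => Metric.closedBall x (q n)) := by
        intro a b hab
        refine Metric.closedBall_subset_closedBall ?_
        have hcast : (a:ℝ)+2 ≤ (b:ℝ)+2 := by exact_mod_cast by omega
        have := one_div_le_one_div_of_le (by positivity : (0:ℝ) < (a:ℝ)+2) hcast
        have h2 : 1 - 1/((a:ℝ)+2) ≤ 1 - 1/((b:ℝ)+2) := by linarith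
        exact mul_le_mul_of_nonneg_left h2 hrpos.le
      have hqunion : (⋃ n, Metric.closedBall x (q n)) = Metric.ball x (rseq m) := by
        ext z
        simp only [Set.mem_iUnion, Metric.mem_closedBall, Metric.mem_ball]
        constructor
        · rintro ⟨n, hn⟩; exact lt_of_le_of_lt hn (hqlt n)
        · intro hz
          set d := dist z x with hd
          have hd0 : 0 ≤ d := dist_nonneg
          have hgap : 0 < rseq m - d := by linarith
          obtain ⟨n, hn⟩ := exists_nat_gt (rseq m / (rseq m - d))
          refine ⟨n, ?_⟩
          have h5 : rseq m < ((n:ℝ)+2) * (rseq m - d) := by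
            have := (div_lt_iff₀ hgap).1 hn
            nlinarith
          have h6 : rseq m / ((n:ℝ)+2) ≤ rseq m - d :=
            (div_le_iff₀ (by positivity)).2 (by nlinarith)
          have h7 : q n = rseq m - rseq m/((n:ℝ)+2) := by rw [hq]; ring
          rw [h7]; linarith
      have htend := tendsto_setIntegral_of_monotone
        (fun n : ℕ => measurableSet_closedBall) hqmono
        (by rw [hqunion]; exact hgint.integrableOn)
      rw [hqunion] at htend
      exact le_of_tendsto (htend.const_mul (m:ℝ))
        (Eventually.of_forall fun n => hclaim (q n) (hq0 n) (hqlt n))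
    calc ∫ ω, (Metric.ball x (rseq m)).indicator g (NN m ω) ∂P
        ≤ (m:ℝ) * ∫ y, (Metric.ball x (rseq m)).indicator g y ∂μ :=
          hUB m hm1 _ (hindmeas _ measurableSet_ball) (hind0 _) (hindbd _)
    _ = (m:ℝ) * ∫ y in Metric.ball x (rseq m), g y ∂μ := by
          rw [integral_indicator measurableSet_ball]
    _ ≤ ε/2 := hball_int
    _ ≤ ε := by linarith
  -- the outside term tends to zero
  have hOut : Tendsto (fun m : ℕ =>
      ∫ ω, ((Metric.closedBall x (rseq m))ᶜ).indicator g (NN m ω) ∂P) atTop (𝓝 0) := by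
    refine tendsto_zero_of_forall_eventually_le
      (Eventually.of_forall fun m => integral_nonneg fun ω => hind0 _ _) ?_
    intro ε hε
    -- choose K with 2C exp(-K) ≤ ε
    set K : ℝ := max 1 (Real.log (4*C/ε)) with hK
    have hKpos : 0 < K := lt_of_lt_of_le one_pos (le_max_left _ _)
    have hexpK : 2*C*Real.exp (-K) ≤ ε := by
      have h1 : Real.exp (-K) ≤ Real.exp (-(Real.log (4*C/ε))) :=
        Real.exp_le_exp.2 (neg_le_neg (le_max_right _ _))
      have h2 : Real.exp (-(Real.log (4*C/ε))) = ε/(4*C) := by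
        rw [Real.exp_neg, Real.exp_log (by positivity)]
        rw [inv_div]
      have h3 : 2*C*Real.exp (-K) ≤ 2*C*(ε/(4*C)) := by
        rw [← h2] at *
        exact mul_le_mul_of_nonneg_left h1 (by positivity)
      calc 2*C*Real.exp (-K) ≤ 2*C*(ε/(4*C)) := h3
      _ = ε/2 := by field_simp; ring
      _ ≤ ε := by linarith
    -- choose δ from the Lebesgue point property
    have hKexp : (0:ℝ) < (1/K) ^ ((1:ℝ)/α) := Real.rpow_pos_of_pos (by positivity) _
    have hLε : ∀ᶠ r in 𝓝[>] (0:ℝ), I r / ν r < (1/K) ^ ((1:ℝ)/α) :=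
      hLeb.eventually_lt_const hKexp
    obtain ⟨δ, hδpos, hδ⟩ : ∃ δ > (0:ℝ), ∀ r, 0 < r → r < δ → I r / ν r < (1/K) ^ ((1:ℝ)/α) := by
      rw [eventually_nhdsWithin_iff, Metric.eventually_nhds_iff] at hLε
      obtain ⟨δ, hδpos, h⟩ := hLε
      exact ⟨δ, hδpos, fun r hr0 hrδ =>
        h (by rw [Real.dist_eq, sub_zero, abs_of_pos hr0]; exact hrδ) hr0⟩
    filter_upwards [hGood, hrto0 (δ/2) (by linarith)] with m hGm hmδ
    obtain ⟨hm1, hrpos, _, hgge⟩ := hGm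
    have hmpos : (0:ℝ) < (m:ℝ) := by exact_mod_cast hm1
    -- ν r ≥ K/m for r slightly above rseq m
    have hclaim : ∀ r, rseq m < r → r < δ → K/(m:ℝ) ≤ ν r := by
      intro r h1 h2
      have hr0 : 0 < r := lt_trans hrpos h1
      have hIp : 0 < I r := hnontriv r hr0
      have hνp : 0 < ν r := hνpos r hr0
      have hMr : 1/(m:ℝ) ≤ M r := hgge r h1
      have hratio : I r / ν r < (1/K) ^ ((1:ℝ)/α) := hδ r hr0 h2
      have ht0 : 0 ≤ I r / ν r := div_nonneg hIp.le hνp.le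
      have hrat : (I r / ν r) ^ α ≤ 1/K := by
        calc (I r / ν r) ^ α ≤ ((1/K) ^ ((1:ℝ)/α)) ^ α :=
              Real.rpow_le_rpow ht0 hratio.le hα0.le
        _ = 1/K := by
              rw [← Real.rpow_mul (by positivity : (0:ℝ) ≤ 1/K),
                one_div_mul_cancel hα0.ne', Real.rpow_one]
      have hratpos : 0 < (I r / ν r) ^ α := Real.rpow_pos_of_pos (div_pos hIp hνp) _
      have hMform : M r = (I r / ν r) ^ α * ν r := hkey2 r hr0
      -- from 1/m ≤ M r = t * ν r with t ≤ 1/K :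
      have : 1/(m:ℝ) ≤ (1/K) * ν r := by
        calc 1/(m:ℝ) ≤ (I r / ν r) ^ α * ν r := by rw [← hMform]; exact hMr
        _ ≤ (1/K) * ν r := mul_le_mul_of_nonneg_right hrat hνp.le
      have h9 : K * (1/(m:ℝ)) ≤ K * ((1/K) * ν r) :=
        mul_le_mul_of_nonneg_left this hKpos.le
      have h10 : K * ((1/K) * ν r) = ν r := by field_simp
      calc K/(m:ℝ) = K * (1/(m:ℝ)) := by ring
      _ ≤ ν r := by rw [← h10]; exact h9
    -- continuity from above gives the bound at rseq m itself
    have hclaim2 : K/(m:ℝ) ≤ ν (rseq m) := by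
      set w : ℕ → ℝ := fun n => rseq m + (δ/2)/((n:ℝ)+1) with hw
      have hw0 : ∀ n, rseq m < w n := by
        intro n
        have : (0:ℝ) < (δ/2)/((n:ℝ)+1) := by positivity
        simp only [hw]; linarith
      have hwδ : ∀ n, w n < δ := by
        intro n
        have h1 : (δ/2)/((n:ℝ)+1) ≤ δ/2 := by
          apply div_le_self (by linarith)
          have : (0:ℝ) ≤ (n:ℝ) := Nat.cast_nonneg n
          linarith
        simp only [hw]; linarith
      have hanti : Antitone (fun n : ℕ => Metric.closedBall x (w n)) := by
        intro a b hab
        refine Metric.closedBall_subset_closedBall ?_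
        have hcast : (a:ℝ)+1 ≤ (b:ℝ)+1 := by exact_mod_cast by omega
        have hdiv : (δ/2)/((b:ℝ)+1) ≤ (δ/2)/((a:ℝ)+1) :=
          div_le_div_of_nonneg_left (by linarith) (by positivity) hcast
        simp only [hw]
        linarith
      have hinter : (⋂ n, Metric.closedBall x (w n)) = Metric.closedBall x (rseq m) := by
        ext z
        simp only [Set.mem_iInter, Metric.mem_closedBall]
        constructor
        · intro h
          refine le_of_forall_pos_le_add fun ε' hε' => ?_
          obtain ⟨n, hn⟩ := exists_nat_gt ((δ/2)/ε')
          have h1 : (δ/2)/((n:ℝ)+1) < ε' := by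
            rw [div_lt_iff₀ (by positivity)]
            rw [div_lt_iff₀ hε'] at hn
            nlinarith [Nat.cast_nonneg (α := ℝ) n]
          calc dist z x ≤ w n := h n
          _ = rseq m + (δ/2)/((n:ℝ)+1) := rfl
          _ ≤ rseq m + ε' := by linarith
        · intro h n
          calc dist z x ≤ rseq m := h
          _ ≤ w n := (hw0 n).le
      have htend := tendsto_measure_iInter_atTop
        (fun n : ℕ => (measurableSet_closedBall).nullMeasurableSet) hanti
        ⟨0, measure_ne_top μ _⟩
      rw [hinter] at htend
      have htend2 : Tendsto (fun n => ν (w n)) atTop (𝓝 (ν (rseq m))) :=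
        (ENNReal.tendsto_toReal (measure_ne_top μ _)).comp htend
      exact ge_of_tendsto' htend2 fun n => hclaim (w n) (hw0 n) (hwδ n)
    -- probability that the nearest neighbor is outside the closed ball
    set B := Metric.closedBall x (rseq m) with hB
    have hpre : MeasurableSet (NN m ⁻¹' Bᶜ) :=
      (hNNmeas m hm1) measurableSet_closedBall.compl
    have hstep1 : ∫ ω, (Bᶜ).indicator g (NN m ω) ∂P ≤
        ∫ ω, Set.indicator (NN m ⁻¹' Bᶜ) (fun _ => 2*C) ω ∂P := by
      refine integral_mono
        (hintNN _ (hindmeas _ measurableSet_closedBall.compl) (hindbd _) m hm1)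
        ((integrable_const (2*C)).indicator hpre) fun ω => ?_
      by_cases hω : NN m ω ∈ Bᶜ
      · rw [Set.indicator_of_mem hω, Set.indicator_of_mem (by exact hω)]
        exact habs_bd _
      · rw [Set.indicator_of_notMem hω, Set.indicator_of_notMem (by exact hω)]
    have hstep2 : ∫ ω, Set.indicator (NN m ⁻¹' Bᶜ) (fun _ => 2*C) ω ∂P =
        (P (NN m ⁻¹' Bᶜ)).toReal * (2*C) := by
      rw [integral_indicator_const _ hpre, smul_eq_mul, measureReal_def]
    have hsub : NN m ⁻¹' Bᶜ ⊆ ⋂ i ∈ Finset.range m, X i ⁻¹' Bᶜ := by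
      intro ω hω
      refine Set.mem_iInter₂.2 fun j hj => ?_
      rw [Finset.mem_range] at hj
      have hle := (hNN m hm1 ω).2 j hj
      simp only [hB, Set.mem_preimage, Set.mem_compl_iff, Metric.mem_closedBall,
        not_le] at hω ⊢
      calc rseq m < dist (NN m ω) x := hω
      _ = dist x (NN m ω) := dist_comm _ _
      _ ≤ dist x (X j ω) := hle
      _ = dist (X j ω) x := dist_comm _ _
    have hprod : P (⋂ i ∈ Finset.range m, X i ⁻¹' Bᶜ) =
        ∏ i ∈ Finset.range m, P (X i ⁻¹' Bᶜ) :=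
      hXindep.meas_biInter fun i _ =>
        ⟨Bᶜ, measurableSet_closedBall.compl, rfl⟩
    have heach : ∀ i, P (X i ⁻¹' Bᶜ) = 1 - μ B := by
      intro i
      rw [← Measure.map_apply (hXmeas i) measurableSet_closedBall.compl, hXdist i,
        prob_compl_eq_one_sub measurableSet_closedBall]
    have hPbound : P (NN m ⁻¹' Bᶜ) ≤ (1 - μ B)^m := by
      calc P (NN m ⁻¹' Bᶜ) ≤ P (⋂ i ∈ Finset.range m, X i ⁻¹' Bᶜ) := measure_mono hsub
      _ = ∏ i ∈ Finset.range m, P (X i ⁻¹' Bᶜ) := hprod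
      _ = (1 - μ B)^m := by
            simp only [heach, Finset.prod_const, Finset.card_range]
    set t : ℝ := ν (rseq m) with htdef
    have ht1 : t ≤ 1 := by
      have := ENNReal.toReal_mono ENNReal.one_ne_top (prob_le_one (μ := μ) (s := B))
      simpa using this
    have ht0 : 0 ≤ t := ENNReal.toReal_nonneg
    have htoReal : ((1 - μ B)^m).toReal = (1 - t)^m := by
      rw [ENNReal.toReal_pow, ENNReal.toReal_sub_of_le prob_le_one ENNReal.one_ne_top,
        ENNReal.toReal_one]
    have hfin : (1 - μ B)^m ≠ ⊤ :=
      ENNReal.pow_ne_top (ne_top_of_le_ne_top ENNReal.one_ne_top tsub_le_self)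
    have hPreal : (P (NN m ⁻¹' Bᶜ)).toReal ≤ (1 - t)^m := by
      rw [← htoReal]
      exact ENNReal.toReal_mono hfin hPbound
    have hexp1 : (1 - t)^m ≤ Real.exp (-t)^m :=
      pow_le_pow_left₀ (by linarith) (by linarith [Real.add_one_le_exp (-t)]) m
    have hexp2 : Real.exp (-t)^m = Real.exp (-((m:ℝ)*t)) := by
      rw [← Real.exp_nat_mul]; ring_nf
    have hKmt : K ≤ (m:ℝ)*t := by
      rw [div_le_iff₀ hmpos] at hclaim2
      linarith
    have hexp3 : Real.exp (-((m:ℝ)*t)) ≤ Real.exp (-K) :=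
      Real.exp_le_exp.2 (by linarith)
    calc ∫ ω, (Bᶜ).indicator g (NN m ω) ∂P
        ≤ (P (NN m ⁻¹' Bᶜ)).toReal * (2*C) := by rw [← hstep2]; exact hstep1
    _ ≤ (1-t)^m * (2*C) := mul_le_mul_of_nonneg_right hPreal (by positivity)
    _ ≤ Real.exp (-K) * (2*C) := by
          refine mul_le_mul_of_nonneg_right ?_ (by positivity)
          calc (1-t)^m ≤ Real.exp (-t)^m := hexp1
          _ = Real.exp (-((m:ℝ)*t)) := hexp2
          _ ≤ Real.exp (-K) := hexp3
    _ ≤ ε := by linarith [hexpK]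
  -- conclude
  constructor
  · intro h1
    refine tendsto_of_tendsto_of_tendsto_of_le_of_le' tendsto_const_nhds h1 ?_ ?_
    · filter_upwards [eventually_ge_atTop 1] with m _
      exact integral_nonneg fun ω => hind0 _ _
    · filter_upwards [eventually_ge_atTop 1] with m hm
      refine integral_mono
        (hintNN _ (hindmeas _ Metric.isClosed_sphere.measurableSet) (hindbd _) m hm)
        (hintNN g habs_meas (fun y => by rw [abs_of_nonneg (hg0 y)]; exact habs_bd y) m hm)
        fun ω => ?_
      exact Set.indicator_le_self' (fun y _ => hg0 y) (NN m ω)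
  · intro h2
    have hsum := (hBall.add h2).add hOut
    norm_num at hsum
    refine hsum.congr' ?_
    filter_upwards [eventually_ge_atTop 1] with m hm
    exact (hdecomp m hm).symm
end

section
/- Let (m_j)_{j∈ℕ} be a strictly monotone sequence of natural numbers and (ρ_j)_{j∈ℕ} a sequence of strictly positive real numbers. If (i) there exists K ≥ 0 such that ℙ_X(S_{ρ_j}) ≤ K · ℙ_X(B_{ρ_j}) for all j ∈ ℕ, and (ii) m_j · ℙ_X(B̄_{ρ_j}) → ∞ as j → ∞, then 𝔼[𝟙_{S_{ρ_j}}(X^x_{m_j})·|η(X^x_{m_j}) − η(x)|] → 0 as j → ∞. -/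
open MeasureTheory Filter Topology

/-- **Lemma (vanishing sphere terms).**
In the nearest-neighbor setting, let `(m_j)` be a strictly monotone sequence of
(positive) natural numbers and `(ρ_j)` a sequence of strictly positive reals. If
(i) there is `K ≥ 0` with `μ(S_{ρ_j}) ≤ K · μ(B_{ρ_j})` for all `j`, and
(ii) `m_j · μ(B̄_{ρ_j}) → ∞`, then
`𝔼[𝟙_{S_{ρ_j}}(NN (m_j))·|η(NN (m_j)) − η(x)|] → 0` as `j → ∞`. -/
theorem stmt_6
    {𝒳 Ω : Type*} [MetricSpace 𝒳] [MeasurableSpace 𝒳] [BorelSpace 𝒳]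
    {mΩ : MeasurableSpace Ω} (P : Measure Ω) [IsProbabilityMeasure P]
    (X : ℕ → Ω → 𝒳) (μ : Measure 𝒳)
    (hXmeas : ∀ i, Measurable (X i))
    (hXindep : ProbabilityTheory.iIndepFun X P)
    (hXdist : ∀ i, P.map (X i) = μ)
    (x : 𝒳) (hsupp : ∀ r > (0 : ℝ), 0 < μ (Metric.closedBall x r))
    (η : 𝒳 → ℝ) (hηmeas : Measurable η) (C : ℝ) (hηbdd : ∀ y, |η y| ≤ C)
    (NN : ℕ → Ω → 𝒳)
    (hNNmeas : ∀ m, 1 ≤ m → Measurable (NN m))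
    (hNN : ∀ m, 1 ≤ m → ∀ ω, (∃ i < m, NN m ω = X i ω) ∧
      ∀ j < m, dist x (NN m ω) ≤ dist x (X j ω))
    (mseq : ℕ → ℕ) (hmono : StrictMono mseq) (hmpos : ∀ j, 1 ≤ mseq j)
    (ρ : ℕ → ℝ) (hρpos : ∀ j, 0 < ρ j)
    (K : ℝ) (hK : 0 ≤ K)
    (hsphere : ∀ j, (μ (Metric.sphere x (ρ j))).toReal ≤
      K * (μ (Metric.ball x (ρ j))).toReal)
    (hdiv : Tendsto
      (fun j : ℕ => (mseq j : ℝ) * (μ (Metric.closedBall x (ρ j))).toReal)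
      atTop atTop) :
    Tendsto
      (fun j : ℕ =>
        ∫ ω, Set.indicator (Metric.sphere x (ρ j)) (fun y => |η y - η x|)
          (NN (mseq j) ω) ∂P)
      atTop (𝓝 0) := by
  classical
  have hμprob : IsProbabilityMeasure μ := by
    rw [← hXdist 0]; exact Measure.isProbabilityMeasure_map (hXmeas 0).aemeasurable
  have hC0 : 0 ≤ C := (abs_nonneg _).trans (hηbdd x)
  set f : 𝒳 → ℝ := fun y => |η y - η x| with hfdef
  have hfmeas : Measurable f := (hηmeas.sub measurable_const).abs
  have hfbd : ∀ y, f y ≤ 2 * C := by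
    intro y
    calc |η y - η x| ≤ |η y| + |η x| := abs_sub _ _
      _ ≤ C + C := add_le_add (hηbdd y) (hηbdd x)
      _ = 2 * C := by ring
  have hfnn : ∀ y, 0 ≤ f y := fun y => abs_nonneg _
  have key : ∀ j, (∫ ω, Set.indicator (Metric.sphere x (ρ j)) f (NN (mseq j) ω) ∂P)
      ≤ 2 * C * K * Real.exp 1 *
        (((mseq j : ℝ) * (μ (Metric.ball x (ρ j))).toReal) *
          Real.exp (-((mseq j : ℝ) * (μ (Metric.ball x (ρ j))).toReal))) := by
    intro j
    set m := mseq j with hmdef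
    have hm : 1 ≤ m := hmpos j
    set r := ρ j with hrdef
    set S := Metric.sphere x r with hSdef
    set B := Metric.ball x r with hBdef
    set A := NN m ⁻¹' S with hAdef
    have hSmeas : MeasurableSet S := Metric.isClosed_sphere.measurableSet
    have hBmeas : MeasurableSet B := measurableSet_ball
    have hAmeas : MeasurableSet A := hNNmeas m hm hSmeas
    -- Step 1: integral ≤ 2C * P(A)
    have hint1 : Integrable (fun ω => Set.indicator S f (NN m ω)) P := by
      refine (integrable_const (2 * C)).mono' ?_ ?_
      · exact ((hfmeas.indicator hSmeas).comp (hNNmeas m hm)).aestronglyMeasurable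
      · refine Filter.Eventually.of_forall fun ω => ?_
        rw [Real.norm_eq_abs, abs_of_nonneg (Set.indicator_nonneg (fun y _ => hfnn y) _)]
        by_cases h : NN m ω ∈ S
        · rw [Set.indicator_of_mem h]; exact hfbd _
        · rw [Set.indicator_of_notMem h]; positivity
    have hstep1 : (∫ ω, Set.indicator S f (NN m ω) ∂P) ≤ 2 * C * (P A).toReal := by
      have hmono' : (∫ ω, Set.indicator S f (NN m ω) ∂P)
          ≤ ∫ ω, Set.indicator A (fun _ => 2 * C) ω ∂P := by
        refine integral_mono hint1 ((integrable_const _).indicator hAmeas) fun ω => ?_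
        by_cases h : NN m ω ∈ S
        · rw [Set.indicator_of_mem h, Set.indicator_of_mem (Set.mem_preimage.mpr h)]
          exact hfbd _
        · rw [Set.indicator_of_notMem h,
            Set.indicator_of_notMem (fun hc => h (Set.mem_preimage.mp hc))]
      rwa [integral_indicator_const _ hAmeas, smul_eq_mul, mul_comm] at hmono'
    -- Step 2: probability bound
    set g : ℕ → ℕ → Set 𝒳 := fun i k => if k = i then S else Bᶜ with hgdef
    have hsub : A ⊆ ⋃ i ∈ Finset.range m, ⋂ k ∈ Finset.range m, X k ⁻¹' g i k := by
      intro ω hω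
      obtain ⟨⟨i, hi, hieq⟩, hmin⟩ := hNN m hm ω
      refine Set.mem_biUnion (Finset.mem_range.mpr hi) ?_
      simp only [Set.mem_iInter, Set.mem_preimage]
      intro k hk
      by_cases hki : k = i
      · subst hki
        simp only [hgdef, if_pos rfl]
        rw [← hieq]
        exact hω
      · simp only [hgdef, if_neg hki]
        intro hc
        have h1 : dist x (NN m ω) ≤ dist x (X k ω) := hmin k (Finset.mem_range.mp hk)
        have h2 : dist (NN m ω) x = r := hω
        have h3 : dist (X k ω) x < r := hc
        rw [dist_comm] at h1
        rw [dist_comm x (X k ω)] at h1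
        linarith
    have hpre : ∀ k (s : Set 𝒳), MeasurableSet s → P (X k ⁻¹' s) = μ s := by
      intro k s hs
      rw [← hXdist k, Measure.map_apply (hXmeas k) hs]
    have hTi : ∀ i ∈ Finset.range m,
        P (⋂ k ∈ Finset.range m, X k ⁻¹' g i k) = μ S * (μ Bᶜ) ^ (m - 1) := by
      intro i hi
      have hmeasg : ∀ k, k ∈ Finset.range m → MeasurableSet (g i k) := by
        intro k _
        by_cases h : k = i <;> simp [hgdef, h, hSmeas, hBmeas.compl]
      rw [ProbabilityTheory.iIndepFun.measure_inter_preimage_eq_mul hXindep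
        (Finset.range m) hmeasg]
      calc ∏ k ∈ Finset.range m, P (X k ⁻¹' g i k)
          = ∏ k ∈ Finset.range m, μ (g i k) :=
            Finset.prod_congr rfl fun k hk => hpre k _ (hmeasg k hk)
        _ = μ (g i i) * ∏ k ∈ (Finset.range m).erase i, μ (g i k) :=
            (Finset.mul_prod_erase _ _ hi).symm
        _ = μ S * (μ Bᶜ) ^ (m - 1) := by
            have hcongr : ∀ k ∈ (Finset.range m).erase i, μ (g i k) = μ Bᶜ := by
              intro k hk
              simp [hgdef, Finset.ne_of_mem_erase hk]
            rw [Finset.prod_congr rfl hcongr, Finset.prod_const,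
              Finset.card_erase_of_mem hi, Finset.card_range]
            simp [hgdef]
    have hPA : P A ≤ (m : ENNReal) * (μ S * (μ Bᶜ) ^ (m - 1)) := by
      calc P A ≤ P (⋃ i ∈ Finset.range m, ⋂ k ∈ Finset.range m, X k ⁻¹' g i k) :=
            measure_mono hsub
        _ ≤ ∑ i ∈ Finset.range m, P (⋂ k ∈ Finset.range m, X k ⁻¹' g i k) :=
            measure_biUnion_finset_le _ _
        _ = ∑ _i ∈ Finset.range m, μ S * (μ Bᶜ) ^ (m - 1) :=
            Finset.sum_congr rfl hTi
        _ = (m : ENNReal) * (μ S * (μ Bᶜ) ^ (m - 1)) := by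
            rw [Finset.sum_const, Finset.card_range, nsmul_eq_mul]
    set p := (μ B).toReal with hpdef
    set s := (μ S).toReal with hsdef
    have hp0 : 0 ≤ p := ENNReal.toReal_nonneg
    have hs0 : 0 ≤ s := ENNReal.toReal_nonneg
    have hp1 : p ≤ 1 := by
      simpa using ENNReal.toReal_mono ENNReal.one_ne_top (prob_le_one (μ := μ) (s := B))
    have hcompl : (μ Bᶜ).toReal = 1 - p := by
      rw [measure_compl hBmeas (measure_ne_top μ B), measure_univ,
        ENNReal.toReal_sub_of_le prob_le_one ENNReal.one_ne_top, ENNReal.toReal_one]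
    have hPAreal : (P A).toReal ≤ (m : ℝ) * (s * (1 - p) ^ (m - 1)) := by
      have hfin : (m : ENNReal) * (μ S * (μ Bᶜ) ^ (m - 1)) ≠ ⊤ :=
        ENNReal.mul_ne_top (ENNReal.natCast_ne_top m)
          (ENNReal.mul_ne_top (measure_ne_top _ _) (ENNReal.pow_ne_top (measure_ne_top _ _)))
      have heq : ((m : ENNReal) * (μ S * (μ Bᶜ) ^ (m - 1))).toReal
          = (m : ℝ) * (s * (1 - p) ^ (m - 1)) := by
        rw [ENNReal.toReal_mul, ENNReal.toReal_mul, ENNReal.toReal_pow,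
          ENNReal.toReal_natCast, hcompl]
      rw [← heq]
      exact ENNReal.toReal_mono hfin hPA
    have hsK : s ≤ K * p := hsphere j
    have hexp : (1 - p) ^ (m - 1) ≤ Real.exp 1 * Real.exp (-((m : ℝ) * p)) := by
      have h1 : (1 - p) ^ (m - 1) ≤ (Real.exp (-p)) ^ (m - 1) :=
        pow_le_pow_left₀ (by linarith) (by linarith [Real.add_one_le_exp (-p)]) _
      have h2 : (Real.exp (-p)) ^ (m - 1) = Real.exp p * Real.exp (-((m : ℝ) * p)) := by
        rw [← Real.exp_nat_mul, ← Real.exp_add]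
        congr 1
        rw [Nat.cast_sub hm, Nat.cast_one]
        ring
      calc (1 - p) ^ (m - 1) ≤ (Real.exp (-p)) ^ (m - 1) := h1
        _ = Real.exp p * Real.exp (-((m : ℝ) * p)) := h2
        _ ≤ Real.exp 1 * Real.exp (-((m : ℝ) * p)) :=
            mul_le_mul_of_nonneg_right (Real.exp_le_exp.mpr hp1) (Real.exp_nonneg _)
    calc (∫ ω, Set.indicator S f (NN m ω) ∂P) ≤ 2 * C * (P A).toReal := hstep1
      _ ≤ 2 * C * ((m : ℝ) * (s * (1 - p) ^ (m - 1))) :=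
          mul_le_mul_of_nonneg_left hPAreal (by linarith)
      _ ≤ 2 * C * ((m : ℝ) * ((K * p) * (Real.exp 1 * Real.exp (-((m : ℝ) * p))))) := by
          refine mul_le_mul_of_nonneg_left (mul_le_mul_of_nonneg_left ?_ (Nat.cast_nonneg m))
            (by linarith)
          exact mul_le_mul hsK hexp (pow_nonneg (by linarith) _) (by positivity)
      _ = 2 * C * K * Real.exp 1 * (((m : ℝ) * p) * Real.exp (-((m : ℝ) * p))) := by ring
  -- the dominating sequence tends to 0
  have hq : ∀ j, (μ (Metric.closedBall x (ρ j))).toReal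
      ≤ (1 + K) * (μ (Metric.ball x (ρ j))).toReal := by
    intro j
    have hsub : Metric.closedBall x (ρ j) ⊆ Metric.ball x (ρ j) ∪ Metric.sphere x (ρ j) := by
      intro y hy
      rcases lt_or_eq_of_le (Metric.mem_closedBall.mp hy) with h | h
      · exact Or.inl h
      · exact Or.inr h
    have h1 : (μ (Metric.closedBall x (ρ j))).toReal
        ≤ (μ (Metric.ball x (ρ j)) + μ (Metric.sphere x (ρ j))).toReal :=
      ENNReal.toReal_mono (ENNReal.add_ne_top.mpr ⟨measure_ne_top _ _, measure_ne_top _ _⟩)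
        ((measure_mono hsub).trans (measure_union_le _ _))
    rw [ENNReal.toReal_add (measure_ne_top _ _) (measure_ne_top _ _)] at h1
    have h2 := hsphere j
    linarith
  have ha : Tendsto (fun j => (mseq j : ℝ) * (μ (Metric.ball x (ρ j))).toReal) atTop atTop := by
    refine tendsto_atTop_mono ?_ (hdiv.atTop_div_const (by linarith : (0:ℝ) < 1 + K))
    intro j
    rw [div_le_iff₀ (by linarith)]
    calc (mseq j : ℝ) * (μ (Metric.closedBall x (ρ j))).toReal
        ≤ (mseq j : ℝ) * ((1 + K) * (μ (Metric.ball x (ρ j))).toReal) :=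
          mul_le_mul_of_nonneg_left (hq j) (Nat.cast_nonneg _)
      _ = (mseq j : ℝ) * (μ (Metric.ball x (ρ j))).toReal * (1 + K) := by ring
  have hf0 : Tendsto (fun t : ℝ => t * Real.exp (-t)) atTop (𝓝 0) := by
    simpa using Real.tendsto_pow_mul_exp_neg_atTop_nhds_zero 1
  have hb : Tendsto (fun j => 2 * C * K * Real.exp 1 *
      (((mseq j : ℝ) * (μ (Metric.ball x (ρ j))).toReal) *
        Real.exp (-((mseq j : ℝ) * (μ (Metric.ball x (ρ j))).toReal)))) atTop (𝓝 0) := by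
    have := (hf0.comp ha).const_mul (2 * C * K * Real.exp 1)
    simpa using this
  exact squeeze_zero
    (fun j => integral_nonneg fun ω => Set.indicator_nonneg (fun y _ => hfnn y) _) key hb
end

section
/- Assume there exist K ≥ 0 and R > 0 such that ℙ_X(S_r) ≤ K · ℙ_X(B_r) for all r ∈ (0, R). If x is a Lebesgue point for η with respect to ℙ_X, then 𝔼[|η(X^x_m) − η(x)|] → 0 as m → ∞. -/
open MeasureTheory Filter Topology

lemma joint_law {𝒳 Ω : Type*} [MeasurableSpace 𝒳]
    {mΩ : MeasurableSpace Ω} (P : Measure Ω) [IsProbabilityMeasure P]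
    (X : ℕ → Ω → 𝒳) (μ : Measure 𝒳) [SigmaFinite μ]
    (hXmeas : ∀ i, Measurable (X i))
    (hXindep : ProbabilityTheory.iIndepFun X P)
    (hXdist : ∀ i, P.map (X i) = μ) (m : ℕ) :
    P.map (fun ω (i : Fin m) => X i ω) = Measure.pi (fun _ : Fin m => μ) := by
  symm
  apply Measure.pi_eq
  intro s hs
  classical
  set s' : ℕ → Set 𝒳 := fun i => if h : i < m then s ⟨i, h⟩ else Set.univ with hs'
  have hYmeas : Measurable (fun ω (i : Fin m) => X i ω) :=
    measurable_pi_iff.2 fun i => hXmeas i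
  rw [Measure.map_apply hYmeas (MeasurableSet.univ_pi hs)]
  have hset : (fun ω (i : Fin m) => X i ω) ⁻¹' (Set.pi Set.univ s)
      = ⋂ i ∈ Finset.range m, X i ⁻¹' s' i := by
    ext ω
    simp only [Set.mem_preimage, Set.mem_pi, Set.mem_univ, forall_true_left,
      Set.mem_iInter, Finset.mem_range, hs']
    constructor
    · intro h i hi
      simp only [hi, dif_pos]
      exact h ⟨i, hi⟩
    · intro h i
      have := h i i.isLt
      simpa [i.isLt] using this
  rw [hset, hXindep.measure_inter_preimage_eq_mul (Finset.range m)
    (fun i hi => by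
      simp only [hs']
      split
      · exact hs _
      · exact MeasurableSet.univ)]
  rw [← Fin.prod_univ_eq_prod_range (fun i => P (X i ⁻¹' s' i)) m]
  apply Finset.prod_congr rfl
  intro i _
  have : s' (i : ℕ) = s i := by simp [hs', i.isLt]
  rw [this, ← Measure.map_apply (hXmeas i) (hs i), hXdist i]


lemma stepD {𝒳 : Type*} [MetricSpace 𝒳] [MeasurableSpace 𝒳] [BorelSpace 𝒳]
    (μ : Measure 𝒳) [IsProbabilityMeasure μ] (x : 𝒳) (g : 𝒳 → ℝ) (B : ℝ)
    (hg : Measurable g) (hg0 : ∀ y, 0 ≤ g y) (hgB : ∀ y, g y ≤ B)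
    (δ : ℝ) (k : ℕ) (i : Fin (k + 2)) :
    ∫ y', ((Metric.closedBall x δ).indicator g (y' i) *
        ∏ j : Fin (k + 1), (if dist x (y' i) ≤ dist x (y' (i.succAbove j)) then (1:ℝ) else 0))
      ∂(Measure.pi fun _ : Fin (k+2) => μ)
    = ∫ y, (Metric.closedBall x δ).indicator g y *
        ((μ ((Metric.ball x (dist x y))ᶜ)).toReal) ^ (k+1) ∂μ := by
  classical
  set hfun := (Metric.closedBall x δ).indicator g with hhfun
  have hfmeas : Measurable hfun := hg.indicator Metric.isClosed_closedBall.measurableSet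
  have hfbd : ∀ y, |hfun y| ≤ |B| := by
    intro y
    rw [hhfun]
    rcases Set.indicator_eq_zero_or_self (Metric.closedBall x δ) g y with h | h <;> rw [h]
    · simp
    · rw [abs_of_nonneg (hg0 y)]; exact (hgB y).trans (le_abs_self B)
  set F : 𝒳 × (Fin (k+1) → 𝒳) → ℝ := fun p =>
    hfun p.1 * ∏ j : Fin (k+1), (if dist x p.1 ≤ dist x (p.2 j) then (1:ℝ) else 0) with hF
  have hmp := measurePreserving_piFinSuccAbove (fun _ : Fin (k+2) => μ) i
  set e := MeasurableEquiv.piFinSuccAbove (fun _ : Fin (k+2) => 𝒳) i with he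
  have key : ∀ y' : Fin (k+2) → 𝒳,
      hfun (y' i) * ∏ j : Fin (k + 1),
        (if dist x (y' i) ≤ dist x (y' (i.succAbove j)) then (1:ℝ) else 0) = F (e y') := by
    intro y'; rfl
  simp_rw [key]
  rw [hmp.integral_comp' F]
  -- measurability of F
  have hFmeas : Measurable F := by
    apply (hfmeas.comp measurable_fst).mul
    apply Finset.measurable_prod
    intro j _
    have h1 : Measurable fun p : 𝒳 × (Fin (k+1) → 𝒳) => dist x p.1 :=
      (Continuous.dist continuous_const continuous_id).measurable.comp measurable_fst
    have h2 : Measurable fun p : 𝒳 × (Fin (k+1) → 𝒳) => dist x (p.2 j) :=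
      (Continuous.dist continuous_const continuous_id).measurable.comp
        (measurable_snd.eval)
    exact Measurable.ite (measurableSet_le h1 h2) measurable_const measurable_const
  have hFint : Integrable F (μ.prod (Measure.pi fun _ : Fin (k+1) => μ)) := by
    refine (integrable_const |B|).mono' hFmeas.aestronglyMeasurable (ae_of_all _ ?_)
    intro p
    rw [hF]
    simp only [norm_mul, Real.norm_eq_abs]
    have h0 : (0:ℝ) ≤ ∏ j : Fin (k+1), (if dist x p.1 ≤ dist x (p.2 j) then (1:ℝ) else 0) :=
      Finset.prod_nonneg fun j _ => by split <;> norm_num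
    have h1 : (∏ j : Fin (k+1), (if dist x p.1 ≤ dist x (p.2 j) then (1:ℝ) else 0)) ≤ 1 :=
      Finset.prod_le_one (fun j _ => by split <;> norm_num) (fun j _ => by split <;> norm_num)
    calc |hfun p.1| * |∏ j : Fin (k+1), (if dist x p.1 ≤ dist x (p.2 j) then (1:ℝ) else 0)|
        ≤ |B| * 1 :=
          mul_le_mul (hfbd _) (by rw [abs_of_nonneg h0]; exact h1) (abs_nonneg _) (abs_nonneg _)
      _ = |B| := mul_one _
  rw [integral_prod F hFint]
  congr 1
  funext y
  rw [hF]
  simp only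
  rw [integral_const_mul]
  congr 1
  have : (fun z : Fin (k+1) → 𝒳 => ∏ j : Fin (k+1), (if dist x y ≤ dist x (z j) then (1:ℝ) else 0))
      = Set.indicator (Set.pi Set.univ fun _ : Fin (k+1) => (Metric.ball x (dist x y))ᶜ)
        (1 : (Fin (k+1) → 𝒳) → ℝ) := by
    funext z
    by_cases h : ∀ j : Fin (k+1), dist x y ≤ dist x (z j)
    · rw [Set.indicator_of_mem, Pi.one_apply]
      · exact Finset.prod_eq_one fun j _ => if_pos (h j)
      · intro j _
        simp only [Set.mem_compl_iff, Metric.mem_ball, not_lt]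
        rw [dist_comm (z j) x]; exact h j
    · push_neg at h
      obtain ⟨j, hj⟩ := h
      rw [Set.indicator_of_notMem]
      · exact Finset.prod_eq_zero (Finset.mem_univ j) (if_neg (not_le.2 hj))
      · intro hmem
        have := hmem j (Set.mem_univ j)
        simp only [Set.mem_compl_iff, Metric.mem_ball, not_lt] at this
        rw [dist_comm (z j) x] at this
        exact absurd this (not_le.2 hj)
  rw [this, integral_indicator_one (MeasurableSet.univ_pi fun _ =>
    Metric.isOpen_ball.measurableSet.compl), measureReal_def, Measure.pi_pi]
  rw [Finset.prod_const, ← ENNReal.toReal_pow]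
  simp


lemma pow_eq_integral (u : ℝ) (h0 : 0 ≤ u) (h1 : u ≤ 1) (k : ℕ) :
    (1-u)^(k+1) = ∫ t in Set.Ioc (0:ℝ) 1,
      Set.indicator (Set.Ioc u 1) (fun t => (k+1)*(1-t)^k) t := by
  rw [integral_indicator measurableSet_Ioc, Measure.restrict_restrict measurableSet_Ioc]
  have hs : Set.Ioc u 1 ∩ Set.Ioc 0 1 = Set.Ioc u 1 := by
    apply Set.inter_eq_self_of_subset_left
    exact Set.Ioc_subset_Ioc_left h0
  rw [hs, ← intervalIntegral.integral_of_le h1]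
  rw [intervalIntegral.integral_const_mul]
  rw [intervalIntegral.integral_comp_sub_left (fun s => s^k) 1]
  rw [integral_pow]
  have : (1:ℝ) - 1 = 0 := by norm_num
  rw [this]
  field_simp
  simp

lemma beta_int (k : ℕ) :
    ∫ t in Set.Ioc (0:ℝ) 1, t*(1-t)^k = 1/((k+1)*(k+2)) := by
  rw [← intervalIntegral.integral_of_le zero_le_one]
  have : ∀ t : ℝ, t*(1-t)^k = (1-t)^k - (1-t)^(k+1) := by
    intro t; ring
  rw [intervalIntegral.integral_congr (g := fun t => (1-t)^k - (1-t)^(k+1)) (fun t _ => this t)]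
  have i1 : IntervalIntegrable (fun t : ℝ => (1-t)^k) MeasureTheory.volume 0 1 :=
    Continuous.intervalIntegrable (by continuity) 0 1
  have i2 : IntervalIntegrable (fun t : ℝ => (1-t)^(k+1)) MeasureTheory.volume 0 1 :=
    Continuous.intervalIntegrable (by continuity) 0 1
  rw [intervalIntegral.integral_sub i1 i2]
  rw [intervalIntegral.integral_comp_sub_left (fun s => s^k) 1,
    intervalIntegral.integral_comp_sub_left (fun s => s^(k+1)) 1]
  simp only [sub_self, sub_zero, integral_pow, one_pow]
  push_cast
  field_simp
  ring_nf

lemma stepE {𝒳 : Type*} [MeasurableSpace 𝒳] (μ : Measure 𝒳) [IsProbabilityMeasure μ]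
    (h : 𝒳 → ℝ) (B : ℝ) (hBnn : 0 ≤ B) (hmeas : Measurable h) (h0 : ∀ y, 0 ≤ h y) (hB : ∀ y, h y ≤ B)
    (u : 𝒳 → ℝ) (humeas : Measurable u) (hu0 : ∀ y, 0 ≤ u y) (hu1 : ∀ y, u y ≤ 1)
    (c : ℝ) (hc : 0 ≤ c)
    (key : ∀ t ∈ Set.Ioc (0:ℝ) 1, ∫ y in {y | u y < t}, h y ∂μ ≤ c * t)
    (k : ℕ) :
    ∫ y, h y * (1 - u y)^(k+1) ∂μ ≤ c / (k+2) := by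
  set ν := MeasureTheory.volume.restrict (Set.Ioc (0:ℝ) 1) with hν
  haveI : IsFiniteMeasure ν := by
    constructor
    rw [hν, Measure.restrict_apply_univ, Real.volume_Ioc]
    exact ENNReal.ofReal_lt_top
  set W : 𝒳 × ℝ → ℝ := fun p =>
    h p.1 * Set.indicator (Set.Ioc (u p.1) 1) (fun t => ((k:ℝ)+1)*(1-t)^k) p.2 with hW
  -- measurability of W
  have hWmeas : Measurable W := by
    apply (hmeas.comp measurable_fst).mul
    have : (fun p : 𝒳 × ℝ => Set.indicator (Set.Ioc (u p.1) 1)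
        (fun t => ((k:ℝ)+1)*(1-t)^k) p.2)
        = fun p : 𝒳 × ℝ => if u p.1 < p.2 ∧ p.2 ≤ 1 then ((k:ℝ)+1)*(1-p.2)^k else 0 := by
      funext p
      rw [Set.indicator_apply]
      congr 1
    rw [this]
    refine Measurable.ite ?_ ?_ measurable_const
    · exact MeasurableSet.inter
        (measurableSet_lt (humeas.comp measurable_fst) measurable_snd)
        (measurableSet_le measurable_snd measurable_const)
    · exact (measurable_const.mul
        (((measurable_const.sub measurable_snd)).pow_const k))
  have hWbd : ∀ p, |W p| ≤ B * ((k:ℝ)+1) := by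
    intro p
    rw [hW]
    simp only [abs_mul]
    have hind : |Set.indicator (Set.Ioc (u p.1) 1) (fun t => ((k:ℝ)+1)*(1-t)^k) p.2|
        ≤ (k:ℝ)+1 := by
      by_cases hm : p.2 ∈ Set.Ioc (u p.1) 1
      · rw [Set.indicator_of_mem hm]
        obtain ⟨hm1, hm2⟩ := hm
        have ht0 : (0:ℝ) ≤ 1 - p.2 := by linarith
        have ht1 : 1 - p.2 ≤ 1 := by
          have := (hu0 p.1).trans hm1.le
          linarith
        rw [abs_mul, abs_of_nonneg (pow_nonneg ht0 k)]
        have : (1 - p.2)^k ≤ 1 := pow_le_one₀ ht0 ht1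
        calc |(k:ℝ)+1| * (1-p.2)^k ≤ |(k:ℝ)+1| * 1 :=
              mul_le_mul_of_nonneg_left this (abs_nonneg _)
          _ = (k:ℝ)+1 := by rw [mul_one, abs_of_nonneg]; positivity
      · rw [Set.indicator_of_notMem hm]
        simp; positivity
    exact mul_le_mul (by rw [abs_of_nonneg (h0 _)]; exact hB _) hind (abs_nonneg _) hBnn
  have hWint : Integrable W (μ.prod ν) := by
    refine (integrable_const (B * ((k:ℝ)+1))).mono' hWmeas.aestronglyMeasurable
      (ae_of_all _ fun p => ?_)
    rw [Real.norm_eq_abs]; exact hWbd p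
  -- rewrite LHS
  have hLHS : ∫ y, h y * (1 - u y)^(k+1) ∂μ = ∫ y, ∫ t, W (y, t) ∂ν ∂μ := by
    congr 1
    funext y
    rw [pow_eq_integral (u y) (hu0 y) (hu1 y) k, hW]
    simp only
    rw [← integral_const_mul]
  rw [hLHS, MeasureTheory.integral_integral_swap hWint]
  -- bound the t-integral
  have hinner : ∀ t ∈ Set.Ioc (0:ℝ) 1, ∫ y, W (y, t) ∂μ ≤ c * (((k:ℝ)+1) * (t * (1-t)^k)) := by
    intro t ⟨ht0, ht1⟩
    have heq : (fun y => W (y, t))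
        = fun y => (((k:ℝ)+1)*(1-t)^k) * Set.indicator {y | u y < t} h y := by
      funext y
      rw [hW]
      simp only
      by_cases hlt : u y < t
      · rw [Set.indicator_of_mem (Set.mem_Ioc.2 ⟨hlt, ht1⟩),
          Set.indicator_of_mem (by exact hlt)]
        ring
      · rw [Set.indicator_of_notMem (fun hm => hlt (Set.mem_Ioc.1 hm).1),
          Set.indicator_of_notMem (by exact hlt)]
        ring
    rw [heq, integral_const_mul, integral_indicator (measurableSet_lt humeas measurable_const)]
    have hfac : (0:ℝ) ≤ ((k:ℝ)+1)*(1-t)^k :=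
      mul_nonneg (by positivity) (pow_nonneg (by linarith) k)
    calc ((k:ℝ)+1)*(1-t)^k * ∫ y in {y | u y < t}, h y ∂μ
        ≤ ((k:ℝ)+1)*(1-t)^k * (c * t) :=
          mul_le_mul_of_nonneg_left (key t ⟨ht0, ht1⟩) hfac
      _ = c * (((k:ℝ)+1) * (t * (1-t)^k)) := by ring
  have hW0 : ∀ p : 𝒳 × ℝ, 0 ≤ W p := by
    intro p
    rw [hW]
    apply mul_nonneg (h0 _)
    by_cases hm : p.2 ∈ Set.Ioc (u p.1) 1
    · rw [Set.indicator_of_mem hm]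
      exact mul_nonneg (by positivity) (pow_nonneg (by linarith [hm.2]) k)
    · rw [Set.indicator_of_notMem hm]
  have hrhsint : Integrable (fun t : ℝ => c * (((k:ℝ)+1) * (t * (1-t)^k))) ν := by
    rw [hν, ← IntegrableOn]
    apply Continuous.integrableOn_Ioc
    fun_prop
  calc ∫ t, (∫ y, W (y, t) ∂μ) ∂ν
      ≤ ∫ t, c * (((k:ℝ)+1) * (t * (1-t)^k)) ∂ν := by
        apply integral_mono_of_nonneg
        · exact ae_of_all _ fun t => integral_nonneg fun y => hW0 (y, t)
        · exact hrhsint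
        · rw [hν]
          exact (ae_restrict_iff' measurableSet_Ioc).2 (ae_of_all _ fun t ht => hinner t ht)
    _ = c / (k+2) := by
        rw [integral_const_mul, integral_const_mul, hν, beta_int k]
        have hk1 : ((k:ℝ)+1) ≠ 0 := by positivity
        have hk2 : ((k:ℝ)+2) ≠ 0 := by positivity
        field_simp


lemma keyLemma {𝒳 : Type*} [MetricSpace 𝒳] [MeasurableSpace 𝒳] [BorelSpace 𝒳]
    (μ : Measure 𝒳) [IsProbabilityMeasure μ] (x : 𝒳)
    (g : 𝒳 → ℝ) (B : ℝ) (hBnn : 0 ≤ B) (hg : Measurable g)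
    (hg0 : ∀ y, 0 ≤ g y) (hgB : ∀ y, g y ≤ B)
    (hatom : μ {x} = 0)
    (K : ℝ) (hK : 0 ≤ K) (R : ℝ) (hR : 0 < R)
    (hcond : ∀ r ∈ Set.Ioo (0 : ℝ) R,
      (μ (Metric.sphere x r)).toReal ≤ K * (μ (Metric.ball x r)).toReal)
    (δ : ℝ) (hδ0 : 0 < δ) (hδR : δ < R) (ε' : ℝ) (hε' : 0 ≤ ε')
    (hG : ∀ r ∈ Set.Ioc (0:ℝ) δ,
      ∫ y in Metric.closedBall x r, g y ∂μ ≤ ε' * (μ (Metric.closedBall x r)).toReal)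
    (t : ℝ) (ht : t ∈ Set.Ioc (0:ℝ) 1) :
    ∫ y in {y | (μ (Metric.ball x (dist x y))).toReal < t},
      (Metric.closedBall x δ).indicator g y ∂μ ≤ ε' * (1+K) * t := by
  obtain ⟨ht0, ht1⟩ := ht
  set u : 𝒳 → ℝ := fun y => (μ (Metric.ball x (dist x y))).toReal with hu
  set S := {r : ℝ | 0 ≤ r ∧ r ≤ δ ∧ (μ (Metric.ball x r)).toReal < t} with hS
  have h0S : (0:ℝ) ∈ S := by
    refine ⟨le_refl _, hδ0.le, ?_⟩
    simp [Metric.ball_zero, ht0]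
  have hbdd : BddAbove S := ⟨δ, fun r hr => hr.2.1⟩
  set ρ := sSup S with hρ
  have hρ0 : 0 ≤ ρ := le_csSup hbdd h0S
  have hρδ : ρ ≤ δ := csSup_le ⟨0, h0S⟩ fun r hr => hr.2.1
  have hgint : Integrable g μ :=
    (integrable_const B).mono' hg.aestronglyMeasurable
      (ae_of_all _ fun y => by rw [Real.norm_eq_abs, abs_of_nonneg (hg0 y)]; exact hgB y)
  -- reduce to integral over closed ball of radius ρ
  have hred : ∫ y in {y | u y < t}, (Metric.closedBall x δ).indicator g y ∂μ
      ≤ ∫ y in Metric.closedBall x ρ, g y ∂μ := by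
    rw [setIntegral_indicator Metric.isClosed_closedBall.measurableSet]
    apply setIntegral_mono_set hgint.integrableOn
      (ae_of_all _ fun y => hg0 y) (HasSubset.Subset.eventuallyLE ?_)
    intro y hy
    obtain ⟨hyu, hyδ⟩ := hy
    have : dist x y ∈ S := ⟨dist_nonneg, by rwa [dist_comm, ← Metric.mem_closedBall], hyu⟩
    have hdy : dist x y ≤ ρ := le_csSup hbdd this
    rw [Metric.mem_closedBall, dist_comm]
    exact hdy
  rcases eq_or_lt_of_le hρ0 with hρeq | hρpos
  · -- ρ = 0 : ball is {x}, measure zero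
    rw [← hρeq] at hred
    have hcb : μ (Metric.closedBall x 0) = 0 := by
      rw [Metric.closedBall_zero]; exact hatom
    have : ∫ y in Metric.closedBall x 0, g y ∂μ = 0 := by
      rw [Measure.restrict_eq_zero.2 hcb, integral_zero_measure]
    refine le_trans hred (le_trans this.le ?_)
    positivity
  · -- ρ > 0
    have hball_le : μ (Metric.ball x ρ) ≤ ENNReal.ofReal t := by
      set s : ℕ → ℝ := fun n => ρ - ρ/(n+2) with hs
      have hsn : ∀ n, s n ∈ S := by
        intro n
        have h2 : (0:ℝ) < (n:ℝ) + 2 := by positivity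
        have hlt : s n < ρ := by
          rw [hs]; simp only
          have : 0 < ρ/((n:ℝ)+2) := by positivity
          linarith
        obtain ⟨r, hrS, hrlt⟩ := exists_lt_of_lt_csSup ⟨0, h0S⟩ hlt
        refine ⟨?_, le_trans hlt.le hρδ, ?_⟩
        · rw [hs]; simp only
          have : ρ/((n:ℝ)+2) ≤ ρ := by
            rw [div_le_iff₀ h2]; nlinarith
          linarith
        · calc (μ (Metric.ball x (s n))).toReal
              ≤ (μ (Metric.ball x r)).toReal := by
                apply ENNReal.toReal_mono (measure_ne_top μ _)
                exact measure_mono (Metric.ball_subset_ball hrlt.le)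
            _ < t := hrS.2.2
      have hcover : Metric.ball x ρ ⊆ ⋃ n : ℕ, Metric.ball x (s n) := by
        intro y hy
        rw [Metric.mem_ball] at hy
        have hd : 0 < ρ - dist y x := by linarith
        obtain ⟨n, hn⟩ := exists_nat_gt (ρ/(ρ - dist y x))
        refine Set.mem_iUnion.2 ⟨n, ?_⟩
        rw [Metric.mem_ball, hs]
        simp only
        have h2 : (0:ℝ) < (n:ℝ) + 2 := by positivity
        have : ρ/((n:ℝ)+2) < ρ - dist y x := by
          rw [div_lt_iff₀ h2]
          have hρpos' : (0:ℝ) < ρ := hρpos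
          have : ρ / (ρ - dist y x) < (n:ℝ) := hn
          rw [div_lt_iff₀ hd] at this
          nlinarith [dist_nonneg (x := y) (y := x)]
        linarith
      have hmono : Monotone fun n : ℕ => Metric.ball x (s n) := by
        intro a b hab
        apply Metric.ball_subset_ball
        rw [hs]; simp only
        have : ρ/((b:ℝ)+2) ≤ ρ/((a:ℝ)+2) := by
          apply div_le_div_of_nonneg_left hρpos.le (by positivity)
          exact_mod_cast by exact_mod_cast add_le_add_left (Nat.cast_le.2 hab) 2
        linarith
      calc μ (Metric.ball x ρ) ≤ μ (⋃ n : ℕ, Metric.ball x (s n)) := measure_mono hcover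
        _ = ⨆ n, μ (Metric.ball x (s n)) := (hmono.directed_le).measure_iUnion
        _ ≤ ENNReal.ofReal t := by
            apply iSup_le
            intro n
            rw [ENNReal.le_ofReal_iff_toReal_le (measure_ne_top μ _) ht0.le]
            exact (hsn n).2.2.le
    have hballt : (μ (Metric.ball x ρ)).toReal ≤ t :=
      ENNReal.toReal_le_of_le_ofReal ht0.le hball_le
    have hFρ : (μ (Metric.closedBall x ρ)).toReal ≤ (1+K)*t := by
      have hsub : μ (Metric.closedBall x ρ) ≤ μ (Metric.ball x ρ) + μ (Metric.sphere x ρ) := by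
        rw [← Metric.ball_union_sphere]
        exact measure_union_le _ _
      have h1 : (μ (Metric.closedBall x ρ)).toReal
          ≤ (μ (Metric.ball x ρ)).toReal + (μ (Metric.sphere x ρ)).toReal := by
        rw [← ENNReal.toReal_add (measure_ne_top μ _) (measure_ne_top μ _)]
        exact ENNReal.toReal_mono (by
          exact ENNReal.add_ne_top.2 ⟨measure_ne_top μ _, measure_ne_top μ _⟩) hsub
      have h2 : (μ (Metric.sphere x ρ)).toReal ≤ K * t := by
        calc (μ (Metric.sphere x ρ)).toReal
            ≤ K * (μ (Metric.ball x ρ)).toReal := hcond ρ ⟨hρpos, lt_of_le_of_lt hρδ hδR⟩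
          _ ≤ K * t := mul_le_mul_of_nonneg_left hballt hK
      nlinarith
    calc ∫ y in {y | u y < t}, (Metric.closedBall x δ).indicator g y ∂μ
        ≤ ∫ y in Metric.closedBall x ρ, g y ∂μ := hred
      _ ≤ ε' * (μ (Metric.closedBall x ρ)).toReal := hG ρ ⟨hρpos, hρδ⟩
      _ ≤ ε' * ((1+K)*t) := mul_le_mul_of_nonneg_left hFρ hε'
      _ = ε' * (1+K) * t := by ring


/-- **Theorem (Lebesgue ⟹ NN under the relaxed measure-continuity condition).**
In the nearest-neighbor setting with the non-triviality assumptions, if there exist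
`K ≥ 0` and `R > 0` with `μ(S_r) ≤ K · μ(B_r)` for all `r ∈ (0, R)`, and `x` is a
Lebesgue point for `η` with respect to the common distribution `μ`, then
`𝔼[|η(NN m) − η(x)|] → 0` as `m → ∞`. -/
theorem stmt_7
    {𝒳 Ω : Type*} [MetricSpace 𝒳] [MeasurableSpace 𝒳] [BorelSpace 𝒳]
    {mΩ : MeasurableSpace Ω} (P : Measure Ω) [IsProbabilityMeasure P]
    (X : ℕ → Ω → 𝒳) (μ : Measure 𝒳)
    (hXmeas : ∀ i, Measurable (X i))
    (hXindep : ProbabilityTheory.iIndepFun X P)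
    (hXdist : ∀ i, P.map (X i) = μ)
    (x : 𝒳) (hsupp : ∀ r > (0 : ℝ), 0 < μ (Metric.closedBall x r))
    (η : 𝒳 → ℝ) (hηmeas : Measurable η) (C : ℝ) (hηbdd : ∀ y, |η y| ≤ C)
    (NN : ℕ → Ω → 𝒳)
    (hNNmeas : ∀ m, 1 ≤ m → Measurable (NN m))
    (hNN : ∀ m, 1 ≤ m → ∀ ω, (∃ i < m, NN m ω = X i ω) ∧
      ∀ j < m, dist x (NN m ω) ≤ dist x (X j ω))
    (hatom : μ {x} = 0)
    (hnontriv : ∀ r > (0 : ℝ), 0 < ∫ y in Metric.closedBall x r, |η y - η x| ∂μ)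
    (K : ℝ) (hK : 0 ≤ K) (R : ℝ) (hR : 0 < R)
    (hcond : ∀ r ∈ Set.Ioo (0 : ℝ) R,
      (μ (Metric.sphere x r)).toReal ≤ K * (μ (Metric.ball x r)).toReal)
    (hLeb : Tendsto
      (fun r : ℝ =>
        (∫ y in Metric.closedBall x r, |η y - η x| ∂μ) /
          (μ (Metric.closedBall x r)).toReal)
      (𝓝[>] 0) (𝓝 0)) :
    Tendsto (fun m : ℕ => ∫ ω, |η (NN m ω) - η x| ∂P) atTop (𝓝 0) := by
  haveI hμprob : IsProbabilityMeasure μ := by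
    have := Measure.isProbabilityMeasure_map (μ := P) (hXmeas 0).aemeasurable
    rwa [hXdist 0] at this
  classical
  set g : 𝒳 → ℝ := fun y => |η y - η x| with hgdef
  have hgmeas : Measurable g := (hηmeas.sub measurable_const).abs
  have hg0 : ∀ y, 0 ≤ g y := fun y => abs_nonneg _
  have hC0 : 0 ≤ C := le_trans (abs_nonneg (η x)) (hηbdd x)
  have hgB : ∀ y, g y ≤ 2*C := by
    intro y
    rw [hgdef]
    calc |η y - η x| ≤ |η y| + |η x| := abs_sub _ _
      _ ≤ C + C := add_le_add (hηbdd y) (hηbdd x)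
      _ = 2*C := by ring
  have hB0 : (0:ℝ) ≤ 2*C := by linarith
  -- u : measurable, [0,1]
  set u : 𝒳 → ℝ := fun y => (μ (Metric.ball x (dist x y))).toReal with hudef
  have humono : Monotone fun r : ℝ => (μ (Metric.ball x r)).toReal := by
    intro r1 r2 h12
    exact ENNReal.toReal_mono (measure_ne_top μ _)
      (measure_mono (Metric.ball_subset_ball h12))
  have humeas : Measurable u :=
    (humono.measurable).comp (Continuous.dist continuous_const continuous_id).measurable
  have hu0 : ∀ y, 0 ≤ u y := fun y => ENNReal.toReal_nonneg
  have hu1 : ∀ y, u y ≤ 1 := by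
    intro y
    rw [hudef]
    simp only
    calc (μ (Metric.ball x (dist x y))).toReal ≤ (μ Set.univ).toReal :=
          ENNReal.toReal_mono (measure_ne_top μ _) (measure_mono (Set.subset_univ _))
      _ = 1 := by simp
  rw [Metric.tendsto_atTop]
  intro ε hε
  have hK1 : (0:ℝ) < 1 + K := by linarith
  set ε' : ℝ := ε / (2*(1+K)) with hε'def
  have hε'pos : 0 < ε' := by positivity
  -- get δ
  have hev : ∀ᶠ r in 𝓝[>] (0:ℝ),
      (∫ y in Metric.closedBall x r, |η y - η x| ∂μ) /
        (μ (Metric.closedBall x r)).toReal < ε' := hLeb.eventually (gt_mem_nhds hε'pos)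
  obtain ⟨δ', hδ'mem, hδ'sub⟩ := mem_nhdsGT_iff_exists_Ioc_subset.1 hev
  have hδ'pos : 0 < δ' := hδ'mem
  set δ : ℝ := min δ' (R/2) with hδdef
  have hδ0 : 0 < δ := lt_min hδ'pos (by linarith)
  have hδR : δ < R := lt_of_le_of_lt (min_le_right _ _) (by linarith)
  have hG : ∀ r ∈ Set.Ioc (0:ℝ) δ,
      ∫ y in Metric.closedBall x r, g y ∂μ ≤ ε' * (μ (Metric.closedBall x r)).toReal := by
    intro r ⟨hr0, hrδ⟩
    have hmem : r ∈ Set.Ioc (0:ℝ) δ' := ⟨hr0, hrδ.trans (min_le_left _ _)⟩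
    have hlt := hδ'sub hmem
    have hFpos : 0 < (μ (Metric.closedBall x r)).toReal :=
      ENNReal.toReal_pos (hsupp r hr0).ne' (measure_ne_top μ _)
    rw [Set.mem_setOf_eq, div_lt_iff₀ hFpos] at hlt
    exact hlt.le
  set a : ℝ := (μ (Metric.closedBall x δ)).toReal with hadef
  have ha0 : 0 < a := ENNReal.toReal_pos (hsupp δ hδ0).ne' (measure_ne_top μ _)
  have ha1 : a ≤ 1 := by
    rw [hadef]
    calc (μ (Metric.closedBall x δ)).toReal ≤ (μ Set.univ).toReal :=
          ENNReal.toReal_mono (measure_ne_top μ _) (measure_mono (Set.subset_univ _))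
      _ = 1 := by simp
  set c : ℝ := ε' * (1+K) with hcdef
  have hc : 0 ≤ c := by positivity
  have hcε : c = ε/2 := by
    rw [hcdef, hε'def]; field_simp
  -- the key estimate
  have key : ∀ t ∈ Set.Ioc (0:ℝ) 1,
      ∫ y in {y | u y < t}, (Metric.closedBall x δ).indicator g y ∂μ ≤ c * t := by
    intro t ht
    exact keyLemma μ x g (2*C) hB0 hgmeas hg0 hgB hatom K hK R hR hcond δ hδ0 hδR ε'
      hε'pos.le hG t ht
  -- per-m bound
  have main : ∀ k : ℕ, ∫ ω, g (NN (k+2) ω) ∂P ≤ c + (2*C) * (1-a)^(k+2) := by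
    intro k
    set m : ℕ := k + 2 with hm
    have hm1 : 1 ≤ m := by omega
    set Y : Ω → (Fin m → 𝒳) := fun ω i => X i ω with hY
    have hYmeas : Measurable Y := measurable_pi_iff.2 fun i => hXmeas i
    have hJL : P.map Y = Measure.pi (fun _ : Fin m => μ) :=
      joint_law P X μ hXmeas hXindep hXdist m
    set Hi : Fin m → (Fin m → 𝒳) → ℝ := fun i y' =>
      (Metric.closedBall x δ).indicator g (y' i) *
        ∏ j : Fin (k+1), (if dist x (y' i) ≤ dist x (y' (i.succAbove j)) then (1:ℝ) else 0)
      with hHi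
    have hHimeas : ∀ i, Measurable (Hi i) := by
      intro i
      apply ((hgmeas.indicator Metric.isClosed_closedBall.measurableSet).comp
        (measurable_pi_apply i)).mul
      apply Finset.measurable_prod
      intro j _
      refine Measurable.ite (measurableSet_le ?_ ?_) measurable_const measurable_const
      · exact (Continuous.dist continuous_const continuous_id).measurable.comp
          (measurable_pi_apply i)
      · exact (Continuous.dist continuous_const continuous_id).measurable.comp
          (measurable_pi_apply (i.succAbove j))
    have hHi0 : ∀ i y', 0 ≤ Hi i y' := by
      intro i y'
      apply mul_nonneg
      · exact Set.indicator_nonneg (fun y _ => hg0 y) _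
      · exact Finset.prod_nonneg fun j _ => by split <;> norm_num
    have hind_le : ∀ y, (Metric.closedBall x δ).indicator g y ≤ 2*C := by
      intro y
      by_cases hy : y ∈ Metric.closedBall x δ
      · rw [Set.indicator_of_mem hy]; exact hgB y
      · rw [Set.indicator_of_notMem hy]; exact hB0
    have hind_nn : ∀ y, 0 ≤ (Metric.closedBall x δ).indicator g y :=
      fun y => Set.indicator_nonneg (fun y _ => hg0 y) y
    have hHibd : ∀ i y', Hi i y' ≤ 2*C := by
      intro i y'
      rw [hHi]
      simp only
      calc (Metric.closedBall x δ).indicator g (y' i) *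
            ∏ j : Fin (k+1), (if dist x (y' i) ≤ dist x (y' (i.succAbove j)) then (1:ℝ) else 0)
          ≤ (2*C) * 1 := by
            apply mul_le_mul (hind_le _)
            · exact Finset.prod_le_one (fun j _ => by split <;> norm_num)
                (fun j _ => by split <;> norm_num)
            · exact Finset.prod_nonneg fun j _ => by split <;> norm_num
            · exact hB0
        _ = 2*C := mul_one _
    -- the bad event
    set T : Set Ω := ⋂ j : Fin m, X j ⁻¹' ((Metric.closedBall x δ)ᶜ) with hT
    have hTmeas : MeasurableSet T :=
      MeasurableSet.iInter fun j => (hXmeas j) Metric.isClosed_closedBall.measurableSet.compl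
    have hPT : (P T).toReal = (1-a)^m := by
      have hTset : T = Y ⁻¹' (Set.univ.pi fun _ : Fin m => (Metric.closedBall x δ)ᶜ) := by
        ext ω
        simp [hT, hY, Set.mem_pi]
      rw [hTset, ← Measure.map_apply hYmeas
        (MeasurableSet.univ_pi fun _ => Metric.isClosed_closedBall.measurableSet.compl), hJL,
        Measure.pi_pi]
      rw [Finset.prod_const, Finset.card_univ, Fintype.card_fin]
      rw [ENNReal.toReal_pow]
      congr 1
      rw [measure_compl Metric.isClosed_closedBall.measurableSet (measure_ne_top μ _), measure_univ]
      rw [ENNReal.toReal_sub_of_le prob_le_one ENNReal.one_ne_top]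
      simp [hadef]
    -- pointwise bound
    have hpt : ∀ ω, g (NN m ω) ≤
        (2*C) * T.indicator (fun _ => (1:ℝ)) ω + ∑ i : Fin m, Hi i (Y ω) := by
      intro ω
      have hsum_nn : (0:ℝ) ≤ ∑ i : Fin m, Hi i (Y ω) :=
        Finset.sum_nonneg fun i _ => hHi0 i _
      by_cases hcase : ∀ j : Fin m, X j ω ∉ Metric.closedBall x δ
      · have hωT : ω ∈ T := Set.mem_iInter.2 fun j => hcase j
        rw [Set.indicator_of_mem hωT]
        have := hgB (NN m ω)
        linarith
      · push_neg at hcase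
        obtain ⟨j0, hj0⟩ := hcase
        obtain ⟨⟨i, him, hieq⟩, hle⟩ := hNN m hm1 ω
        set i' : Fin m := ⟨i, him⟩ with hi'
        have hNNball : NN m ω ∈ Metric.closedBall x δ := by
          rw [Metric.mem_closedBall, dist_comm]
          calc dist x (NN m ω) ≤ dist x (X (j0:ℕ) ω) := hle j0 j0.isLt
            _ ≤ δ := by rw [dist_comm]; exact Metric.mem_closedBall.1 hj0
        have hHval : Hi i' (Y ω) = g (NN m ω) := by
          rw [hHi]
          simp only
          have h1 : Y ω i' = NN m ω := by rw [hY]; exact hieq.symm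
          rw [h1, Set.indicator_of_mem hNNball]
          have h2 : ∀ j : Fin (k+1),
              (if dist x (NN m ω) ≤ dist x (Y ω (i'.succAbove j)) then (1:ℝ) else 0) = 1 := by
            intro j
            rw [if_pos]
            exact hle ((i'.succAbove j) : ℕ) (i'.succAbove j).isLt
          rw [Finset.prod_congr rfl fun j _ => h2 j, Finset.prod_const_one, mul_one]
        have hHle : Hi i' (Y ω) ≤ ∑ i : Fin m, Hi i (Y ω) :=
          Finset.single_le_sum (fun i _ => hHi0 i _) (Finset.mem_univ i')
        have hind0 : (0:ℝ) ≤ (2*C) * T.indicator (fun _ => (1:ℝ)) ω := by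
          apply mul_nonneg hB0
          exact Set.indicator_nonneg (fun _ _ => zero_le_one) ω
        linarith [hHval ▸ hHle]
    -- integrate
    have hNNg_int : Integrable (fun ω => g (NN m ω)) P := by
      refine (integrable_const (2*C)).mono'
        ((hgmeas.comp (hNNmeas m hm1)).aestronglyMeasurable) (ae_of_all _ fun ω => ?_)
      rw [Real.norm_eq_abs, abs_of_nonneg (hg0 _)]
      exact hgB _
    have hHiY_int : ∀ i : Fin m, Integrable (fun ω => Hi i (Y ω)) P := by
      intro i
      refine (integrable_const (2*C)).mono'
        (((hHimeas i).comp hYmeas).aestronglyMeasurable) (ae_of_all _ fun ω => ?_)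
      rw [Real.norm_eq_abs, abs_of_nonneg (hHi0 i _)]
      exact hHibd i _
    have hind_int : Integrable (fun ω => (2*C) * T.indicator (fun _ => (1:ℝ)) ω) P := by
      apply Integrable.const_mul
      exact (integrable_const (1:ℝ)).indicator hTmeas
    have hrhs_int : Integrable (fun ω =>
        (2*C) * T.indicator (fun _ => (1:ℝ)) ω + ∑ i : Fin m, Hi i (Y ω)) P :=
      hind_int.add (integrable_finset_sum _ fun i _ => hHiY_int i)
    have hint1 : ∫ ω, g (NN m ω) ∂P ≤
        ∫ ω, ((2*C) * T.indicator (fun _ => (1:ℝ)) ω + ∑ i : Fin m, Hi i (Y ω)) ∂P :=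
      integral_mono hNNg_int hrhs_int hpt
    rw [integral_add hind_int (integrable_finset_sum _ fun i _ => hHiY_int i)] at hint1
    rw [integral_const_mul] at hint1
    have hindint : ∫ ω, T.indicator (fun _ => (1:ℝ)) ω ∂P = (P T).toReal := by
      have : T.indicator (fun _ : Ω => (1:ℝ)) = T.indicator 1 := rfl
      rw [this, integral_indicator_one hTmeas, measureReal_def]
    rw [hindint, hPT] at hint1
    rw [integral_finset_sum _ (fun i _ => hHiY_int i)] at hint1
    -- each summand
    have hsummand : ∀ i : Fin m, ∫ ω, Hi i (Y ω) ∂P ≤ c / m := by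
      intro i
      have hmap : ∫ ω, Hi i (Y ω) ∂P = ∫ y', Hi i y' ∂(Measure.pi fun _ : Fin m => μ) := by
        rw [← hJL, integral_map hYmeas.aemeasurable (by
          rw [hJL]; exact (hHimeas i).aestronglyMeasurable)]
      rw [hmap, hHi]
      have hD := stepD μ x g (2*C) hgmeas hg0 hgB δ k i
      simp only at hD ⊢
      rw [hD]
      have hcompl : ∀ y : 𝒳, (μ ((Metric.ball x (dist x y))ᶜ)).toReal = 1 - u y := by
        intro y
        rw [measure_compl Metric.isOpen_ball.measurableSet (measure_ne_top μ _), measure_univ]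
        rw [ENNReal.toReal_sub_of_le prob_le_one ENNReal.one_ne_top]
        simp [hudef]
      have : (fun y => (Metric.closedBall x δ).indicator g y *
            ((μ ((Metric.ball x (dist x y))ᶜ)).toReal) ^ (k+1))
          = fun y => (Metric.closedBall x δ).indicator g y * (1 - u y) ^ (k+1) := by
        funext y
        rw [hcompl y]
      rw [this]
      have := stepE μ ((Metric.closedBall x δ).indicator g) (2*C) hB0
        (hgmeas.indicator Metric.isClosed_closedBall.measurableSet) hind_nn hind_le
        u humeas hu0 hu1 c hc key k
      have hcast : ((m:ℕ):ℝ) = (k:ℝ)+2 := by rw [hm]; push_cast; ring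
      rw [hcast]
      exact this
    have hsum : ∑ i : Fin m, ∫ ω, Hi i (Y ω) ∂P ≤ c := by
      calc ∑ i : Fin m, ∫ ω, Hi i (Y ω) ∂P ≤ ∑ _i : Fin m, c / m :=
            Finset.sum_le_sum fun i _ => hsummand i
        _ = (m:ℝ) * (c / m) := by
            rw [Finset.sum_const, Finset.card_univ, Fintype.card_fin, nsmul_eq_mul]
        _ = c := by
            have hmne : (m:ℝ) ≠ 0 := Nat.cast_ne_zero.2 (by omega)
            rw [mul_comm, div_mul_cancel₀ _ hmne]
    calc ∫ ω, g (NN m ω) ∂P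
        ≤ 2*C * (1-a)^m + ∑ i : Fin m, ∫ ω, Hi i (Y ω) ∂P := hint1
      _ ≤ 2*C * (1-a)^m + c := by linarith
      _ = c + (2*C) * (1-a)^m := by ring
  -- conclude
  have htend : Tendsto (fun mm : ℕ => (2*C) * (1-a)^mm) atTop (𝓝 0) := by
    have h1a0 : (0:ℝ) ≤ 1 - a := by linarith
    have h1a1 : 1 - a < 1 := by linarith
    have := tendsto_pow_atTop_nhds_zero_of_lt_one h1a0 h1a1
    simpa using this.const_mul (2*C)
  have hev2 : ∀ᶠ mm : ℕ in atTop, (2*C) * (1-a)^mm < ε/2 :=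
    htend.eventually (gt_mem_nhds (by positivity))
  obtain ⟨N, hN⟩ := eventually_atTop.1 hev2
  refine ⟨max N 2, fun mm hmm => ?_⟩
  have hmm2 : 2 ≤ mm := le_trans (le_max_right _ _) hmm
  have hmmN : N ≤ mm := le_trans (le_max_left _ _) hmm
  obtain ⟨k, rfl⟩ : ∃ k, mm = k + 2 := ⟨mm - 2, by omega⟩
  have hbound := main k
  have hnn : 0 ≤ ∫ ω, g (NN (k+2) ω) ∂P := integral_nonneg fun ω => hg0 _
  rw [Real.dist_eq, sub_zero]
  have : ∫ ω, |η (NN (k+2) ω) - η x| ∂P = ∫ ω, g (NN (k+2) ω) ∂P := rfl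
  rw [this, abs_of_nonneg hnn]
  have := hN (k+2) hmmN
  calc ∫ ω, g (NN (k+2) ω) ∂P ≤ c + (2*C) * (1-a)^(k+2) := hbound
    _ < ε/2 + ε/2 := by rw [hcε]; linarith
    _ = ε := by ring
end

section
/- For every r > 0 the following are equivalent: (1) ℙ_X(S_r) > 0; (2) there exists m ∈ ℕ such that ℙ(X^x_m ∈ S_r) > 0; (3) for all m ∈ ℕ, ℙ(X^x_m ∈ S_r) > 0. Moreover, for all m ∈ ℕ, m·ℙ_X(S_r) ≥ ℙ(X^x_m ∈ S_r) ≥ (ℙ_X(S_r))^m. -/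
open MeasureTheory Filter Topology

/-- **Lemma (positivity of sphere probabilities).**
In the nearest-neighbor setting, for every `r > 0` the following are equivalent:
(1) `μ(S_r) > 0`; (2) `ℙ(NN m ∈ S_r) > 0` for some `m ≥ 1`;
(3) `ℙ(NN m ∈ S_r) > 0` for every `m ≥ 1`. Moreover, for every `m ≥ 1`,
`m·μ(S_r) ≥ ℙ(NN m ∈ S_r) ≥ (μ(S_r))^m`. -/
theorem stmt_8
    {𝒳 Ω : Type*} [MetricSpace 𝒳] [MeasurableSpace 𝒳] [BorelSpace 𝒳]
    {mΩ : MeasurableSpace Ω} (P : Measure Ω) [IsProbabilityMeasure P]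
    (X : ℕ → Ω → 𝒳) (μ : Measure 𝒳)
    (hXmeas : ∀ i, Measurable (X i))
    (hXindep : ProbabilityTheory.iIndepFun X P)
    (hXdist : ∀ i, P.map (X i) = μ)
    (x : 𝒳) (hsupp : ∀ r > (0 : ℝ), 0 < μ (Metric.closedBall x r))
    (NN : ℕ → Ω → 𝒳)
    (hNNmeas : ∀ m, 1 ≤ m → Measurable (NN m))
    (hNN : ∀ m, 1 ≤ m → ∀ ω, (∃ i < m, NN m ω = X i ω) ∧
      ∀ j < m, dist x (NN m ω) ≤ dist x (X j ω))
    (r : ℝ) (hr : 0 < r) :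
    ((0 < μ (Metric.sphere x r) ↔
        ∃ m : ℕ, 1 ≤ m ∧ 0 < P {ω | NN m ω ∈ Metric.sphere x r}) ∧
      (0 < μ (Metric.sphere x r) ↔
        ∀ m : ℕ, 1 ≤ m → 0 < P {ω | NN m ω ∈ Metric.sphere x r})) ∧
    (∀ m : ℕ, 1 ≤ m →
      (P {ω | NN m ω ∈ Metric.sphere x r} ≤ (m : ENNReal) * μ (Metric.sphere x r) ∧
        (μ (Metric.sphere x r)) ^ m ≤ P {ω | NN m ω ∈ Metric.sphere x r})) := by

  classical
  set S : Set 𝒳 := Metric.sphere x r with hS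
  have hSmeas : MeasurableSet S := Metric.isClosed_sphere.measurableSet
  have hpre : ∀ i, P (X i ⁻¹' S) = μ S := by
    intro i
    rw [← hXdist i, Measure.map_apply (hXmeas i) hSmeas]
  have hupper : ∀ m : ℕ, 1 ≤ m →
      P {ω | NN m ω ∈ S} ≤ (m : ENNReal) * μ S := by
    intro m hm
    have hsub : {ω | NN m ω ∈ S} ⊆ ⋃ i ∈ Finset.range m, X i ⁻¹' S := by
      intro ω hω
      obtain ⟨i, hi, heq⟩ := (hNN m hm ω).1
      exact Set.mem_biUnion (Finset.mem_range.2 hi) (show X i ω ∈ S by rw [← heq]; exact hω)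
    calc P {ω | NN m ω ∈ S} ≤ P (⋃ i ∈ Finset.range m, X i ⁻¹' S) :=
          measure_mono hsub
      _ ≤ ∑ i ∈ Finset.range m, P (X i ⁻¹' S) := measure_biUnion_finset_le _ _
      _ = (m : ENNReal) * μ S := by
          simp [hpre, Finset.sum_const, Finset.card_range, mul_comm]
  have hlower : ∀ m : ℕ, 1 ≤ m →
      (μ S) ^ m ≤ P {ω | NN m ω ∈ S} := by
    intro m hm
    have hsub : (⋂ i ∈ Finset.range m, X i ⁻¹' S) ⊆ {ω | NN m ω ∈ S} := by
      intro ω hω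
      obtain ⟨i, hi, heq⟩ := (hNN m hm ω).1
      have := Set.mem_iInter₂.1 hω i (Finset.mem_range.2 hi)
      simpa [Set.mem_setOf_eq, heq] using this
    have hindep := (ProbabilityTheory.iIndepFun_iff_measure_inter_preimage_eq_mul).1
      hXindep (Finset.range m) (sets := fun _ => S) (fun _ _ => hSmeas)
    calc (μ S) ^ m = ∏ i ∈ Finset.range m, P (X i ⁻¹' S) := by
          simp [hpre, Finset.prod_const, Finset.card_range]
      _ = P (⋂ i ∈ Finset.range m, X i ⁻¹' S) := hindep.symm
      _ ≤ P {ω | NN m ω ∈ S} := measure_mono hsub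
  refine ⟨⟨?_, ?_⟩, fun m hm => ⟨hupper m hm, hlower m hm⟩⟩
  · constructor
    · intro hpos
      exact ⟨1, le_refl 1, lt_of_lt_of_le (by simpa using ENNReal.pow_pos hpos 1) (hlower 1 le_rfl)⟩
    · rintro ⟨m, hm, hPpos⟩
      by_contra h
      have h0 : μ S = 0 := by simpa using h
      have := hupper m hm
      rw [h0, mul_zero] at this
      exact absurd (le_antisymm this zero_le) (ne_of_gt hPpos)
  · constructor
    · intro hpos m hm
      exact lt_of_lt_of_le (ENNReal.pow_pos hpos m) (hlower m hm)
    · intro h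
      have hPpos := h 1 le_rfl
      by_contra hc
      have h0 : μ S = 0 := by simpa using hc
      have := hupper 1 le_rfl
      rw [h0, mul_zero] at this
      exact absurd (le_antisymm this zero_le) (ne_of_gt hPpos)
end

section
/- Let (ψ_m, Θ_m)_{m∈ℕ} be an ISIMIN and, for each m ∈ ℕ, let X^x_m be the nearest neighbor of x among X₁, …, X_m according to (ψ_m, Θ_m). If r > 0 is such that ℙ_X(S_r) > 0, then for every Borel subset A of (𝒳, d) and every m ∈ ℕ, ℙ(X^x_m ∈ A ∣ X^x_m ∈ S_r) = ℙ(X ∈ A ∣ X ∈ S_r). In particular, for every bounded measurable η : 𝒳 → ℝ, 𝔼[|η(X^x_m) − η(x)| ∣ X^x_m ∈ S_r] = 𝔼[|η(X) − η(x)| ∣ X ∈ S_r]. -/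
open MeasureTheory Filter Topology

open ProbabilityTheory in
/-- Auxiliary independence lemma: a measurable function of `Θ` and of the
`X i`, `i < m`, `i ≠ k` (coordinate `k` replaced by the constant `x`) is
independent of `X k`. -/
private lemma aux_indep_isimin {Ω 𝒳 Z : Type*} [MeasurableSpace Ω] [MeasurableSpace 𝒳]
    [MeasurableSpace Z] (P : Measure Ω) [IsProbabilityMeasure P]
    (X : ℕ → Ω → 𝒳) (hXmeas : ∀ i, Measurable (X i))
    (hXindep : iIndepFun X P)
    {m k : ℕ} (hk : k < m) (x : 𝒳)
    (Θ : Ω → Z) (hΘmeas : Measurable Θ)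
    (hΘindep : IndepFun Θ (fun ω => fun i : Fin m => X (i : ℕ) ω) P)
    (F : Z × (Fin m → 𝒳) → ℕ) (hF : Measurable F) :
    IndepFun (fun ω => F (Θ ω, fun i : Fin m => if (i : ℕ) = k then x else X (i : ℕ) ω))
      (X k) P := by
  classical
  set Xvec : Ω → Fin m → 𝒳 := fun ω => fun i : Fin m => X (i : ℕ) ω with hXvec_def
  have hXvec : Measurable Xvec := measurable_pi_lambda _ fun i => hXmeas i
  set sb : (Fin m → 𝒳) → Fin m → 𝒳 := fun v i => if (i : ℕ) = k then x else v i with hsb_def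
  have hsb : Measurable sb := by
    apply measurable_pi_lambda
    intro i
    by_cases h : (i : ℕ) = k
    · simpa [sb, h] using measurable_const
    · simpa [sb, h] using measurable_pi_apply i
  set Wvec : Ω → Fin m → 𝒳 := fun ω => sb (Xvec ω) with hW_def
  have hWvec : Measurable Wvec := hsb.comp hXvec
  -- `Wvec` is independent of `X k`
  have hWindep : IndepFun Wvec (X k) P := by
    set sfin : Finset ℕ := (Finset.range m).erase k with hsfin_def
    have hd : Disjoint sfin ({k} : Finset ℕ) := by
      simp [sfin, Finset.disjoint_singleton_right]
    have h1 := hXindep.indepFun_finset sfin {k} hd hXmeas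
    let φ : (∀ _i : (sfin : Finset ℕ), 𝒳) → Fin m → 𝒳 := fun v i =>
      if h : (i : ℕ) = k then x
      else v ⟨(i : ℕ), Finset.mem_erase.2 ⟨h, Finset.mem_range.2 i.isLt⟩⟩
    have hφ : Measurable φ := by
      apply measurable_pi_lambda
      intro i
      by_cases h : (i : ℕ) = k
      · simp only [φ, dif_pos h]; exact measurable_const
      · simp only [φ, dif_neg h]; exact measurable_pi_apply _
    let e : (∀ _i : ({k} : Finset ℕ), 𝒳) → 𝒳 := fun v => v ⟨k, Finset.mem_singleton_self k⟩
    have he : Measurable e := measurable_pi_apply _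
    have h2 := h1.comp hφ he
    have e1 : (φ ∘ fun ω (i : (sfin : Finset ℕ)) => X (i : ℕ) ω) = Wvec := by
      funext ω
      funext i
      by_cases h : (i : ℕ) = k <;>
        simp [φ, Wvec, sb, Xvec, Function.comp, h]
    have e2 : (e ∘ fun ω (i : ({k} : Finset ℕ)) => X (i : ℕ) ω) = X k := by
      funext ω; simp [e, Function.comp]
    rwa [e1, e2] at h2
  haveI : IsProbabilityMeasure (P.map Θ) := Measure.isProbabilityMeasure_map hΘmeas.aemeasurable
  haveI : IsProbabilityMeasure (P.map Xvec) := Measure.isProbabilityMeasure_map hXvec.aemeasurable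
  have hprod : P.map (fun ω => (Θ ω, Xvec ω)) = (P.map Θ).prod (P.map Xvec) :=
    (indepFun_iff_map_prod_eq_prod_map_map hΘmeas.aemeasurable hXvec.aemeasurable).1 hΘindep
  have hGoalEq : (fun ω => F (Θ ω, fun i : Fin m => if (i : ℕ) = k then x else X (i : ℕ) ω))
      = fun ω => F (Θ ω, Wvec ω) := rfl
  rw [hGoalEq, indepFun_iff_measure_inter_preimage_eq_mul]
  intro u t hu ht
  set pair : Ω → Z × (Fin m → 𝒳) := fun ω => (Θ ω, Xvec ω) with hpair_def
  have hpair : Measurable pair := hΘmeas.prodMk hXvec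
  set U : Set (Z × (Fin m → 𝒳)) := {p | F (p.1, sb p.2) ∈ u} with hU_def
  have hU : MeasurableSet U :=
    (hF.comp (measurable_fst.prodMk (hsb.comp measurable_snd))) hu
  set Ct : Set (Fin m → 𝒳) := (fun v : Fin m → 𝒳 => v ⟨k, hk⟩) ⁻¹' t with hCt_def
  have hCt : MeasurableSet Ct := measurable_pi_apply _ ht
  have hmeasU2 : MeasurableSet (U ∩ Set.univ ×ˢ Ct) := hU.inter (MeasurableSet.univ.prod hCt)
  have hset : (fun ω => F (Θ ω, Wvec ω)) ⁻¹' u ∩ X k ⁻¹' t = pair ⁻¹' (U ∩ Set.univ ×ˢ Ct) := by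
    ext ω
    simp [pair, U, Ct, Wvec, Xvec, Set.mem_prod]
  have hpairU : (fun ω => F (Θ ω, Wvec ω)) ⁻¹' u = pair ⁻¹' U := rfl
  calc P ((fun ω => F (Θ ω, Wvec ω)) ⁻¹' u ∩ X k ⁻¹' t)
      = (P.map pair) (U ∩ Set.univ ×ˢ Ct) := by
        rw [hset, Measure.map_apply hpair hmeasU2]
    _ = ((P.map Θ).prod (P.map Xvec)) (U ∩ Set.univ ×ˢ Ct) := by rw [← hprod]
    _ = ∫⁻ z, (P.map Xvec) (Prod.mk z ⁻¹' (U ∩ Set.univ ×ˢ Ct)) ∂(P.map Θ) :=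
        Measure.prod_apply hmeasU2
    _ = ∫⁻ z, (P.map Xvec) (Prod.mk z ⁻¹' U) * P (X k ⁻¹' t) ∂(P.map Θ) := by
        refine lintegral_congr fun z => ?_
        have hsl : Prod.mk z ⁻¹' (U ∩ Set.univ ×ˢ Ct) = (Prod.mk z ⁻¹' U) ∩ Ct := by
          ext v; simp [U, Ct]
        have hDz : MeasurableSet ((fun v : Fin m → 𝒳 => F (z, v)) ⁻¹' u) :=
          (hF.comp measurable_prodMk_left) hu
        have hslU : Prod.mk z ⁻¹' U = sb ⁻¹' ((fun v : Fin m → 𝒳 => F (z, v)) ⁻¹' u) := rfl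
        rw [hsl, hslU, Measure.map_apply hXvec ((hsb hDz).inter hCt),
          Measure.map_apply hXvec (hsb hDz)]
        have h1 : Xvec ⁻¹' (sb ⁻¹' ((fun v : Fin m → 𝒳 => F (z, v)) ⁻¹' u) ∩ Ct)
            = (Wvec ⁻¹' ((fun v : Fin m → 𝒳 => F (z, v)) ⁻¹' u)) ∩ X k ⁻¹' t := by
          ext ω; simp [Wvec, Ct, Xvec]
        have h2 : Xvec ⁻¹' (sb ⁻¹' ((fun v : Fin m → 𝒳 => F (z, v)) ⁻¹' u))
            = Wvec ⁻¹' ((fun v : Fin m → 𝒳 => F (z, v)) ⁻¹' u) := rfl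
        rw [h1, h2]
        exact hWindep.measure_inter_preimage_eq_mul _ _ hDz ht
    _ = (∫⁻ z, (P.map Xvec) (Prod.mk z ⁻¹' U) ∂(P.map Θ)) * P (X k ⁻¹' t) :=
        lintegral_mul_const _ (measurable_measure_prodMk_left hU)
    _ = ((P.map Θ).prod (P.map Xvec)) U * P (X k ⁻¹' t) := by rw [Measure.prod_apply hU]
    _ = P ((fun ω => F (Θ ω, Wvec ω)) ⁻¹' u) * P (X k ⁻¹' t) := by
        rw [← hprod, Measure.map_apply hpair hU, hpairU]

/-- **Proposition (ISIMINs are unbiased on spheres).**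
Setting: `X 0, X 1, …` i.i.d. with common distribution `μ`, `x` in the support of `μ`,
and `(ψ m, Θ m)` an ISIMIN: `Θ m` is independent of `(X 0, …, X (m-1))`, `ψ m` is a
measurable selector, depending only on the first `m` coordinates, of an index of a
minimal entry among the first `m` entries of a nonnegative vector. Let `NN m` be the
nearest neighbor of `x` among `X 0, …, X (m-1)` according to `(ψ m, Θ m)`.
If `r > 0` satisfies `μ(S_r) > 0`, then for every Borel set `A` and every `m ≥ 1`,
`ℙ(NN m ∈ A ∣ NN m ∈ S_r) = μ(A ∣ S_r)`; in particular for every bounded measurable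
`η : 𝒳 → ℝ`, `𝔼[|η(NN m) − η(x)| ∣ NN m ∈ S_r] = 𝔼[|η(X) − η(x)| ∣ X ∈ S_r]`. -/
theorem stmt_10
    {𝒳 Ω : Type*} [MetricSpace 𝒳] [MeasurableSpace 𝒳] [BorelSpace 𝒳]
    {mΩ : MeasurableSpace Ω} (P : Measure Ω) [IsProbabilityMeasure P]
    (X : ℕ → Ω → 𝒳) (μ : Measure 𝒳)
    (hXmeas : ∀ i, Measurable (X i))
    (hXindep : ProbabilityTheory.iIndepFun X P)
    (hXdist : ∀ i, P.map (X i) = μ)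
    (x : 𝒳) (hsupp : ∀ r > (0 : ℝ), 0 < μ (Metric.closedBall x r))
    (𝒵 : ℕ → Type*) [∀ m, MeasurableSpace (𝒵 m)]
    (Θ : ∀ m : ℕ, Ω → 𝒵 m) (hΘmeas : ∀ m, Measurable (Θ m))
    (hΘindep : ∀ m : ℕ,
      ProbabilityTheory.IndepFun (Θ m) (fun ω => fun i : Fin m => X (i : ℕ) ω) P)
    (ψ : ∀ m : ℕ, ((ℕ → ℝ) × 𝒵 m) → ℕ)
    (hψmeas : ∀ m, Measurable (ψ m))
    (hψdep : ∀ m : ℕ, ∀ f g : ℕ → ℝ, ∀ z : 𝒵 m,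
      (∀ i < m, f i = g i) → ψ m (f, z) = ψ m (g, z))
    (hψmin : ∀ m : ℕ, 1 ≤ m → ∀ (f : ℕ → ℝ) (z : 𝒵 m), (∀ i, 0 ≤ f i) →
      ψ m (f, z) < m ∧ ∀ j < m, f (ψ m (f, z)) ≤ f j)
    (NN : ℕ → Ω → 𝒳)
    (hNNdef : ∀ (m : ℕ) (ω : Ω),
      NN m ω = X (ψ m (fun i => dist x (X i ω), Θ m ω)) ω)
    (r : ℝ) (hr : 0 < r) (hrpos : 0 < μ (Metric.sphere x r)) :
    (∀ m : ℕ, 1 ≤ m → ∀ A : Set 𝒳, MeasurableSet A →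
      P {ω | NN m ω ∈ A ∩ Metric.sphere x r} / P {ω | NN m ω ∈ Metric.sphere x r} =
        μ (A ∩ Metric.sphere x r) / μ (Metric.sphere x r)) ∧
    (∀ m : ℕ, 1 ≤ m → ∀ η : 𝒳 → ℝ, Measurable η → (∃ C : ℝ, ∀ y, |η y| ≤ C) →
      (∫ ω in {ω | NN m ω ∈ Metric.sphere x r}, |η (NN m ω) - η x| ∂P) /
          (P {ω | NN m ω ∈ Metric.sphere x r}).toReal =
        (∫ y in Metric.sphere x r, |η y - η x| ∂μ) /
          (μ (Metric.sphere x r)).toReal) := by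
  classical
  have hSm : MeasurableSet (Metric.sphere x r) := Metric.isClosed_sphere.measurableSet
  have hdist_pre : ∀ (k : ℕ) (t : Set 𝒳), MeasurableSet t → P (X k ⁻¹' t) = μ t := by
    intro k t ht
    rw [← hXdist k, Measure.map_apply (hXmeas k) ht]
  -- measurability of the nearest neighbor maps
  have hidxmeas : ∀ m : ℕ, Measurable (fun ω => ψ m (fun i => dist x (X i ω), Θ m ω)) := by
    intro m
    exact (hψmeas m).comp
      ((measurable_pi_lambda _ fun i => ((continuous_const.dist continuous_id).measurable.comp (hXmeas i))).prodMk (hΘmeas m))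
  have hNNmeas : ∀ m : ℕ, Measurable (NN m) := by
    intro m
    intro s hs
    have : NN m ⁻¹' s =
        ⋃ n : ℕ, ((fun ω => ψ m (fun i => dist x (X i ω), Θ m ω)) ⁻¹' {n}) ∩ X n ⁻¹' s := by
      ext ω
      simp only [Set.mem_preimage, Set.mem_iUnion, Set.mem_inter_iff, Set.mem_singleton_iff]
      constructor
      · intro h
        exact ⟨ψ m (fun i => dist x (X i ω), Θ m ω), rfl, by rwa [← hNNdef m ω]⟩
      · rintro ⟨n, hn, hx⟩
        rw [hNNdef m ω, hn]; exact hx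
    rw [this]
    exact MeasurableSet.iUnion fun n =>
      ((hidxmeas m) (measurableSet_singleton n)).inter (hXmeas n hs)
  -- the key structural fact
  have key : ∀ m : ℕ, 1 ≤ m → ∃ c : ENNReal, c ≠ 0 ∧ c ≠ ⊤ ∧
      ∀ B : Set 𝒳, MeasurableSet B →
        P {ω | NN m ω ∈ B ∩ Metric.sphere x r} = c * μ (B ∩ Metric.sphere x r) := by
    intro m hm
    set dv : Ω → ℕ → ℝ := fun ω i => dist x (X i ω) with hdv_def
    set idx : Ω → ℕ := fun ω => ψ m (dv ω, Θ m ω) with hidx_def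
    have hNNeq : ∀ ω, NN m ω = X (idx ω) ω := fun ω => hNNdef m ω
    have hidxlt : ∀ ω, idx ω < m := fun ω =>
      (hψmin m hm (dv ω) (Θ m ω) (fun i => dist_nonneg)).1
    set ev : ℕ → (Fin m → 𝒳) → ℕ → ℝ := fun k v i =>
      if h : i < m then (if i = k then r else dist x (v ⟨i, h⟩)) else 0 with hev_def
    set Fk : ℕ → (𝒵 m × (Fin m → 𝒳)) → ℕ := fun k p => ψ m (ev k p.2, p.1) with hFk_def
    set G : ℕ → Ω → ℕ := fun k ω =>
      Fk k (Θ m ω, fun i : Fin m => if (i : ℕ) = k then x else X (i : ℕ) ω) with hG_def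
    have hFkmeas : ∀ k, Measurable (Fk k) := by
      intro k
      apply (hψmeas m).comp
      apply Measurable.prodMk
      · have hev : Measurable (ev k) := by
          apply measurable_pi_lambda
          intro i
          by_cases h : i < m
          · by_cases hik : i = k
            · simpa [ev, h, hik] using measurable_const
            · simpa [ev, h, hik, Function.comp_def] using
                ((continuous_const.dist continuous_id).measurable.comp (measurable_pi_apply _))
          · simpa [ev, h] using measurable_const
        exact hev.comp measurable_snd
      · exact measurable_fst
    have hGalign : ∀ k, k < m → ∀ ω, X k ω ∈ Metric.sphere x r → idx ω = G k ω := by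
      intro k hkm ω hXk
      have hdXk : dist x (X k ω) = r := by
        rw [dist_comm]; exact Metric.mem_sphere.1 hXk
      apply hψdep m (dv ω)
      intro i hi
      simp only [ev, dv, dif_pos hi]
      by_cases hik : i = k
      · subst hik; simp [hdXk]
      · simp [hik]
    have hGindep : ∀ k, k < m → ProbabilityTheory.IndepFun (G k) (X k) P := by
      intro k hkm
      exact aux_indep_isimin P X hXmeas hXindep hkm x (Θ m) (hΘmeas m) (hΘindep m)
        (Fk k) (hFkmeas k)
    have hGmeas : ∀ k, Measurable (G k) := by
      intro k
      apply (hFkmeas k).comp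
      apply Measurable.prodMk (hΘmeas m)
      apply measurable_pi_lambda
      intro i
      by_cases h : (i : ℕ) = k
      · simpa [h] using measurable_const
      · simpa [h] using hXmeas (i : ℕ)
    have hEvent : ∀ B : Set 𝒳, {ω | NN m ω ∈ B ∩ Metric.sphere x r} =
        ⋃ k ∈ Finset.range m, (G k ⁻¹' {k} ∩ X k ⁻¹' (B ∩ Metric.sphere x r)) := by
      intro B
      ext ω
      simp only [Set.mem_setOf_eq, Set.mem_iUnion, Finset.mem_range, Set.mem_inter_iff,
        Set.mem_preimage, Set.mem_singleton_iff, exists_prop]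
      constructor
      · intro h
        rw [hNNeq] at h
        exact ⟨idx ω, hidxlt ω, (hGalign _ (hidxlt ω) ω h.2).symm, h⟩
      · rintro ⟨k, hkm, hGk, hXk⟩
        have : idx ω = k := (hGalign k hkm ω hXk.2).trans hGk
        rw [hNNeq, this]; exact hXk
    have hdisj : Set.PairwiseDisjoint (↑(Finset.range m) : Set ℕ)
        (fun k => G k ⁻¹' {k} ∩ X k ⁻¹' (Set.univ ∩ Metric.sphere x r)) := by
      intro k hk l hl hkl
      simp only [Finset.coe_range, Set.mem_Iio] at hk hl
      apply Set.disjoint_left.2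
      rintro ω ⟨hGk, hXk⟩ ⟨hGl, hXl⟩
      apply hkl
      have h1 : idx ω = k := (hGalign k hk ω hXk.2).trans hGk
      have h2 : idx ω = l := (hGalign l hl ω hXl.2).trans hGl
      rw [← h1, ← h2]
    -- pairwise disjointness for general B follows since the sets shrink
    have hkeyB : ∀ B : Set 𝒳, MeasurableSet B →
        P {ω | NN m ω ∈ B ∩ Metric.sphere x r} =
          (∑ k ∈ Finset.range m, P (G k ⁻¹' {k})) * μ (B ∩ Metric.sphere x r) := by
      intro B hB
      have hdisjB : Set.PairwiseDisjoint (↑(Finset.range m) : Set ℕ)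
          (fun k => G k ⁻¹' {k} ∩ X k ⁻¹' (B ∩ Metric.sphere x r)) := by
        intro k hk l hl hkl
        refine Set.disjoint_of_subset ?_ ?_ (hdisj hk hl hkl) <;>
          exact Set.inter_subset_inter_right _
            (Set.preimage_mono (Set.inter_subset_inter_left _ (Set.subset_univ _)))
      rw [hEvent B, measure_biUnion_finset hdisjB (fun k _ =>
        ((hGmeas k) (measurableSet_singleton k)).inter (hXmeas k (hB.inter hSm)))]
      rw [Finset.sum_mul]
      apply Finset.sum_congr rfl
      intro k hk
      rw [(hGindep k (Finset.mem_range.1 hk)).measure_inter_preimage_eq_mul _ _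
        (measurableSet_singleton k) (hB.inter hSm), hdist_pre k _ (hB.inter hSm)]
    set c : ENNReal := ∑ k ∈ Finset.range m, P (G k ⁻¹' {k}) with hc_def
    have hctop : c ≠ ⊤ :=
      (ENNReal.sum_lt_top.2 fun k _ => measure_lt_top P _).ne
    have hc0 : c ≠ 0 := by
      intro h0
      have huniv := hkeyB Set.univ MeasurableSet.univ
      rw [h0, zero_mul] at huniv
      have hsub : (⋂ i ∈ Finset.range m, X i ⁻¹' Metric.sphere x r) ⊆
          {ω | NN m ω ∈ Set.univ ∩ Metric.sphere x r} := by
        intro ω hω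
        simp only [Set.mem_iInter, Finset.mem_range, Set.mem_preimage] at hω
        simp only [Set.mem_setOf_eq, Set.univ_inter]
        rw [hNNeq]
        exact hω (idx ω) (hidxlt ω)
      have hprodS : P (⋂ i ∈ Finset.range m, X i ⁻¹' Metric.sphere x r) =
          μ (Metric.sphere x r) ^ m := by
        rw [hXindep.measure_inter_preimage_eq_mul (Finset.range m)
          (sets := fun _ => Metric.sphere x r) (fun i _ => hSm)]
        rw [Finset.prod_congr rfl fun i _ => hdist_pre i _ hSm, Finset.prod_const,
          Finset.card_range]
      have hle : μ (Metric.sphere x r) ^ m ≤ 0 := by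
        rw [← hprodS, ← huniv]
        exact measure_mono hsub
      have : μ (Metric.sphere x r) ^ m ≠ 0 := pow_ne_zero m hrpos.ne'
      exact this (le_antisymm hle bot_le)
    exact ⟨c, hc0, hctop, hkeyB⟩
  constructor
  · intro m hm A hA
    obtain ⟨c, hc0, hctop, hkey⟩ := key m hm
    have h2 : P {ω | NN m ω ∈ Metric.sphere x r} = c * μ (Metric.sphere x r) := by
      have := hkey Set.univ MeasurableSet.univ
      simpa [Set.univ_inter] using this
    rw [hkey A hA, h2, ENNReal.mul_div_mul_left _ _ hc0 hctop]
  · intro m hm η hηmeas _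
    obtain ⟨c, hc0, hctop, hkey⟩ := key m hm
    have h2 : P {ω | NN m ω ∈ Metric.sphere x r} = c * μ (Metric.sphere x r) := by
      have := hkey Set.univ MeasurableSet.univ
      simpa [Set.univ_inter] using this
    have hrestrict : (P.map (NN m)).restrict (Metric.sphere x r) =
        c • μ.restrict (Metric.sphere x r) := by
      apply Measure.ext
      intro B hB
      rw [Measure.restrict_apply hB, Measure.smul_apply, Measure.restrict_apply hB,
        smul_eq_mul, Measure.map_apply (hNNmeas m) (hB.inter hSm)]
      exact hkey B hB
    have hfmeas : AEStronglyMeasurable (fun y => |η y - η x|) (P.map (NN m)) :=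
      ((hηmeas.sub measurable_const).abs).aestronglyMeasurable
    have hnum : ∫ ω in {ω | NN m ω ∈ Metric.sphere x r}, |η (NN m ω) - η x| ∂P =
        c.toReal * ∫ y in Metric.sphere x r, |η y - η x| ∂μ := by
      have h1 : {ω | NN m ω ∈ Metric.sphere x r} = NN m ⁻¹' Metric.sphere x r := rfl
      rw [h1, ← setIntegral_map hSm hfmeas (hNNmeas m).aemeasurable]
      show ∫ y, |η y - η x| ∂((P.map (NN m)).restrict (Metric.sphere x r)) = _
      rw [hrestrict, integral_smul_measure]
      rfl
    rw [hnum, h2, ENNReal.toReal_mul,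
      mul_div_mul_left _ _ (ENNReal.toReal_ne_zero.mpr ⟨hc0, hctop⟩)]
end
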